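/- arXiv:2410.20185 — 14 statements merged into one kernel-verified Lean document; each statement's English description precedes it below -/
import Mathlib

section
/- Let n, k, t be positive integers with k ≥ t+1 and n ≥ (t+1)(k−t+1)². If i and j are positive integers with t ≤ i ≤ j, then (k−t+1)^{j−i} · binom(n−j, k−j) ≤ binom(n−i, k−i). -/
open Finset

lemma step_aux (n k t m : ℕ) (ht : 0 < t) (hkt : t + 1 ≤ k)
    (hnge : (t + 1) * (k - t + 1) ^ 2 ≤ n) (htm : t ≤ m) (hmk : m + 1 ≤ k) :
    (k - t + 1) * Nat.choose (n - (m + 1)) (k - (m + 1)) ≤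
      Nat.choose (n - m) (k - m) := by
  -- abbreviations
  obtain ⟨a, ha⟩ : ∃ a, k = t + a ∧ 1 ≤ a := ⟨k - t, by omega, by omega⟩
  obtain ⟨ha, ha1⟩ := ha
  obtain ⟨b, hb⟩ : ∃ b, k = m + b ∧ 1 ≤ b := ⟨k - m, by omega, by omega⟩
  obtain ⟨hb, hb1⟩ := hb
  obtain ⟨c, hc⟩ : ∃ c, a = b + c := ⟨a - b, by omega⟩
  have hkt1 : k - t + 1 = a + 1 := by omega
  have hnge' : (t + 1) * (a + 1) ^ 2 ≤ n := by rw [← hkt1]; exact hnge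
  have key : (a + 1) * b + m ≤ n := by
    have hm : m = t + c := by omega
    have h1 : (a + 1) * b + m ≤ (t + 1) * (a + 1) ^ 2 := by
      subst hm hc
      nlinarith [sq_nonneg (b + c), ht, hb1]
    omega
  have hkn : k ≤ n := by nlinarith
  have hA : n - m = (n - (m + 1)) + 1 := by omega
  have hB : k - m = (k - (m + 1)) + 1 := by omega
  set A := n - (m + 1) with hAdef
  set B := k - (m + 1) with hBdef
  rw [hA, hB]
  have hid : (A + 1) * Nat.choose A B = Nat.choose (A + 1) (B + 1) * (B + 1) :=
    Nat.add_one_mul_choose_eq A B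
  have hineq : (k - t + 1) * (B + 1) ≤ A + 1 := by
    have : B + 1 = b := by omega
    rw [hkt1, this]
    omega
  apply Nat.le_of_mul_le_mul_right _ (show 0 < B + 1 by omega)
  calc (k - t + 1) * Nat.choose A B * (B + 1)
      = (k - t + 1) * (B + 1) * Nat.choose A B := by ring
    _ ≤ (A + 1) * Nat.choose A B := Nat.mul_le_mul_right _ hineq
    _ = Nat.choose (A + 1) (B + 1) * (B + 1) := hid

theorem stmt4 (n k t i j : ℕ) (hn : 0 < n) (hk : 0 < k) (ht : 0 < t)
    (hi : 0 < i) (hj : 0 < j)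
    (hkt : t + 1 ≤ k) (hnge : (t + 1) * (k - t + 1) ^ 2 ≤ n)
    (hti : t ≤ i) (hij : i ≤ j) :
    (k - t + 1) ^ (j - i) * (if k < j then 0 else Nat.choose (n - j) (k - j)) ≤
      (if k < i then 0 else Nat.choose (n - i) (k - i)) := by
  by_cases hkj : k < j
  · simp [hkj]
  · push_neg at hkj
    rw [if_neg (by omega), if_neg (by omega)]
    clear hn hk hi hj
    induction j, hij using Nat.le_induction with
    | base => simp
    | succ m hm ih =>
      have hmk : m + 1 ≤ k := hkj
      have ih' := ih (by omega)
      have hstep := step_aux n k t m ht hkt hnge (le_trans hti hm) hmk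
      calc (k - t + 1) ^ (m + 1 - i) * Nat.choose (n - (m + 1)) (k - (m + 1))
          = (k - t + 1) ^ (m - i) * ((k - t + 1) * Nat.choose (n - (m + 1)) (k - (m + 1))) := by
            rw [← mul_assoc, ← pow_succ]
            congr 2
            omega
        _ ≤ (k - t + 1) ^ (m - i) * Nat.choose (n - m) (k - m) :=
            Nat.mul_le_mul_left _ hstep
        _ ≤ Nat.choose (n - i) (k - i) := ih'
end

section
/- Let n, k, t, s be positive integers with k ≥ t+2 and n ≥ 2(t+1)((k−t+1)² + s). Define f(n,k,t,s,x) = (k−t+1)^{x−t} · binom(x, t) · binom(n−x, k−x) + Σ_{i=0}^{x−t−1} s·(k−t+1)^{i} · binom(x, t). Then for every x ∈ {t+1, t+2, …, k−1}, f(n,k,t,s,x) > f(n,k,t,s,x+1). -/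
open Finset

/-- The function `f(n,k,t,s,x)` from the paper. -/
def fFun (n k t s x : ℕ) : ℕ :=
  (k - t + 1) ^ (x - t) * Nat.choose x t * Nat.choose (n - x) (k - x) +
    (∑ i ∈ Finset.range (x - t), s * (k - t + 1) ^ i) * Nat.choose x t

private lemma geo_le (c : ℕ) (hc : 2 ≤ c) : ∀ m : ℕ, ∑ i ∈ Finset.range (m + 1), c ^ i ≤ 2 * c ^ m := by
  intro m
  induction m with
  | zero => simp
  | succ m ih =>
      rw [Finset.sum_range_succ]
      have h1 : 2 * c ^ m ≤ c * c ^ m := Nat.mul_le_mul_right _ hc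
      calc ∑ i ∈ Finset.range (m + 1), c ^ i + c ^ (m + 1) ≤ 2 * c ^ m + c ^ (m + 1) :=
            Nat.add_le_add_right ih _
        _ ≤ c * c ^ m + c ^ (m + 1) := Nat.add_le_add_right h1 _
        _ = 2 * c ^ (m + 1) := by ring

private lemma choose_lb (p : ℕ) : ∀ q : ℕ, 1 ≤ q → 2 * q ≤ p → p ≤ p.choose q := by
  intro q
  induction q with
  | zero => omega
  | succ q ih =>
      intro _ h2
      rcases Nat.eq_zero_or_pos q with hq | hq
      · subst hq; simp
      · have h3 : p ≤ p.choose q := ih hq (by omega)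
        have h4 : q < p / 2 := by omega
        exact h3.trans (Nat.choose_le_succ_of_lt_half_left h4)

set_option maxHeartbeats 2000000 in
private lemma key (t s e q p : ℕ) (ht : 1 ≤ t) (hs : 1 ≤ s) (he : 1 ≤ e)
    (hn : 2 * (t + 1) * ((e + q + 2) ^ 2 + s) ≤ t + e + p + 1) :
    fFun (t + e + p + 1) (t + e + q + 1) t s (t + e + 1) < fFun (t + e + p + 1) (t + e + q + 1) t s (t + e) := by
  set c : ℕ := e + q + 2 with hc
  set A : ℕ := p.choose q with hA
  set W : ℕ := (p + 1).choose (q + 1) with hW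
  set B : ℕ := (t + e).choose t with hB
  set C1 : ℕ := (t + e + 1).choose t with hC1
  set S : ℕ := ∑ i ∈ Finset.range (e + 1), s * c ^ i with hS
  -- basic consequences of hn
  have h0 : (e + q + 2) ^ 2 + s ≤ (t + 1) * ((e + q + 2) ^ 2 + s) :=
    Nat.le_mul_of_pos_left _ (by omega)
  have hbig : 2 * (e + q + 2) ^ 2 + 2 * s ≤ t + e + p + 1 := by
    simp only [hc] at hn; linarith
  have hqp : q ≤ p := by nlinarith
  have h2qp : 2 * q ≤ p := by nlinarith
  have h2sp : 2 * s ≤ p := by nlinarith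
  have hte : t + e ≤ p + 1 := by
    simp only [hc] at hn
    nlinarith [Nat.zero_le (t * (e + q + 2) ^ 2), Nat.zero_le (t * s), Nat.zero_le (e * q)]
  have hn2 : 2 * (t + 1) * (e + q + 2) ^ 2 ≤ t + e + p + 1 := by
    simp only [hc] at hn
    nlinarith [Nat.zero_le ((t + 1) * s)]
  have hf1 : fFun (t + e + p + 1) (t + e + q + 1) t s (t + e + 1) = c ^ (e + 1) * C1 * A + S * C1 := by
    have e1 : t + e + q + 1 - t + 1 = c := by omega
    have e2 : t + e + 1 - t = e + 1 := by omega
    have e3 : t + e + p + 1 - (t + e + 1) = p := by omega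
    have e4 : t + e + q + 1 - (t + e + 1) = q := by omega
    rw [fFun, e1, e2, e3, e4]
  have hf2 : fFun (t + e + p + 1) (t + e + q + 1) t s (t + e) =
      c ^ e * B * W + (∑ i ∈ Finset.range e, s * c ^ i) * B := by
    have e1 : t + e + q + 1 - t + 1 = c := by omega
    have e2 : t + e - t = e := by omega
    have e3 : t + e + p + 1 - (t + e) = p + 1 := by omega
    have e4 : t + e + q + 1 - (t + e) = q + 1 := by omega
    rw [fFun, e1, e2, e3, e4]
  -- identities
  have hWA : (p + 1) * A = W * (q + 1) := Nat.add_one_mul_choose_eq p q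
  have hCB : B * (t + e + 1) = C1 * (e + 1) := by
    have := Nat.choose_mul_succ_eq (t + e) t
    simpa [hB, hC1, show t + e + 1 - t = e + 1 by omega] using this
  have hBpos : 1 ≤ B := Nat.choose_pos (by omega)
  have hC1le : 2 * C1 ≤ (t + 2) * B := by
    have h2 : 2 * (t + e + 1) ≤ (t + 2) * (e + 1) := by nlinarith [Nat.zero_le (t * e)]
    have h3 : 2 * (t + e + 1) * B ≤ (t + 2) * (e + 1) * B := Nat.mul_le_mul_right B h2
    have h1 : 2 * C1 * (e + 1) ≤ ((t + 2) * B) * (e + 1) := by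
      calc 2 * C1 * (e + 1) = 2 * (B * (t + e + 1)) := by rw [hCB]; ring
        _ = 2 * (t + e + 1) * B := by ring
        _ ≤ (t + 2) * (e + 1) * B := h3
        _ = ((t + 2) * B) * (e + 1) := by ring
    exact Nat.le_of_mul_le_mul_right h1 (by omega)
  have hSle : S ≤ 2 * s * c ^ e := by
    rw [hS, ← Finset.mul_sum]
    calc s * ∑ i ∈ Finset.range (e + 1), c ^ i ≤ s * (2 * c ^ e) :=
          Nat.mul_le_mul_left s (geo_le c (by omega) e)
      _ = 2 * s * c ^ e := by ring
  have hApos : 1 ≤ A := Nat.choose_pos hqp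
  -- target inequality
  have hT : (t + 2) * (q + 1) * (c * A + 2 * s) < 2 * (p + 1) * A := by
    rcases Nat.eq_zero_or_pos q with hq | hq
    · subst hq
      have hA1 : A = 1 := by simp [hA]
      rw [hA1]
      simp only [hc] at hn ⊢
      have P4 : (t + 2) * (e + 2) + 2 * t + 2 * e < 4 * (t + 1) * (e + 2) ^ 2 := by
        nlinarith [Nat.zero_le (t * e ^ 2), Nat.zero_le (t * e), Nat.zero_le (e ^ 2)]
      nlinarith [P4, Nat.zero_le (t * s)]
    · have hpA : p ≤ A := choose_lb p q hq h2qp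
      have h2sA : 2 * s ≤ A := le_trans h2sp hpA
      have hstep : c * A + 2 * s ≤ (c + 1) * A := by
        calc c * A + 2 * s ≤ c * A + A := Nat.add_le_add_left h2sA _
          _ = (c + 1) * A := by ring
      have hmain : (t + 2) * (q + 1) * (c + 1) < 2 * (p + 1) := by
        simp only [hc]
        have hq1 : q + 1 ≤ e + q := by omega
        have P2' : (e + q) * (e + q + 3) < (e + q + 2) ^ 2 := by
          nlinarith [Nat.zero_le (e + q)]
        calc (t + 2) * (q + 1) * (e + q + 2 + 1)
            = (t + 2) * ((q + 1) * (e + q + 3)) := by ring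
          _ ≤ (t + 2) * ((e + q) * (e + q + 3)) :=
              Nat.mul_le_mul_left _ (Nat.mul_le_mul_right _ hq1)
          _ < (t + 2) * (e + q + 2) ^ 2 :=
              mul_lt_mul_of_pos_left P2' (by omega)
          _ ≤ 2 * (t + 1) * (e + q + 2) ^ 2 :=
              Nat.mul_le_mul_right _ (by omega)
          _ ≤ t + e + p + 1 := hn2
          _ ≤ 2 * (p + 1) := by omega
      calc (t + 2) * (q + 1) * (c * A + 2 * s) ≤ (t + 2) * (q + 1) * ((c + 1) * A) :=
            Nat.mul_le_mul_left _ hstep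
        _ = ((t + 2) * (q + 1) * (c + 1)) * A := by ring
        _ < (2 * (p + 1)) * A := mul_lt_mul_of_pos_right hmain hApos
        _ = 2 * (p + 1) * A := by ring
  -- main chain
  have hcBpos : 0 < c ^ e * B := Nat.mul_pos (pow_pos (by omega) e) hBpos
  have chain : 2 * (q + 1) * fFun (t + e + p + 1) (t + e + q + 1) t s (t + e + 1) <
      2 * (q + 1) * fFun (t + e + p + 1) (t + e + q + 1) t s (t + e) := by
    calc 2 * (q + 1) * fFun (t + e + p + 1) (t + e + q + 1) t s (t + e + 1)
        = (q + 1) * ((c ^ e * c * A + S) * (2 * C1)) := by rw [hf1]; ring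
      _ ≤ (q + 1) * ((c ^ e * c * A + 2 * s * c ^ e) * ((t + 2) * B)) := by
          apply Nat.mul_le_mul_left
          exact Nat.mul_le_mul (Nat.add_le_add_left hSle _) hC1le
      _ = ((t + 2) * (q + 1) * (c * A + 2 * s)) * (c ^ e * B) := by ring
      _ < (2 * (p + 1) * A) * (c ^ e * B) := mul_lt_mul_of_pos_right hT hcBpos
      _ = 2 * (q + 1) * (c ^ e * B * W) := by
          rw [show 2 * (p + 1) * A = 2 * ((p + 1) * A) by ring, hWA]; ring
      _ ≤ 2 * (q + 1) * fFun (t + e + p + 1) (t + e + q + 1) t s (t + e) := by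
          rw [hf2]
          exact Nat.mul_le_mul_left _ (Nat.le_add_right _ _)
  exact Nat.lt_of_mul_lt_mul_left chain

theorem stmt5 (n k t s : ℕ) (hn : 0 < n) (hk : 0 < k) (ht : 0 < t) (hs : 0 < s)
    (hkt : t + 2 ≤ k) (hnge : 2 * (t + 1) * ((k - t + 1) ^ 2 + s) ≤ n) :
    ∀ x : ℕ, t + 1 ≤ x → x ≤ k - 1 → fFun n k t s (x + 1) < fFun n k t s x := by
  intro x hx1 hx2
  set e : ℕ := x - t with he
  set q : ℕ := k - x - 1 with hq
  have hx : x = t + e := by omega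
  have hkk : k = t + e + q + 1 := by omega
  have hc : k - t + 1 = e + q + 2 := by omega
  rw [hc] at hnge
  have hnk : x + 1 ≤ n := by nlinarith [Nat.zero_le ((t + 1) * s), Nat.zero_le (t * (e + q + 2) ^ 2), Nat.zero_le (e * q), Nat.zero_le (q ^ 2)]
  set p : ℕ := n - x - 1 with hp
  have hnn : n = t + e + p + 1 := by omega
  have hkey := key t s e q p ht hs (by omega) (by rw [← hnn]; exact hnge)
  rw [hx, hnn, hkk]
  exact hkey
end

section
/- Let n, k, t, s be positive integers with k ≥ t+3 and n ≥ 3·binom(t+2, 2)·((k−t+1)² + s). Define g(n,k,t,s,x) = (x−t)·binom(n−t−1, k−t−1) + (k−x+1)(k−t+1)·binom(n−t−2, k−t−2) + t(k−t)·binom(n−x, k−x) + s(k−x+3). Then for every x ∈ {t+2, t+3, …, k−1}, g(n,k,t,s,x) < g(n,k,t,s,x+1). -/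
lemma chooseAddLe (a b : ℕ) : ∀ i, Nat.choose a b ≤ Nat.choose (a+i) (b+i) := by
  intro i
  induction i with
  | zero => simp
  | succ i ih =>
    refine le_trans ih ?_
    rw [show a+(i+1) = (a+i)+1 by ring, show b+(i+1)=(b+i)+1 by ring,
      Nat.choose_succ_succ]
    omega

lemma chooseLower : ∀ q p : ℕ, 1 ≤ q → q ≤ p → p + 1 ≤ Nat.choose p q + q := by
  intro q
  induction q with
  | zero => omega
  | succ q ih =>
    intro p _ hqp
    match q, ih with
    | 0, _ => simp [Nat.choose_one_right]
    | q+1, ih =>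
      obtain ⟨p', rfl⟩ : ∃ p', p = p'+1 := ⟨p-1, by omega⟩
      have h := ih p' (by omega) (by omega)
      rw [Nat.choose_succ_succ]
      omega

lemma keyArith (t s M N b a : ℕ) (ht : 1 ≤ t) (hs : 1 ≤ s) (hM : 2 ≤ M)
    (hid : M * a = (N + 1) * b)
    (hb : N + 2 ≤ b + M)
    (hnn : 3 * (t+1) * ((M+2)^2 + s) ≤ N + t + 2) :
    ((M+2) + t*(M+1)) * b + s < a := by
  have hL : M*(M+2) + t*(M*(M+1)) ≤ (t+1)*(M+2)^2 := by nlinarith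
  have hN1 : M*(M+2) + t*(M*(M+1)) + (s+1) ≤ N + 1 := by nlinarith
  have hbM : M + 1 ≤ b := by nlinarith
  have final : M * (((M+2) + t*(M+1)) * b + s) < M * a := by
    rw [hid]
    have h1 : (M*(M+2) + t*(M*(M+1)) + (s+1)) * b ≤ (N+1)*b :=
      Nat.mul_le_mul_right b hN1
    have h2 : (s+1)*(M+1) ≤ (s+1)*b := Nat.mul_le_mul_left _ hbM
    nlinarith
  exact lt_of_mul_lt_mul_left final (Nat.zero_le M)

lemma mainIneq (t s j v u : ℕ) (ht : 1 ≤ t) (hs : 1 ≤ s)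
    (hu : v + 3 ≤ u)
    (hnn : 3*(t+1)*((j+v+4)^2 + s) ≤ u + j + t + 3) :
    (j+2) * Nat.choose (u+j+2) (j+v+2) + (v+2)*(j+v+4)*Nat.choose (u+j+1) (j+v+1)
      + t*(j+v+3)*Nat.choose (u+1) (v+1) + s*(v+4)
    < (j+3) * Nat.choose (u+j+2) (j+v+2) + (v+1)*(j+v+4)*Nat.choose (u+j+1) (j+v+1)
      + t*(j+v+3)*Nat.choose u v + s*(v+3) := by
  have pascal : Nat.choose (u+1) (v+1) = Nat.choose u v + Nat.choose u (v+1) :=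
    Nat.choose_succ_succ u v
  have hd : Nat.choose u (v+1) ≤ Nat.choose (u+j+1) (j+v+1) := by
    have h1 := chooseAddLe u (v+1) j
    have h2 := Nat.choose_le_choose (j+v+1) (show u+j ≤ u+j+1 by omega)
    calc Nat.choose u (v+1) ≤ Nat.choose (u+j) (v+1+j) := h1
      _ = Nat.choose (u+j) (j+v+1) := by rw [show v+1+j = j+v+1 from by omega]
      _ ≤ Nat.choose (u+j+1) (j+v+1) := h2
  have hid : (j+v+2) * Nat.choose (u+j+2) (j+v+2)
      = (u+j+1+1) * Nat.choose (u+j+1) (j+v+1) := by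
    have h := Nat.add_one_mul_choose_eq (u+j+1) (j+v+1)
    rw [show u+j+1+1 = u+j+2 from by omega, show j+v+1+1 = j+v+2 from by omega] at h
    rw [show u+j+1+1 = u+j+2 from by omega]
    linarith [h]
  have hb : (u+j+1) + 2 ≤ Nat.choose (u+j+1) (j+v+1) + (j+v+2) := by
    have := chooseLower (j+v+1) (u+j+1) (by omega) (by omega)
    omega
  have key := keyArith t s (j+v+2) (u+j+1)
      (Nat.choose (u+j+1) (j+v+1)) (Nat.choose (u+j+2) (j+v+2)) ht hs (by omega)
      hid hb (by nlinarith [hnn])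
  rw [pascal]
  nlinarith [key, Nat.mul_le_mul_left (t*(j+v+3)) hd]

open Finset

/-- The function `g(n,k,t,s,x)` from the paper. -/
def gFun (n k t s x : ℕ) : ℕ :=
  (x - t) * Nat.choose (n - t - 1) (k - t - 1) +
    (k - x + 1) * (k - t + 1) * Nat.choose (n - t - 2) (k - t - 2) +
    t * (k - t) * Nat.choose (n - x) (k - x) + s * (k - x + 3)

theorem stmt6 (n k t s : ℕ) (hn : 0 < n) (hk : 0 < k) (ht : 0 < t) (hs : 0 < s)
    (hkt : t + 3 ≤ k) (hnge : 3 * Nat.choose (t + 2) 2 * ((k - t + 1) ^ 2 + s) ≤ n) :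
    ∀ x : ℕ, t + 2 ≤ x → x ≤ k - 1 → gFun n k t s x < gFun n k t s (x + 1) := by
  intro x hx1 hx2
  have hC2 : t + 1 ≤ Nat.choose (t+2) 2 := by
    have := chooseLower 2 (t+2) (by omega) (by omega); omega
  have hnbig : 3*(t+1)*((k-t+1)^2+s) ≤ n :=
    le_trans (Nat.mul_le_mul_right _ (Nat.mul_le_mul_left 3 hC2)) hnge
  obtain ⟨m, rfl⟩ : ∃ m, k = t + m := ⟨k - t, by omega⟩
  rw [show t + m - t = m by omega] at hnbig
  have hm3 : 3 ≤ m := by omega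
  obtain ⟨j, rfl⟩ : ∃ j, x = t + 2 + j := ⟨x - t - 2, by omega⟩
  have hj : j + 3 ≤ m := by omega
  obtain ⟨v, rfl⟩ : ∃ v, m = j + v + 3 := ⟨m - j - 3, by omega⟩
  have hnge2 : t + (j + v + 3) + 10 ≤ n := by nlinarith [hnbig]
  obtain ⟨u, rfl⟩ : ∃ u, n = u + t + j + 3 := ⟨n - t - j - 3, by omega⟩
  have hu : v + 3 ≤ u := by omega
  have hnn : 3*(t+1)*((j+v+4)^2 + s) ≤ u + j + t + 3 := by
    rw [show (j+v+4) = (j+v+3)+1 by omega]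
    rw [show u+j+t+3 = u+t+j+3 by omega]
    exact hnbig
  have main := mainIneq t s j v u ht hs hu hnn
  simp only [gFun]
  rw [show t + 2 + j - t = j + 2 by omega,
    show u + t + j + 3 - t - 1 = u + j + 2 by omega,
    show t + (j + v + 3) - t - 1 = j + v + 2 by omega,
    show t + (j + v + 3) - (t + 2 + j) + 1 = v + 2 by omega,
    show t + (j + v + 3) - t + 1 = j + v + 4 by omega,
    show u + t + j + 3 - t - 2 = u + j + 1 by omega,
    show t + (j + v + 3) - t - 2 = j + v + 1 by omega,
    show t + (j + v + 3) - t = j + v + 3 by omega,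
    show t + (j + v + 3) - (t + 2 + j) + 3 = v + 4 by omega,
    show u + t + j + 3 - (t + 2 + j) = u + 1 by omega,
    show t + (j + v + 3) - (t + 2 + j) = v + 1 by omega,
    show t + 2 + j + 1 - t = j + 3 by omega,
    show t + (j + v + 3) - (t + 2 + j + 1) + 1 = v + 1 by omega,
    show t + (j + v + 3) - (t + 2 + j + 1) + 3 = v + 3 by omega,
    show u + t + j + 3 - (t + 2 + j + 1) = u by omega,
    show t + (j + v + 3) - (t + 2 + j + 1) = v by omega]
  exact main
end

section
/- Let n, k, t, s be positive integers with k ≥ t+2 and n ≥ 3·binom(t+2, 2)·((k−t+1)² + s). Let h(n,k,t,s) = |{F ∈ binom([n], k) : [t] ⊆ F and |F ∩ [k+1]| ≥ t+1}| + s + min{t, s}. Then h(n,k,t,s) > (k−t+1)·binom(n−t−1, k−t−1) − binom(k−t+1, 2)·binom(n−t−2, k−t−2) ≥ (17/18)·(k−t+1)·binom(n−t−1, k−t−1). -/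
open Finset

def hFun (n k t s : ℕ) : ℕ :=
  (((Icc 1 n).powersetCard k).filter
    (fun F => Icc 1 t ⊆ F ∧ t + 1 ≤ (F ∩ Icc 1 (k + 1)).card)).card + s + min t s

lemma sum_pred_Icc (M : ℕ) : ∑ i ∈ Icc 1 M, (i - 1) = Nat.choose M 2 := by
  induction M with
  | zero => simp
  | succ M ih =>
    have hins : Icc 1 (M + 1) = insert (M + 1) (Icc 1 M) := by
      ext x; simp [mem_Icc]; omega
    rw [hins, sum_insert (by simp), ih]
    have h : (M + 1).choose 2 = M.choose 1 + M.choose 2 := Nat.choose_succ_succ M 1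
    rw [Nat.choose_one_right] at h
    omega

lemma choose_sub_le (r : ℕ) : ∀ a b : ℕ, b ≤ a →
    Nat.choose a (r + 1) ≤ Nat.choose b (r + 1) + (a - b) * Nat.choose (a - 1) r := by
  intro a
  induction a with
  | zero => intro b hb; interval_cases b; simp
  | succ c ih =>
    intro b hb
    rcases eq_or_lt_of_le hb with h | h
    · subst h; simp
    · have hb' : b ≤ c := Nat.lt_succ_iff.mp h
      have h1 := ih b hb'
      have h2 : Nat.choose (c - 1) r ≤ Nat.choose c r :=
        Nat.choose_le_choose r (Nat.sub_le c 1)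
      have h3 : Nat.choose (c + 1) (r + 1) = Nat.choose c r + Nat.choose c (r + 1) :=
        Nat.choose_succ_succ c (r)
      have h4 : c + 1 - b = (c - b) + 1 := by omega
      have h5 : (c - b) * Nat.choose (c - 1) r ≤ (c - b) * Nat.choose c r :=
        Nat.mul_le_mul_left _ h2
      simp only [Nat.add_sub_cancel]
      rw [h3, h4]
      nlinarith [h1, h5]

lemma sdiff_key (t i : ℕ) (hti : 1 ≤ t + i) (G : Finset ℕ) (hG : ∀ x ∈ G, t + i + 1 ≤ x) :
    (Icc 1 t ∪ insert (t + i) G) \ Icc 1 (t + i) = G := by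
  ext x
  simp only [mem_sdiff, mem_union, mem_insert, mem_Icc]
  constructor
  · rintro ⟨(⟨h1, h2⟩ | rfl | hx), hnot⟩
    · omega
    · exact absurd ⟨by omega, le_refl _⟩ hnot
    · exact hx
  · intro hx
    have := hG x hx
    exact ⟨Or.inr (Or.inr hx), by omega⟩

lemma card_lb (n t m' : ℕ) (ht : 0 < t) (hn : t + m' + 3 ≤ n) :
    ∑ i ∈ Icc 1 (m' + 3), Nat.choose (n - t - i) (m' + 1) ≤
      (((Icc 1 n).powersetCard (t + m' + 2)).filter
        (fun F => Icc 1 t ⊆ F ∧ t + 1 ≤ (F ∩ Icc 1 (t + m' + 2 + 1)).card)).card := by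
  set g : ℕ → Finset (Finset ℕ) := fun i =>
    ((Icc (t + i + 1) n).powersetCard (m' + 1)).image
      (fun G => Icc 1 t ∪ insert (t + i) G) with hg
  have hGfacts : ∀ i, ∀ G ∈ (Icc (t + i + 1) n).powersetCard (m' + 1),
      (∀ x ∈ G, t + i + 1 ≤ x ∧ x ≤ n) ∧ G.card = m' + 1 := by
    intro i G hG
    rw [mem_powersetCard] at hG
    exact ⟨fun x hx => by have := hG.1 hx; rw [mem_Icc] at this; exact this, hG.2⟩
  -- membership in filter
  have hmem : ∀ i ∈ Icc 1 (m' + 3), ∀ F ∈ g i,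
      F ∈ (((Icc 1 n).powersetCard (t + m' + 2)).filter
        (fun F => Icc 1 t ⊆ F ∧ t + 1 ≤ (F ∩ Icc 1 (t + m' + 2 + 1)).card)) := by
    intro i hi F hF
    rw [mem_Icc] at hi
    simp only [hg, mem_image] at hF
    obtain ⟨G, hG, rfl⟩ := hF
    obtain ⟨hGb, hGc⟩ := hGfacts i G hG
    have hni : t + i ∉ G := fun h => by have := (hGb _ h).1; omega
    have hdisj : Disjoint (Icc 1 t) (insert (t + i) G) := by
      rw [Finset.disjoint_left]
      intro x hx hx2
      rw [mem_Icc] at hx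
      rcases mem_insert.mp hx2 with rfl | h
      · omega
      · have := (hGb _ h).1; omega
    rw [mem_filter, mem_powersetCard]
    refine ⟨⟨?_, ?_⟩, ?_, ?_⟩
    · apply union_subset
      · exact Icc_subset_Icc le_rfl (by omega)
      · apply insert_subset
        · rw [mem_Icc]; omega
        · intro x hx; rw [mem_Icc]; have := hGb _ hx; omega
    · rw [card_union_of_disjoint hdisj, card_insert_of_notMem hni, hGc, Nat.card_Icc]
      omega
    · exact subset_union_left
    · have hsub : insert (t + i) (Icc 1 t) ⊆
          (Icc 1 t ∪ insert (t + i) G) ∩ Icc 1 (t + m' + 2 + 1) := by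
        intro x hx
        rcases mem_insert.mp hx with rfl | h
        · rw [mem_inter, mem_Icc]
          exact ⟨mem_union_right _ (mem_insert_self _ _), by omega, by omega⟩
        · rw [mem_Icc] at h
          rw [mem_inter, mem_Icc]
          exact ⟨mem_union_left _ (by rw [mem_Icc]; omega), by omega, by omega⟩
      have hc : (insert (t + i) (Icc 1 t)).card = t + 1 := by
        rw [card_insert_of_notMem (by rw [mem_Icc]; omega), Nat.card_Icc]
        omega
      calc t + 1 = (insert (t + i) (Icc 1 t)).card := hc.symm
        _ ≤ _ := card_le_card hsub
  have hcard : ∀ i ∈ Icc 1 (m' + 3), (g i).card = Nat.choose (n - t - i) (m' + 1) := by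
    intro i hi
    rw [hg]
    rw [card_image_of_injOn, card_powersetCard, Nat.card_Icc,
        show n + 1 - (t + i + 1) = n - t - i by omega]
    intro G hG G' hG' h
    have h1 := (hGfacts i G hG).1
    have h2 := (hGfacts i G' hG').1
    rw [mem_Icc] at hi
    have h3 : (Icc 1 t ∪ insert (t + i) G) \ Icc 1 (t + i) =
        (Icc 1 t ∪ insert (t + i) G') \ Icc 1 (t + i) := by
      rw [show (Icc 1 t ∪ insert (t + i) G) = Icc 1 t ∪ insert (t + i) G' from h]
    rwa [sdiff_key t i (by omega) G (fun x hx => (h1 x hx).1),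
         sdiff_key t i (by omega) G' (fun x hx => (h2 x hx).1)] at h3
  have hdisj : ∀ i ∈ Icc 1 (m' + 3), ∀ j ∈ Icc 1 (m' + 3), i ≠ j →
      Disjoint (g i) (g j) := by
    intro i hi j hj hij
    rw [mem_Icc] at hi hj
    rw [Finset.disjoint_left]
    intro F hFi hFj
    simp only [hg, mem_image] at hFi hFj
    obtain ⟨G, hG, rfl⟩ := hFi
    obtain ⟨G', hG', hEq⟩ := hFj
    have h1 := (hGfacts i G hG).1
    have h2 := (hGfacts j G' hG').1
    have hmi : t + i ∈ Icc 1 t ∪ insert (t + j) G' := by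
      rw [hEq]; exact mem_union_right _ (mem_insert_self _ _)
    have hmj : t + j ∈ Icc 1 t ∪ insert (t + i) G := by
      rw [← hEq]; exact mem_union_right _ (mem_insert_self _ _)
    rcases mem_union.mp hmi with h | h
    · rw [mem_Icc] at h; omega
    · rcases mem_insert.mp h with h | h
      · omega
      · have hji := (h2 _ h).1
        rcases mem_union.mp hmj with h' | h'
        · rw [mem_Icc] at h'; omega
        · rcases mem_insert.mp h' with h' | h'
          · omega
          · have := (h1 _ h').1; omega
  calc ∑ i ∈ Icc 1 (m' + 3), Nat.choose (n - t - i) (m' + 1)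
      = ∑ i ∈ Icc 1 (m' + 3), (g i).card := (sum_congr rfl hcard).symm
    _ = ((Icc 1 (m' + 3)).biUnion g).card := (Finset.card_biUnion hdisj).symm
    _ ≤ _ := card_le_card (by
        intro F hF
        rw [mem_biUnion] at hF
        obtain ⟨i, hi, hFi⟩ := hF
        exact hmem i hi F hFi)

theorem stmt7 (n k t s : ℕ) (hn : 0 < n) (hk : 0 < k) (ht : 0 < t) (hs : 0 < s)
    (hkt : t + 2 ≤ k) (hnge : 3 * Nat.choose (t + 2) 2 * ((k - t + 1) ^ 2 + s) ≤ n) :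
    ((k - t + 1) * Nat.choose (n - t - 1) (k - t - 1) : ℤ) -
        (Nat.choose (k - t + 1) 2 : ℤ) * (Nat.choose (n - t - 2) (k - t - 2) : ℤ) <
      (hFun n k t s : ℤ) ∧
    17 * ((k - t + 1) * Nat.choose (n - t - 1) (k - t - 1) : ℤ) ≤
      18 * (((k - t + 1) * Nat.choose (n - t - 1) (k - t - 1) : ℤ) -
        (Nat.choose (k - t + 1) 2 : ℤ) * (Nat.choose (n - t - 2) (k - t - 2) : ℤ)) := by
  obtain ⟨m', rfl⟩ : ∃ m', k = t + m' + 2 := ⟨k - t - 2, by omega⟩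
  have e1 : t + m' + 2 - t = m' + 2 := by omega
  rw [e1] at hnge ⊢
  simp only [show m' + 2 + 1 = m' + 3 by omega, show m' + 2 - 1 = m' + 1 by omega,
    show m' + 2 - 2 = m' by omega] at *
  -- bounds on n
  obtain ⟨r, hr⟩ := Nat.even_mul_succ_self (t + 1)
  have hq : (t + 2) * (t + 2 - 1) = (t + 1) * (t + 1 + 1) := by
    rw [show t + 2 - 1 = t + 1 by omega]; ring
  have hCt : t + 1 ≤ Nat.choose (t + 2) 2 := by
    rw [Nat.choose_two_right, hq]
    have hp : 2 * (t + 1) ≤ (t + 1) * (t + 1 + 1) := by nlinarith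
    omega
  have hC3 : 3 ≤ Nat.choose (t + 2) 2 := by
    rw [Nat.choose_two_right, hq]
    have hp : 6 ≤ (t + 1) * (t + 1 + 1) := by nlinarith
    omega
  have h9 : 9 * ((m' + 2) * (m' + 1)) + t + 1 ≤ n := by
    have e : 3 * Nat.choose (t + 2) 2 * ((m' + 3) ^ 2 + s) =
        3 * Nat.choose (t + 2) 2 * (m' + 3) ^ 2 + 3 * Nat.choose (t + 2) 2 * s := by ring
    have k1 : 9 * (m' + 3) ^ 2 ≤ 3 * Nat.choose (t + 2) 2 * (m' + 3) ^ 2 :=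
      Nat.mul_le_mul_right _ (by omega)
    have k2 : t + 1 ≤ 3 * Nat.choose (t + 2) 2 * s :=
      calc t + 1 ≤ 3 * Nat.choose (t + 2) 2 * 1 := by omega
        _ ≤ _ := Nat.mul_le_mul_left _ hs
    have k3 : 9 * ((m' + 2) * (m' + 1)) ≤ 9 * (m' + 3) ^ 2 := by nlinarith
    linarith [hnge, e, k1, k2, k3]
  have hn3 : t + m' + 3 ≤ n := by
    have : m' + 2 ≤ (m' + 2) * (m' + 1) := Nat.le_mul_of_pos_right _ (by omega)
    omega
  -- Step B
  have hB : (m' + 3) * Nat.choose (n - t - 1) (m' + 1) ≤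
      (∑ i ∈ Icc 1 (m' + 3), Nat.choose (n - t - i) (m' + 1)) +
        Nat.choose (m' + 3) 2 * Nat.choose (n - t - 2) m' := by
    have hstep : ∀ i ∈ Icc 1 (m' + 3),
        Nat.choose (n - t - 1) (m' + 1) ≤
          Nat.choose (n - t - i) (m' + 1) + (i - 1) * Nat.choose (n - t - 2) m' := by
      intro i hi
      rw [mem_Icc] at hi
      have := choose_sub_le m' (n - t - 1) (n - t - i) (by omega)
      rwa [show n - t - 1 - (n - t - i) = i - 1 by omega,
           show n - t - 1 - 1 = n - t - 2 by omega] at this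
    calc (m' + 3) * Nat.choose (n - t - 1) (m' + 1)
        = ∑ i ∈ Icc 1 (m' + 3), Nat.choose (n - t - 1) (m' + 1) := by
          rw [sum_const, Nat.card_Icc, smul_eq_mul]
          norm_num
      _ ≤ ∑ i ∈ Icc 1 (m' + 3),
            (Nat.choose (n - t - i) (m' + 1) + (i - 1) * Nat.choose (n - t - 2) m') :=
          sum_le_sum hstep
      _ = (∑ i ∈ Icc 1 (m' + 3), Nat.choose (n - t - i) (m' + 1)) +
            Nat.choose (m' + 3) 2 * Nat.choose (n - t - 2) m' := by
          rw [sum_add_distrib, ← sum_mul, sum_pred_Icc]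
  -- Step A
  have hA := card_lb n t m' ht hn3
  -- Step C : 18 * C(m'+3,2) * C(n-t-2,m') ≤ (m'+3) * C(n-t-1,m'+1)
  have hC : 18 * (Nat.choose (m' + 3) 2 * Nat.choose (n - t - 2) m') ≤
      (m' + 3) * Nat.choose (n - t - 1) (m' + 1) := by
    have hrel : (n - t - 1) * Nat.choose (n - t - 2) m' =
        Nat.choose (n - t - 1) (m' + 1) * (m' + 1) := by
      have h := Nat.add_one_mul_choose_eq (n - t - 2) m'
      rwa [show n - t - 2 + 1 = n - t - 1 by omega] at h
    obtain ⟨r2, hr2⟩ := Nat.even_mul_succ_self (m' + 2)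
    have hC2 : 2 * Nat.choose (m' + 3) 2 = (m' + 3) * (m' + 2) := by
      have hq2 : (m' + 3) * (m' + 3 - 1) = (m' + 2) * (m' + 2 + 1) := by
        rw [show m' + 3 - 1 = m' + 2 by omega]; ring
      have hq3 : (m' + 3) * (m' + 2) = (m' + 2) * (m' + 2 + 1) := by ring
      rw [Nat.choose_two_right, hq2]
      omega
    apply Nat.le_of_mul_le_mul_right (c := m' + 1) _ (by omega)
    calc 18 * (Nat.choose (m' + 3) 2 * Nat.choose (n - t - 2) m') * (m' + 1)
        = 9 * ((m' + 3) * (m' + 2)) * ((m' + 1) * Nat.choose (n - t - 2) m') := by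
          rw [← hC2]; ring
      _ = (m' + 3) * ((9 * ((m' + 2) * (m' + 1))) * Nat.choose (n - t - 2) m') := by
          ring
      _ ≤ (m' + 3) * ((n - t - 1) * Nat.choose (n - t - 2) m') := by
          have h1 : 9 * ((m' + 2) * (m' + 1)) ≤ n - t - 1 := by omega
          exact Nat.mul_le_mul_left _ (Nat.mul_le_mul_right _ h1)
      _ = (m' + 3) * Nat.choose (n - t - 1) (m' + 1) * (m' + 1) := by
          rw [hrel]; ring
  have hkey : (m' + 3) * Nat.choose (n - t - 1) (m' + 1) ≤
      (((Icc 1 n).powersetCard (t + m' + 2)).filter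
        (fun F => Icc 1 t ⊆ F ∧ t + 1 ≤ (F ∩ Icc 1 (t + m' + 2 + 1)).card)).card +
        Nat.choose (m' + 3) 2 * Nat.choose (n - t - 2) m' := hB.trans (by omega)
  have hhf : hFun n (t + m' + 2) t s =
      (((Icc 1 n).powersetCard (t + m' + 2)).filter
        (fun F => Icc 1 t ⊆ F ∧ t + 1 ≤ (F ∩ Icc 1 (t + m' + 2 + 1)).card)).card
        + s + min t s := rfl
  constructor
  · rw [hhf]
    have h1 : ((m' + 3) * Nat.choose (n - t - 1) (m' + 1) : ℤ) ≤
        ((((Icc 1 n).powersetCard (t + m' + 2)).filter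
          (fun F => Icc 1 t ⊆ F ∧ t + 1 ≤ (F ∩ Icc 1 (t + m' + 2 + 1)).card)).card : ℤ) +
        (Nat.choose (m' + 3) 2 : ℤ) * (Nat.choose (n - t - 2) m' : ℤ) := by
      exact_mod_cast hkey
    have hs' : (1 : ℤ) ≤ (s : ℤ) := by exact_mod_cast hs
    have hmin : (0 : ℤ) ≤ ((min t s : ℕ) : ℤ) := Int.ofNat_nonneg _
    push_cast at h1 hmin ⊢
    linarith
  · have hCz : (18 : ℤ) * ((Nat.choose (m' + 3) 2 : ℤ) * (Nat.choose (n - t - 2) m' : ℤ)) ≤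
        ((m' + 3 : ℕ) : ℤ) * (Nat.choose (n - t - 1) (m' + 1) : ℤ) := by
      exact_mod_cast hC
    push_cast at hCz ⊢
    linarith
end

section
/- Let n, k, t, s be positive integers with k ≥ t+1 and n ≥ 2k−t+s. Let 𝒜 be an s-element subset of {F ∈ binom([n], k) : F ∩ [k+1] = [t]} and let ℬ be a min{t, s}-element subset of {F ∈ binom([k+1], k) : [t] ⊄ F}. Then the family {F ∈ binom([n], k) : [t] ⊆ F and |F ∩ [k+1]| ≥ t+1} ∪ 𝒜 ∪ ℬ is s-almost t-intersecting but not t-intersecting. -/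
open Finset

/-- A family is `s`-almost `t`-intersecting if each member has at most `s`
members of the family meeting it in fewer than `t` elements. -/
def almostIntersecting (s t : ℕ) (𝓕 : Finset (Finset ℕ)) : Prop :=
  ∀ F ∈ 𝓕, (𝓕.filter (fun F' => (F' ∩ F).card < t)).card ≤ s

/-- A family is `t`-intersecting if any two members meet in at least `t` elements. -/
def tIntersecting (t : ℕ) (𝓕 : Finset (Finset ℕ)) : Prop :=
  ∀ F ∈ 𝓕, ∀ F' ∈ 𝓕, t ≤ (F ∩ F').card

theorem stmt8 (n k t s : ℕ) (hn : 0 < n) (hk : 0 < k) (ht : 0 < t) (hs : 0 < s)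
    (hkt : t + 1 ≤ k) (hnge : 2 * k - t + s ≤ n)
    (𝓐 : Finset (Finset ℕ))
    (h𝓐 : 𝓐 ⊆ ((Icc 1 n).powersetCard k).filter (fun F => F ∩ Icc 1 (k + 1) = Icc 1 t))
    (h𝓐card : 𝓐.card = s)
    (𝓑 : Finset (Finset ℕ))
    (h𝓑 : 𝓑 ⊆ ((Icc 1 (k + 1)).powersetCard k).filter (fun F => ¬ Icc 1 t ⊆ F))
    (h𝓑card : 𝓑.card = min t s) :
    almostIntersecting s t
      ((((Icc 1 n).powersetCard k).filter
        (fun F => Icc 1 t ⊆ F ∧ t + 1 ≤ (F ∩ Icc 1 (k + 1)).card)) ∪ 𝓐 ∪ 𝓑) ∧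
    ¬ tIntersecting t
      ((((Icc 1 n).powersetCard k).filter
        (fun F => Icc 1 t ⊆ F ∧ t + 1 ≤ (F ∩ Icc 1 (k + 1)).card)) ∪ 𝓐 ∪ 𝓑) := by
  set G := (((Icc 1 n).powersetCard k).filter
      (fun F => Icc 1 t ⊆ F ∧ t + 1 ≤ (F ∩ Icc 1 (k + 1)).card)) with hGdef
  have hcardIcct : (Icc 1 t).card = t := by rw [Nat.card_Icc]; omega
  have hcardIcck : (Icc 1 (k + 1)).card = k + 1 := by rw [Nat.card_Icc]; omega
  -- facts about members
  have hBfact : ∀ B ∈ 𝓑, B ⊆ Icc 1 (k + 1) ∧ B.card = k ∧ ¬ Icc 1 t ⊆ B := by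
    intro B hB
    have := h𝓑 hB
    simp only [mem_filter, mem_powersetCard] at this
    exact ⟨this.1.1, this.1.2, this.2⟩
  have hAfact : ∀ A ∈ 𝓐, A.card = k ∧ A ∩ Icc 1 (k + 1) = Icc 1 t := by
    intro A hA
    have := h𝓐 hA
    simp only [mem_filter, mem_powersetCard] at this
    exact ⟨this.1.2, this.2⟩
  have hAt : ∀ A ∈ 𝓐, Icc 1 t ⊆ A := by
    intro A hA
    have h := (hAfact A hA).2
    intro x hx
    have : x ∈ A ∩ Icc 1 (k + 1) := h ▸ hx
    exact (mem_inter.mp this).1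
  have hGt : ∀ F ∈ G, Icc 1 t ⊆ F := by
    intro F hF
    exact (mem_filter.mp hF).2.1
  -- G member vs B member: intersection ≥ t
  have hGB : ∀ F ∈ G, ∀ B ∈ 𝓑, t ≤ (F ∩ B).card := by
    intro F hF B hB
    obtain ⟨hBk, hBcard, _⟩ := hBfact B hB
    have hFk : t + 1 ≤ (F ∩ Icc 1 (k + 1)).card := (mem_filter.mp hF).2.2
    have hsub : F ∩ Icc 1 (k + 1) ⊆ (F ∩ B) ∪ (Icc 1 (k + 1) \ B) := by
      intro x hx
      rw [mem_inter] at hx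
      by_cases hxB : x ∈ B
      · exact mem_union_left _ (mem_inter.mpr ⟨hx.1, hxB⟩)
      · exact mem_union_right _ (mem_sdiff.mpr ⟨hx.2, hxB⟩)
    have h1 : (Icc 1 (k + 1) \ B).card = 1 := by
      rw [card_sdiff_of_subset hBk, hcardIcck, hBcard]; omega
    have := card_le_card hsub
    have h2 := card_union_le (F ∩ B) (Icc 1 (k + 1) \ B)
    omega
  -- two B members: intersection ≥ t
  have hBB : ∀ B ∈ 𝓑, ∀ B' ∈ 𝓑, t ≤ (B ∩ B').card := by
    intro B hB B' hB'
    obtain ⟨hBk, hBcard, _⟩ := hBfact B hB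
    obtain ⟨hB'k, hB'card, _⟩ := hBfact B' hB'
    have hu : (B ∪ B').card ≤ k + 1 := by
      rw [← hcardIcck]; exact card_le_card (union_subset hBk hB'k)
    have := card_union_add_card_inter B B'
    omega
  refine ⟨?_, ?_⟩
  · -- almost intersecting
    intro F hF
    rcases mem_union.mp hF with hFGA | hFB
    · -- F ∈ G ∪ 𝓐 : bad set ⊆ 𝓑
      have hFt : Icc 1 t ⊆ F := by
        rcases mem_union.mp hFGA with h | h
        · exact hGt F h
        · exact hAt F h
      have hsub : ((G ∪ 𝓐 ∪ 𝓑).filter (fun F' => (F' ∩ F).card < t)) ⊆ 𝓑 := by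
        intro F' hF'
        rw [mem_filter] at hF'
        obtain ⟨hF'mem, hF'lt⟩ := hF'
        rcases mem_union.mp hF'mem with h | h
        · exfalso
          have hF't : Icc 1 t ⊆ F' := by
            rcases mem_union.mp h with h' | h'
            · exact hGt F' h'
            · exact hAt F' h'
          have : Icc 1 t ⊆ F' ∩ F := subset_inter hF't hFt
          have := card_le_card this
          omega
        · exact h
      calc ((G ∪ 𝓐 ∪ 𝓑).filter (fun F' => (F' ∩ F).card < t)).card ≤ 𝓑.card :=
            card_le_card hsub
        _ ≤ s := by omega
    · -- F ∈ 𝓑 : bad set ⊆ 𝓐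
      have hsub : ((G ∪ 𝓐 ∪ 𝓑).filter (fun F' => (F' ∩ F).card < t)) ⊆ 𝓐 := by
        intro F' hF'
        rw [mem_filter] at hF'
        obtain ⟨hF'mem, hF'lt⟩ := hF'
        rcases mem_union.mp hF'mem with h | h
        · rcases mem_union.mp h with h' | h'
          · exact absurd (hGB F' h' F hFB) (by omega)
          · exact h'
        · exact absurd (hBB F' h F hFB) (by omega)
      calc ((G ∪ 𝓐 ∪ 𝓑).filter (fun F' => (F' ∩ F).card < t)).card ≤ 𝓐.card :=
            card_le_card hsub
        _ ≤ s := by omega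
  · -- not t-intersecting
    intro hInt
    obtain ⟨A, hA⟩ := card_pos.mp (by omega : 0 < 𝓐.card)
    obtain ⟨B, hB⟩ := card_pos.mp (by rw [h𝓑card]; omega : 0 < 𝓑.card)
    have hAmem : A ∈ G ∪ 𝓐 ∪ 𝓑 := mem_union_left _ (mem_union_right _ hA)
    have hBmem : B ∈ G ∪ 𝓐 ∪ 𝓑 := mem_union_right _ hB
    have hle := hInt A hAmem B hBmem
    obtain ⟨_, hAeq⟩ := hAfact A hA
    obtain ⟨hBk, _, hBnt⟩ := hBfact B hB
    have hsub : A ∩ B ⊆ Icc 1 t ∩ B := by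
      intro x hx
      rw [mem_inter] at hx
      have : x ∈ A ∩ Icc 1 (k + 1) := mem_inter.mpr ⟨hx.1, hBk hx.2⟩
      rw [hAeq] at this
      exact mem_inter.mpr ⟨this, hx.2⟩
    have hss : Icc 1 t ∩ B ⊂ Icc 1 t := by
      refine Finset.ssubset_iff_subset_ne.mpr ⟨inter_subset_left, ?_⟩
      intro hEq
      exact hBnt (by rw [← hEq]; exact inter_subset_right)
    have := card_lt_card hss
    have := card_le_card hsub
    omega
end

section
/- Let n, k, t, s, h be positive integers with k ≥ t+1 and n ≥ 2k. Suppose ℱ ⊆ binom([n], k) is an s-almost t-intersecting family and H is an h-element subset of [n]. If there exists F ∈ ℱ with |F ∩ H| = m < t, then there exists an (h+t−m)-element subset R of [n] with H ⊆ R such that |ℱ_H| ≤ (k−t+1)^{t−m} · |ℱ_R| + s. -/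
open Finset

lemma aux_fac_prod (b : ℕ) : Nat.factorial b = ∏ i ∈ range b, (b - i) := by
  induction b with
  | zero => simp
  | succ c ih =>
    rw [Finset.prod_range_succ']
    simp only [Nat.add_sub_cancel_left, Nat.succ_sub_succ]
    rw [← ih, Nat.sub_zero, Nat.factorial_succ, mul_comm]

lemma aux_choose_le_pow (a b : ℕ) (hba : b ≤ a) : a.choose b ≤ (a - b + 1) ^ b := by
  have hrhs : (a - b + 1) ^ b * Nat.factorial b = ∏ i ∈ range b, ((a - b + 1) * (b - i)) := by
    rw [Finset.prod_mul_distrib, Finset.prod_const, card_range, aux_fac_prod]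
  have hdesc : a.descFactorial b ≤ (a - b + 1) ^ b * Nat.factorial b := by
    rw [Nat.descFactorial_eq_prod_range, hrhs]
    refine Finset.prod_le_prod (fun i _ => Nat.zero_le _) (fun i hi => ?_)
    have hib : i < b := Finset.mem_range.mp hi
    have h1 : a - i = (a - b) + (b - i) := by omega
    have h2 : 1 ≤ b - i := by omega
    nlinarith [Nat.sub_le a b]
  have key : Nat.factorial b * a.choose b ≤ Nat.factorial b * (a - b + 1) ^ b := by
    rw [← Nat.descFactorial_eq_factorial_mul_choose]
    exact hdesc.trans_eq (mul_comm _ _)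
  exact Nat.le_of_mul_le_mul_left key (Nat.factorial_pos b)


theorem stmt9 (n k t s h m : ℕ) (hn : 0 < n) (hk : 0 < k) (ht : 0 < t) (hs : 0 < s)
    (hh : 0 < h) (hkt : t + 1 ≤ k) (hnge : 2 * k ≤ n)
    (𝓕 : Finset (Finset ℕ)) (h𝓕 : 𝓕 ⊆ (Icc 1 n).powersetCard k)
    (hai : almostIntersecting s t 𝓕)
    (H : Finset ℕ) (hH : H ∈ (Icc 1 n).powersetCard h)
    (hm : m < t) (hex : ∃ F ∈ 𝓕, (F ∩ H).card = m) :
    ∃ R ∈ (Icc 1 n).powersetCard (h + t - m), H ⊆ R ∧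
      (𝓕.filter (fun F => H ⊆ F)).card ≤
        (k - t + 1) ^ (t - m) * (𝓕.filter (fun F => R ⊆ F)).card + s := by
  obtain ⟨F, hF, hFH⟩ := hex
  obtain ⟨hFsub, hFcard⟩ := mem_powersetCard.mp (h𝓕 hF)
  obtain ⟨hHsub, hHcard⟩ := mem_powersetCard.mp hH
  set d := t - m with hd
  have hmt : m ≤ t := hm.le
  have hFHd : (F \ H).card = k - m := by
    have := Finset.card_sdiff_add_card_inter F H
    omega
  have hdle : d ≤ (F \ H).card := by omega
  set S := (F \ H).powersetCard d with hS
  -- covering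
  have cover : 𝓕.filter (fun F' => H ⊆ F') ⊆
      𝓕.filter (fun F' => (F' ∩ F).card < t) ∪
        S.biUnion (fun T => 𝓕.filter (fun F' => H ∪ T ⊆ F')) := by
    intro F' hF'
    rw [mem_filter] at hF'
    obtain ⟨hF'mem, hHF'⟩ := hF'
    rw [mem_union]
    by_cases hlt : (F' ∩ F).card < t
    · exact Or.inl (mem_filter.mpr ⟨hF'mem, hlt⟩)
    · push_neg at hlt
      right
      have hsubs : F' ∩ F ⊆ (F' ∩ (F \ H)) ∪ (F ∩ H) := by
        intro x hx
        rw [mem_inter] at hx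
        by_cases hxH : x ∈ H
        · exact mem_union_right _ (mem_inter.mpr ⟨hx.2, hxH⟩)
        · exact mem_union_left _ (mem_inter.mpr ⟨hx.1, mem_sdiff.mpr ⟨hx.2, hxH⟩⟩)
      have hcard : t ≤ (F' ∩ (F \ H)).card + m := by
        calc t ≤ (F' ∩ F).card := hlt
          _ ≤ ((F' ∩ (F \ H)) ∪ (F ∩ H)).card := card_le_card hsubs
          _ ≤ (F' ∩ (F \ H)).card + (F ∩ H).card := card_union_le _ _
          _ = (F' ∩ (F \ H)).card + m := by rw [hFH]
      obtain ⟨T, hTsub, hTcard⟩ := Finset.exists_subset_card_eq (s := F' ∩ (F \ H)) (n := d) (by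
        have := (F' ∩ (F \ H)).card
        omega)
      refine mem_biUnion.mpr ⟨T, ?_, ?_⟩
      · exact mem_powersetCard.mpr ⟨hTsub.trans (inter_subset_right), hTcard⟩
      · refine mem_filter.mpr ⟨hF'mem, union_subset hHF' (hTsub.trans inter_subset_left)⟩
  -- choose maximizing T₀
  have hSne : S.Nonempty := by
    obtain ⟨T, hT1, hT2⟩ := Finset.exists_subset_card_eq (s := F \ H) (n := d) hdle
    exact ⟨T, mem_powersetCard.mpr ⟨hT1, hT2⟩⟩
  obtain ⟨T₀, hT₀S, hT₀max⟩ :=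
    Finset.exists_max_image S (fun T => (𝓕.filter (fun F' => H ∪ T ⊆ F')).card) hSne
  obtain ⟨hT₀sub, hT₀card⟩ := mem_powersetCard.mp hT₀S
  have hdisj : Disjoint H T₀ := by
    refine Finset.disjoint_left.mpr fun x hxH hxT => ?_
    exact (mem_sdiff.mp (hT₀sub hxT)).2 hxH
  refine ⟨H ∪ T₀, ?_, subset_union_left, ?_⟩
  · refine mem_powersetCard.mpr ⟨union_subset hHsub ((hT₀sub.trans (sdiff_subset)).trans hFsub), ?_⟩
    rw [card_union_of_disjoint hdisj, hHcard, hT₀card]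
    omega
  · -- main counting
    have hScard : S.card = (k - m).choose d := by
      rw [hS, card_powersetCard, hFHd]
    have hchoose : S.card ≤ (k - t + 1) ^ (t - m) := by
      rw [hScard, ← hd]
      have := aux_choose_le_pow (k - m) d (by omega)
      have heq : k - m - d + 1 = k - t + 1 := by omega
      rwa [heq] at this
    calc (𝓕.filter (fun F => H ⊆ F)).card
        ≤ ((𝓕.filter (fun F' => (F' ∩ F).card < t)) ∪
            S.biUnion (fun T => 𝓕.filter (fun F' => H ∪ T ⊆ F'))).card := card_le_card cover
      _ ≤ (𝓕.filter (fun F' => (F' ∩ F).card < t)).card +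
            (S.biUnion (fun T => 𝓕.filter (fun F' => H ∪ T ⊆ F'))).card := card_union_le _ _
      _ ≤ s + ∑ T ∈ S, (𝓕.filter (fun F' => H ∪ T ⊆ F')).card :=
            Nat.add_le_add (hai F hF) (card_biUnion_le)
      _ ≤ s + ∑ T ∈ S, (𝓕.filter (fun F' => H ∪ T₀ ⊆ F')).card :=
            Nat.add_le_add_left (Finset.sum_le_sum fun T hT => hT₀max T hT) _
      _ = s + S.card * (𝓕.filter (fun F' => H ∪ T₀ ⊆ F')).card := by
            rw [Finset.sum_const, smul_eq_mul]
      _ ≤ (k - t + 1) ^ (t - m) * (𝓕.filter (fun F => H ∪ T₀ ⊆ F)).card + s := by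
            rw [Nat.add_comm]
            exact Nat.add_le_add_right (Nat.mul_le_mul_right _ hchoose) s
end

section
/- Let n, k, t, s be positive integers with k ≥ t+1 and n ≥ (t+1)(k−t+1)². Suppose ℱ ⊆ binom([n], k) is an s-almost t-intersecting family whose t-covering number τ satisfies t+1 ≤ τ ≤ k. If H is a subset of [n] with |H| < τ, then |ℱ_H| ≤ (k−t+1)^{τ−|H|} · binom(n−τ, k−τ) + Σ_{i=0}^{τ−|H|−1} s·(k−t+1)^{i}. -/
open Finset

/-- `T` is a `t`-cover of `𝓕` if it meets every member of `𝓕` in at least `t` elements. -/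
def isTCover (t : ℕ) (T : Finset ℕ) (𝓕 : Finset (Finset ℕ)) : Prop :=
  ∀ F ∈ 𝓕, t ≤ (T ∩ F).card

lemma stmt10_aux (n k t s τ : ℕ) (hkt : t + 1 ≤ k)
    (𝓕 : Finset (Finset ℕ)) (h𝓕 : 𝓕 ⊆ (Icc 1 n).powersetCard k)
    (hai : almostIntersecting s t 𝓕)
    (hτmin : ∀ T ⊆ Icc 1 n, isTCover t T 𝓕 → τ ≤ T.card)
    (hτ2 : τ ≤ k) :
    ∀ d (H : Finset ℕ), H ⊆ Icc 1 n → H.card + d = τ →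
      (𝓕.filter (fun F => H ⊆ F)).card ≤
        (k - t + 1) ^ d * Nat.choose (n - τ) (k - τ) +
          ∑ i ∈ Finset.range d, s * (k - t + 1) ^ i := by
  intro d
  induction d with
  | zero =>
    intro H hH hcard
    simp only [pow_zero, one_mul, Finset.range_zero, Finset.sum_empty, add_zero]
    -- injection F ↦ F \ H into (k-τ)-subsets of Icc 1 n \ H
    have hinj : ∀ F ∈ 𝓕.filter (fun F => H ⊆ F),
        F \ H ∈ ((Icc 1 n) \ H).powersetCard (k - τ) := by
      intro F hF
      rw [mem_filter] at hF
      obtain ⟨hF1, hF2⟩ := hF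
      have := h𝓕 hF1
      rw [mem_powersetCard] at this ⊢
      refine ⟨sdiff_subset_sdiff this.1 le_rfl, ?_⟩
      rw [card_sdiff_of_subset hF2, this.2]; omega
    calc (𝓕.filter (fun F => H ⊆ F)).card
        ≤ (((Icc 1 n) \ H).powersetCard (k - τ)).card := by
          apply Finset.card_le_card_of_injOn (fun F => F \ H) hinj
          intro F hF F' hF' hEq
          rw [mem_coe, mem_filter] at hF hF'
          have hEq' : F \ H = F' \ H := hEq
          have : F \ H ∪ H = F' \ H ∪ H := by rw [hEq']
          rwa [sdiff_union_of_subset hF.2, sdiff_union_of_subset hF'.2] at this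
      _ = Nat.choose (n - τ) (k - τ) := by
          rw [Finset.card_powersetCard, card_sdiff_of_subset hH, Nat.card_Icc]
          have hHτ : H.card = τ := by omega
          rw [hHτ]
          congr 1
  | succ d ih =>
    intro H hH hcard
    -- H is not a t-cover
    have hnotcover : ¬ isTCover t H 𝓕 := by
      intro hc
      have := hτmin H hH hc
      omega
    rw [isTCover] at hnotcover
    push_neg at hnotcover
    obtain ⟨F₀, hF₀mem, hF₀int⟩ := hnotcover
    have hF₀ := h𝓕 hF₀mem
    rw [mem_powersetCard] at hF₀
    -- pick B ⊆ F₀ \ H with |B| = k - t + 1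
    have hHF₀ : (F₀ ∩ H).card ≤ t - 1 := by
      rw [inter_comm]; omega
    have hbig : k - t + 1 ≤ (F₀ \ H).card := by
      have h3 := card_sdiff_add_card_inter F₀ H
      omega
    obtain ⟨B, hBsub, hBcard⟩ := Finset.exists_subset_card_eq hbig
    -- cover claim
    have hcover : 𝓕.filter (fun F => H ⊆ F) ⊆
        (𝓕.filter (fun F' => (F' ∩ F₀).card < t)) ∪
          B.biUnion (fun x => 𝓕.filter (fun F => insert x H ⊆ F)) := by
      intro F hF
      rw [mem_filter] at hF
      obtain ⟨hF1, hF2⟩ := hF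
      rw [mem_union]
      by_cases hbad : (F ∩ F₀).card < t
      · exact Or.inl (mem_filter.2 ⟨hF1, hbad⟩)
      · right
        push_neg at hbad
        have hx : ∃ x ∈ B, x ∈ F := by
          by_contra hcon
          push_neg at hcon
          have hsub : F ∩ F₀ ⊆ F₀ \ B := by
            intro y hy
            rw [mem_inter] at hy
            rw [mem_sdiff]
            exact ⟨hy.2, fun hyB => hcon y hyB hy.1⟩
          have h1 : (F ∩ F₀).card ≤ (F₀ \ B).card := card_le_card hsub
          have h2 : (F₀ \ B).card = k - (k - t + 1) := by
            rw [card_sdiff_of_subset (hBsub.trans sdiff_subset), hBcard, hF₀.2]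
          omega
        obtain ⟨x, hxB, hxF⟩ := hx
        rw [mem_biUnion]
        exact ⟨x, hxB, mem_filter.2 ⟨hF1, insert_subset hxF hF2⟩⟩
    -- cardinality computations
    have hstep : (𝓕.filter (fun F => H ⊆ F)).card ≤
        s + ∑ x ∈ B, (𝓕.filter (fun F => insert x H ⊆ F)).card := by
      calc (𝓕.filter (fun F => H ⊆ F)).card
          ≤ ((𝓕.filter (fun F' => (F' ∩ F₀).card < t)) ∪
              B.biUnion (fun x => 𝓕.filter (fun F => insert x H ⊆ F))).card :=
            card_le_card hcover
        _ ≤ (𝓕.filter (fun F' => (F' ∩ F₀).card < t)).card +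
              (B.biUnion (fun x => 𝓕.filter (fun F => insert x H ⊆ F))).card :=
            card_union_le _ _
        _ ≤ s + ∑ x ∈ B, (𝓕.filter (fun F => insert x H ⊆ F)).card := by
            gcongr
            · exact hai F₀ hF₀mem
            · exact card_biUnion_le
    have hsum : ∀ x ∈ B, (𝓕.filter (fun F => insert x H ⊆ F)).card ≤
        (k - t + 1) ^ d * Nat.choose (n - τ) (k - τ) +
          ∑ i ∈ Finset.range d, s * (k - t + 1) ^ i := by
      intro x hxB
      have hxF₀ : x ∈ F₀ \ H := hBsub hxB
      rw [mem_sdiff] at hxF₀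
      apply ih
      · exact insert_subset (hF₀.1 hxF₀.1) hH
      · rw [card_insert_of_notMem hxF₀.2]; omega
    calc (𝓕.filter (fun F => H ⊆ F)).card
        ≤ s + ∑ x ∈ B, ((k - t + 1) ^ d * Nat.choose (n - τ) (k - τ) +
            ∑ i ∈ Finset.range d, s * (k - t + 1) ^ i) :=
          hstep.trans (by gcongr with x hx; exact hsum x hx)
      _ = s + (k - t + 1) * ((k - t + 1) ^ d * Nat.choose (n - τ) (k - τ) +
            ∑ i ∈ Finset.range d, s * (k - t + 1) ^ i) := by
          rw [Finset.sum_const, hBcard, smul_eq_mul]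
      _ = (k - t + 1) ^ (d + 1) * Nat.choose (n - τ) (k - τ) +
            ∑ i ∈ Finset.range (d + 1), s * (k - t + 1) ^ i := by
          rw [Finset.sum_range_succ' (fun i => s * (k - t + 1) ^ i), mul_add,
            Finset.mul_sum, pow_succ]
          have he : ∀ i ∈ Finset.range d,
              (k - t + 1) * (s * (k - t + 1) ^ i) = s * (k - t + 1) ^ (i + 1) :=
            fun i _ => by ring
          rw [Finset.sum_congr rfl he]
          ring

theorem stmt10 (n k t s τ : ℕ) (hn : 0 < n) (hk : 0 < k) (ht : 0 < t) (hs : 0 < s)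
    (hkt : t + 1 ≤ k) (hnge : (t + 1) * (k - t + 1) ^ 2 ≤ n)
    (𝓕 : Finset (Finset ℕ)) (h𝓕 : 𝓕 ⊆ (Icc 1 n).powersetCard k)
    (hai : almostIntersecting s t 𝓕)
    (hτmem : ∃ T ⊆ Icc 1 n, isTCover t T 𝓕 ∧ T.card = τ)
    (hτmin : ∀ T ⊆ Icc 1 n, isTCover t T 𝓕 → τ ≤ T.card)
    (hτ1 : t + 1 ≤ τ) (hτ2 : τ ≤ k)
    (H : Finset ℕ) (hH : H ⊆ Icc 1 n) (hHcard : H.card < τ) :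
    (𝓕.filter (fun F => H ⊆ F)).card ≤
      (k - t + 1) ^ (τ - H.card) * Nat.choose (n - τ) (k - τ) +
        ∑ i ∈ Finset.range (τ - H.card), s * (k - t + 1) ^ i := by
  exact stmt10_aux n k t s τ hkt 𝓕 h𝓕 hai hτmin hτ2 (τ - H.card) H hH (by omega)
end

section
/- Let n, t, s be positive integers with n ≥ t+3. Suppose ℱ ⊆ binom([n], t+1) is an s-almost t-intersecting family which is not t-intersecting. If |F₁ ∩ F₂| ≥ t−1 for all F₁, F₂ ∈ ℱ, then |ℱ| ≤ 2s+4. -/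
open Finset

theorem stmt11 (n t s : ℕ) (hn : 0 < n) (ht : 0 < t) (hs : 0 < s)
    (hnge : t + 3 ≤ n)
    (𝓕 : Finset (Finset ℕ)) (h𝓕 : 𝓕 ⊆ (Icc 1 n).powersetCard (t + 1))
    (hai : almostIntersecting s t 𝓕) (hni : ¬ tIntersecting t 𝓕)
    (hbig : ∀ F₁ ∈ 𝓕, ∀ F₂ ∈ 𝓕, t - 1 ≤ (F₁ ∩ F₂).card) :
    𝓕.card ≤ 2 * s + 4 := by
  classical
  unfold tIntersecting at hni
  push_neg at hni
  obtain ⟨A, hA, B, hB, hAB⟩ := hni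
  have cardF : ∀ F ∈ 𝓕, F.card = t + 1 := fun F hF => (Finset.mem_powersetCard.mp (h𝓕 hF)).2
  have hABcard : (A ∩ B).card = t - 1 := by
    have := hbig A hA B hB
    omega
  have hAcard := cardF A hA
  have hBcard := cardF B hB
  have key : ∀ F ∈ 𝓕, t ≤ (F ∩ A).card → t ≤ (F ∩ B).card →
      ∃ x ∈ A \ B, ∃ y ∈ B \ A, F = insert x (insert y (A ∩ B)) := by
    intro F hF hFA hFB
    have hFcard := cardF F hF
    have hsub : A ∩ B ⊆ F := by
      have h1 : (F ∩ A ∪ F ∩ B).card + (F ∩ A ∩ (F ∩ B)).card = (F ∩ A).card + (F ∩ B).card :=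
        Finset.card_union_add_card_inter _ _
      have h2 : F ∩ A ∪ F ∩ B ⊆ F := by
        intro x hx; simp only [mem_union, mem_inter] at hx; tauto
      have h3 : (F ∩ A ∪ F ∩ B).card ≤ t + 1 := hFcard ▸ Finset.card_le_card h2
      have h4 : F ∩ A ∩ (F ∩ B) = F ∩ (A ∩ B) := by
        ext x; simp only [mem_inter]; tauto
      have h5 : t - 1 ≤ (F ∩ (A ∩ B)).card := by rw [← h4]; omega
      have h6 : F ∩ (A ∩ B) ⊆ A ∩ B := inter_subset_right
      have h7 : F ∩ (A ∩ B) = A ∩ B :=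
        Finset.eq_of_subset_of_card_le h6 (by omega)
      intro x hx
      rw [← h7] at hx
      exact (mem_inter.mp hx).1
    have hx : ∃ x, x ∈ F ∩ A ∧ x ∉ B := by
      by_contra h
      push_neg at h
      have hss : F ∩ A ⊆ A ∩ B := fun x hx =>
        mem_inter.mpr ⟨(mem_inter.mp hx).2, h x hx⟩
      have := Finset.card_le_card hss
      omega
    have hy : ∃ y, y ∈ F ∩ B ∧ y ∉ A := by
      by_contra h
      push_neg at h
      have hss : F ∩ B ⊆ A ∩ B := fun x hx =>
        mem_inter.mpr ⟨h x hx, (mem_inter.mp hx).2⟩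
      have := Finset.card_le_card hss
      omega
    obtain ⟨x, hxFA, hxB⟩ := hx
    obtain ⟨y, hyFB, hyA⟩ := hy
    have hxF := (mem_inter.mp hxFA).1
    have hxA := (mem_inter.mp hxFA).2
    have hyF := (mem_inter.mp hyFB).1
    have hyB := (mem_inter.mp hyFB).2
    refine ⟨x, mem_sdiff.mpr ⟨hxA, hxB⟩, y, mem_sdiff.mpr ⟨hyB, hyA⟩, ?_⟩
    have hyAB : y ∉ A ∩ B := fun h => hyA (mem_inter.mp h).1
    have hxins : x ∉ insert y (A ∩ B) := by
      simp only [mem_insert]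
      rintro (rfl | h)
      · exact hyA hxA
      · exact hxB (mem_inter.mp h).2
    have hsub2 : insert x (insert y (A ∩ B)) ⊆ F := by
      intro z hz
      simp only [mem_insert] at hz
      rcases hz with rfl | rfl | hz
      · exact hxF
      · exact hyF
      · exact hsub hz
    have hcard2 : (insert x (insert y (A ∩ B))).card = t + 1 := by
      rw [Finset.card_insert_of_notMem hxins, Finset.card_insert_of_notMem hyAB, hABcard]
      omega
    exact (Finset.eq_of_subset_of_card_le hsub2 (by omega)).symm
  set SA := 𝓕.filter (fun F' => (F' ∩ A).card < t) with hSA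
  set SB := 𝓕.filter (fun F' => (F' ∩ B).card < t) with hSB
  set G := 𝓕.filter (fun F => t ≤ (F ∩ A).card ∧ t ≤ (F ∩ B).card) with hG
  have hsplit : 𝓕 ⊆ SA ∪ SB ∪ G := by
    intro F hF
    simp only [mem_union, hSA, hSB, hG, mem_filter]
    by_cases h1 : (F ∩ A).card < t
    · exact Or.inl (Or.inl ⟨hF, h1⟩)
    · by_cases h2 : (F ∩ B).card < t
      · exact Or.inl (Or.inr ⟨hF, h2⟩)
      · exact Or.inr ⟨hF, by omega, by omega⟩
  have hSAcard : SA.card ≤ s := hai A hA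
  have hSBcard : SB.card ≤ s := hai B hB
  have hGcard : G.card ≤ 4 := by
    have himg : G ⊆ ((A \ B) ×ˢ (B \ A)).image (fun p => insert p.1 (insert p.2 (A ∩ B))) := by
      intro F hF
      simp only [hG, mem_filter] at hF
      obtain ⟨hF𝓕, h1, h2⟩ := hF
      obtain ⟨x, hx, y, hy, hEq⟩ := key F hF𝓕 h1 h2
      exact mem_image.mpr ⟨(x, y), mem_product.mpr ⟨hx, hy⟩, hEq.symm⟩
    have hAB2 : (A \ B).card = 2 := by
      have := Finset.card_inter_add_card_sdiff A B
      omega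
    have hBA2 : (B \ A).card = 2 := by
      have := Finset.card_inter_add_card_sdiff B A
      rw [Finset.inter_comm] at this
      omega
    calc G.card ≤ (((A \ B) ×ˢ (B \ A)).image (fun p => insert p.1 (insert p.2 (A ∩ B)))).card :=
          Finset.card_le_card himg
      _ ≤ ((A \ B) ×ˢ (B \ A)).card := Finset.card_image_le
      _ = 4 := by rw [Finset.card_product, hAB2, hBA2]
  calc 𝓕.card ≤ (SA ∪ SB ∪ G).card := Finset.card_le_card hsplit
    _ ≤ SA.card + SB.card + G.card := by
        have h1 := Finset.card_union_le (SA ∪ SB) G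
        have h2 := Finset.card_union_le SA SB
        omega
    _ ≤ 2 * s + 4 := by omega
end

section
/- Let n, t, s be positive integers with n ≥ t+3. Suppose ℱ ⊆ binom([n], t+1) is an s-almost t-intersecting family which is not t-intersecting. If |F₁ ∩ F₂| ≤ t−2 for some F₁, F₂ ∈ ℱ, then |ℱ| ≤ 2s. -/
open Finset

theorem stmt12 (n t s : ℕ) (hn : 0 < n) (ht : 0 < t) (hs : 0 < s)
    (hnge : t + 3 ≤ n)
    (𝓕 : Finset (Finset ℕ)) (h𝓕 : 𝓕 ⊆ (Icc 1 n).powersetCard (t + 1))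
    (hai : almostIntersecting s t 𝓕) (hni : ¬ tIntersecting t 𝓕)
    (hsmall : ∃ F₁ ∈ 𝓕, ∃ F₂ ∈ 𝓕, ((F₁ ∩ F₂).card : ℤ) ≤ (t : ℤ) - 2) :
    𝓕.card ≤ 2 * s := by
  obtain ⟨F₁, h1, F₂, h2, hsm⟩ := hsmall
  have hsm' : (F₁ ∩ F₂).card + 2 ≤ t := by omega
  have hsub : 𝓕 ⊆ 𝓕.filter (fun F' => (F' ∩ F₁).card < t) ∪
      𝓕.filter (fun F' => (F' ∩ F₂).card < t) := by
    intro F hF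
    have hFcard : F.card = t + 1 := by
      have := h𝓕 hF
      exact (Finset.mem_powersetCard.mp this).2
    simp only [mem_union, mem_filter]
    by_contra hcon
    push_neg at hcon
    obtain ⟨hA, hB⟩ := hcon
    have hA := hA hF
    have hB := hB hF
    have hu : ((F ∩ F₁) ∪ (F ∩ F₂)).card ≤ t + 1 := by
      calc ((F ∩ F₁) ∪ (F ∩ F₂)).card ≤ F.card :=
            card_le_card (union_subset (inter_subset_left) (inter_subset_left))
        _ = t + 1 := hFcard
    have hi : ((F ∩ F₁) ∩ (F ∩ F₂)).card ≤ (F₁ ∩ F₂).card := by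
      apply card_le_card
      intro x hx
      simp only [mem_inter] at hx ⊢
      exact ⟨hx.1.2, hx.2.2⟩
    have hie := card_union_add_card_inter (F ∩ F₁) (F ∩ F₂)
    have hA' : t ≤ (F ∩ F₁).card := hA
    have hB' : t ≤ (F ∩ F₂).card := hB
    omega
  calc 𝓕.card ≤ (𝓕.filter (fun F' => (F' ∩ F₁).card < t) ∪
        𝓕.filter (fun F' => (F' ∩ F₂).card < t)).card := card_le_card hsub
    _ ≤ (𝓕.filter (fun F' => (F' ∩ F₁).card < t)).card +
        (𝓕.filter (fun F' => (F' ∩ F₂).card < t)).card := card_union_le _ _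
    _ ≤ s + s := Nat.add_le_add (hai F₁ h1) (hai F₂ h2)
    _ = 2 * s := by ring
end

section
/- Let n, k, t, s be positive integers with k ≥ t+1 and n ≥ 2k. If ℱ ⊆ binom([n], k) is an s-almost t-intersecting family whose t-covering number satisfies τ_t(ℱ) ≥ k+1, then |ℱ| ≤ s · binom(2k−2t+2, k−t+1). -/
section BollobasAux
open Polynomial Finset
noncomputable section
variable {S : Type} [CommRing S] (φ : ℕ → S) (m t' : ℕ)

abbrev Iota (m : ℕ) := Fin m ⊕ Fin m

def idx : Iota m → ℕ := Sum.elim (fun l => (l : ℕ)) (fun l => m + (l : ℕ))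

lemma idx_inj : Function.Injective (idx (m := m)) := by
  rintro (a | a) (b | b) h <;>
    simp only [idx, Sum.elim_inl, Sum.elim_inr] at h
  · exact congrArg Sum.inl (Fin.ext h)
  · exact absurd h (by have := a.isLt; omega)
  · exact absurd h (by have := b.isLt; omega)
  · exact congrArg Sum.inr (Fin.ext (by omega))

def pA (A : Finset ℕ) : S[X] := ∏ x ∈ A, (X - C (φ x))

lemma pA_monic (A : Finset ℕ) : (pA φ A).Monic :=
  monic_prod_of_monic _ _ fun i _ => monic_X_sub_C (φ i)

lemma pA_natDegree [Nontrivial S] (A : Finset ℕ) : (pA φ A).natDegree = A.card := by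
  rw [pA, natDegree_prod_of_monic _ _ fun i _ => monic_X_sub_C (φ i)]
  simp [natDegree_X_sub_C]

def rowPoly (A B : Finset ℕ) : Iota m → S[X] :=
  Sum.elim (fun l => X ^ (l : ℕ) * pA φ A) (fun l => X ^ (l : ℕ) * pA φ B)

def Mmat (A B : Finset ℕ) : Matrix (Iota m) (Iota m) S :=
  Matrix.of fun r c => (rowPoly φ m A B r).coeff (t' + idx m c)

def uP (v : Iota m → S) : S[X] := ∑ l : Fin m, C (v (Sum.inl l)) * X ^ (l : ℕ)
def wP (v : Iota m → S) : S[X] := ∑ l : Fin m, C (v (Sum.inr l)) * X ^ (l : ℕ)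

lemma sum_coeff_eq (f : Fin m → S) (l₀ : Fin m) :
    (∑ l : Fin m, C (f l) * X ^ (l : ℕ)).coeff (l₀ : ℕ) = f l₀ := by
  rw [finset_sum_coeff]
  rw [Finset.sum_eq_single l₀]
  · simp
  · intro b _ hb
    simp only [coeff_C_mul, coeff_X_pow]
    rw [if_neg (by simpa [Fin.val_injective.eq_iff] using hb.symm), mul_zero]
  · simp

lemma sum_natDegree_lt [Nontrivial S] (f : Fin m → S) (hm : 0 < m) :
    (∑ l : Fin m, C (f l) * X ^ (l : ℕ)).natDegree < m := by
  apply Nat.lt_of_le_of_lt (Polynomial.natDegree_sum_le _ _)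
  rw [Finset.fold_max_lt]
  refine ⟨hm, fun l _ => ?_⟩
  calc (C (f l) * X ^ (l:ℕ)).natDegree ≤ (C (f l)).natDegree + (X ^ (l:ℕ)).natDegree := natDegree_mul_le
    _ < m := by rw [natDegree_C, natDegree_X_pow, zero_add]; exact l.isLt

lemma poly_eq_sum (u : S[X]) (hu : u.natDegree < m) :
    u = ∑ l : Fin m, C (u.coeff l) * X ^ (l : ℕ) := by
  ext n
  by_cases hn : n < m
  · rw [show n = ((⟨n, hn⟩ : Fin m) : ℕ) from rfl, sum_coeff_eq]
  · rw [coeff_eq_zero_of_natDegree_lt (by omega), finset_sum_coeff]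
    symm
    apply Finset.sum_eq_zero
    intro l _
    simp only [coeff_C_mul, coeff_X_pow]
    rw [if_neg (by have := l.isLt; omega), mul_zero]

lemma vecMul_Mmat (A B : Finset ℕ) (v : Iota m → S) (c : Iota m) :
    (Matrix.vecMul v (Mmat φ m t' A B)) c
      = (uP m v * pA φ A + wP m v * pA φ B).coeff (t' + idx m c) := by
  rw [Matrix.vecMul, dotProduct]
  simp only [Mmat, Matrix.of_apply]
  rw [coeff_add]
  have huw : ∀ (P : S[X]) (g : Fin m → S),
      ((∑ l : Fin m, C (g l) * X ^ (l:ℕ)) * P).coeff (t' + idx m c)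
        = ∑ l : Fin m, g l * (X ^ (l:ℕ) * P).coeff (t' + idx m c) := by
    intro P g
    rw [Finset.sum_mul, finset_sum_coeff]
    congr 1
    ext l
    rw [mul_assoc, coeff_C_mul]
  rw [uP, wP, huw, huw, Fintype.sum_sum_type]
  simp [rowPoly]

lemma det_Mmat_eq_zero {K : Type} [Field K] (φ : ℕ → K) (m t' k : ℕ) (hm : 2 ≤ m)
    (hk : k = t' + m) (A B : Finset ℕ) (hA : A.card = k) (hB : B.card = k)
    (hcross : t' + 1 ≤ (A ∩ B).card) :
    (Mmat φ m t' A B).det = 0 := by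
  classical
  obtain ⟨T, hTsub, hTcard⟩ := Finset.exists_subset_card_eq hcross
  have hTA : T ⊆ A := hTsub.trans inter_subset_left
  have hTB : T ⊆ B := hTsub.trans inter_subset_right
  set uu := pA φ (B \ T) with huu
  set vv := pA φ (A \ T) with hvv
  have hBT : (B \ T).card = m - 1 := by rw [card_sdiff_of_subset hTB]; omega
  have hAT : (A \ T).card = m - 1 := by rw [card_sdiff_of_subset hTA]; omega
  have key : uu * pA φ A = vv * pA φ B := by
    have h1 : vv * pA φ T = pA φ A := by rw [hvv, pA, pA, pA, ← prod_sdiff hTA]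
    have h2 : uu * pA φ T = pA φ B := by rw [huu, pA, pA, pA, ← prod_sdiff hTB]
    calc uu * pA φ A = (uu * vv) * pA φ T := by rw [mul_assoc, h1]
    _ = vv * pA φ B := by rw [mul_comm uu vv, mul_assoc, h2]
  set v : Iota m → K := Sum.elim (fun l : Fin m => uu.coeff l) (fun l : Fin m => - vv.coeff l)
    with hv
  have hdu : uu.natDegree < m := by rw [pA_natDegree, hBT]; omega
  have hdv : vv.natDegree < m := by rw [pA_natDegree, hAT]; omega
  have huP : uP m v = uu := by
    rw [uP]; exact (poly_eq_sum m uu hdu).symm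
  have hwP : wP m v = - vv := by
    rw [wP]
    have : ∀ l : Fin m, v (Sum.inr l) = (-vv).coeff l := by intro l; simp [hv]
    simp only [this]
    exact (poly_eq_sum m (-vv) (by simpa using hdv)).symm
  have hvM : Matrix.vecMul v (Mmat φ m t' A B) = 0 := by
    funext c
    rw [vecMul_Mmat, huP, hwP]
    rw [show uu * pA φ A + -vv * pA φ B = 0 by rw [key]; ring]
    simp
  have hv0 : v ≠ 0 := by
    intro h
    have h1 : v (Sum.inl ⟨m - 1, by omega⟩) = 1 := by
      have : uu.coeff (m-1) = 1 := by
        have := (pA_monic φ (B \ T)).coeff_natDegree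
        rwa [pA_natDegree, hBT] at this
      simpa [hv] using this
    rw [h] at h1
    simp at h1
  exact Matrix.exists_vecMul_eq_zero_iff.mp ⟨v, hv0, hvM⟩

lemma prod_linear_coprime (s u : Finset ℕ) (hsu : Disjoint s u) :
    IsCoprime (∏ x ∈ s, (X - C (x : ℚ))) (∏ x ∈ u, (X - C (x : ℚ))) := by
  apply IsCoprime.prod_left
  intro i hi
  apply IsCoprime.prod_right
  intro j hj
  apply Polynomial.isCoprime_X_sub_C_of_isUnit_sub
  have hne : (i : ℚ) ≠ (j : ℚ) := by
    have : i ≠ j := fun h => (Finset.disjoint_left.mp hsu hi (h ▸ hj))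
    exact_mod_cast this
  exact (sub_ne_zero_of_ne hne).isUnit

lemma det_Mmat_special_ne_zero (m t' k : ℕ) (hm : 2 ≤ m) (hk : k = t' + m)
    (A B : Finset ℕ) (hA : A.card = k) (hB : B.card = k) (hdiag : (A ∩ B).card ≤ t') :
    ∃ φ : ℕ → ℚ, (Mmat φ m t' A B).det ≠ 0 := by
  classical
  set D := A ∩ B with hD
  set cc := D.card with hcc
  have hABcard : cc + (A \ B).card = k := by
    have h0 := Finset.card_inter_add_card_sdiff A B
    simp only [hcc, hD]; omega
  have hBAcard : cc + (B \ A).card = k := by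
    have h0 := Finset.card_inter_add_card_sdiff B A
    rw [Finset.inter_comm B A] at h0
    simp only [hcc, hD]; omega
  obtain ⟨X', hX'sub, hX'card⟩ :=
    Finset.exists_subset_card_eq (s := A \ B) (n := t' - cc) (by omega)
  obtain ⟨Y', hY'sub, hY'card⟩ :=
    Finset.exists_subset_card_eq (s := B \ A) (n := t' - cc) (by omega)
  have eqv : (Y' : Finset ℕ) ≃ (X' : Finset ℕ) := by
    apply Finset.equivOfCardEq; rw [hX'card, hY'card]
  -- the special evaluation point
  set ψ : ℕ → ℚ := fun x => if hx : x ∈ Y' then ((eqv ⟨x, hx⟩ : ℕ) : ℚ) else (x : ℚ) with hψ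
  refine ⟨ψ, ?_⟩
  have hYA : ∀ x ∈ A, x ∉ Y' := by
    intro x hx hxY; exact (Finset.mem_sdiff.mp (hY'sub hxY)).2 hx
  have hX'A : X' ⊆ A := fun x hx => (Finset.mem_sdiff.mp (hX'sub hx)).1
  have hDX'disj : Disjoint D X' := by
    rw [Finset.disjoint_left]
    intro x hx hx'
    exact (Finset.mem_sdiff.mp (hX'sub hx')).2 (Finset.mem_inter.mp hx).2
  set G : Finset ℕ := D ∪ X' with hG
  have hGcard : G.card = t' := by
    rw [hG, Finset.card_union_of_disjoint hDX'disj, hX'card]; omega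
  have hGA : G ⊆ A := Finset.union_subset Finset.inter_subset_left hX'A
  set g : ℚ[X] := ∏ x ∈ G, (X - C (x : ℚ)) with hg
  set P' : ℚ[X] := ∏ x ∈ A \ G, (X - C (x : ℚ)) with hP'
  set E : Finset ℕ := D ∪ Y' with hE
  have hDY'disj : Disjoint D Y' := by
    rw [Finset.disjoint_left]
    intro x hx hxY
    exact hYA x (Finset.mem_inter.mp hx).1 hxY
  have hEB : E ⊆ B :=
    Finset.union_subset Finset.inter_subset_right (fun x hx => (Finset.mem_sdiff.mp (hY'sub hx)).1)
  have hEcard : E.card = t' := by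
    rw [hE, Finset.card_union_of_disjoint hDY'disj, hY'card]; omega
  set Q' : ℚ[X] := ∏ x ∈ B \ E, (X - C (x : ℚ)) with hQ'
  -- factor pA ψ A
  have hfacA : pA ψ A = g * P' := by
    have h1 : pA ψ A = ∏ x ∈ A, (X - C (x : ℚ)) := by
      apply Finset.prod_congr rfl
      intro x hx
      rw [hψ]; simp only [dif_neg (hYA x hx)]
    rw [h1, ← Finset.prod_sdiff hGA, hg, hP', mul_comm]
  -- factor pA ψ B
  have hfacB : pA ψ B = g * Q' := by
    have h1 : pA ψ B = (∏ x ∈ E, (X - C (ψ x))) * Q' := by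
      have h2 : Q' = ∏ x ∈ B \ E, (X - C (ψ x)) := by
        apply Finset.prod_congr rfl
        intro x hx
        have hxB := (Finset.mem_sdiff.mp hx).1
        have hxE := (Finset.mem_sdiff.mp hx).2
        have : x ∉ Y' := fun h => hxE (Finset.mem_union_right _ h)
        rw [hψ]; simp only [dif_neg this]
      rw [h2, pA, mul_comm, ← Finset.prod_sdiff hEB]
    have h3 : ∏ x ∈ E, (X - C (ψ x)) = g := by
      rw [hψ, hE, Finset.prod_union hDY'disj, hg, hG, Finset.prod_union hDX'disj]
      congr 1
      · apply Finset.prod_congr rfl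
        intro x hx
        have : x ∉ Y' := Finset.disjoint_left.mp hDY'disj hx
        simp only [dif_neg this]
      · -- reindex Y' to X' along eqv
        calc ∏ x ∈ Y', (X - C (if hx : x ∈ Y' then ((eqv ⟨x, hx⟩ : ℕ) : ℚ) else (x:ℚ)))
            = ∏ y : {x // x ∈ Y'}, (X - C (if hx : (y:ℕ) ∈ Y'
                then ((eqv ⟨(y:ℕ), hx⟩ : ℕ) : ℚ) else ((y:ℕ):ℚ))) :=
              (Finset.prod_coe_sort Y' (fun i => (X - C (if hx : i ∈ Y'
                then ((eqv ⟨i, hx⟩ : ℕ) : ℚ) else ((i:ℕ):ℚ))))).symm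
          _ = ∏ y : {x // x ∈ Y'}, (X - C ((eqv y : ℕ) : ℚ)) := by
              apply Finset.prod_congr rfl
              rintro ⟨y, hy⟩ _
              rw [dif_pos hy]
          _ = ∏ x : {x // x ∈ X'}, (X - C ((x : ℕ) : ℚ)) :=
              Equiv.prod_comp eqv (fun x => (X - C ((x:ℕ):ℚ)))
          _ = ∏ x ∈ X', (X - C ((x:ℕ):ℚ)) := Finset.prod_coe_sort X' (fun i => (X - C ((i:ℕ):ℚ)))
    rw [h1, h3]
  -- degrees and coprimality
  have hgmonic : g.Monic := pA_monic (fun x => (x:ℚ)) G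
  have hgdeg : g.natDegree = t' := by
    have := pA_natDegree (fun x => (x:ℚ)) G
    rw [pA] at this; rw [hg, this, hGcard]
  have hQmonic : Q'.Monic := pA_monic (fun x => (x:ℚ)) (B \ E)
  have hQdeg : Q'.natDegree = m := by
    have := pA_natDegree (fun x => (x:ℚ)) (B \ E)
    rw [pA] at this
    rw [hQ', this, Finset.card_sdiff_of_subset hEB, hB, hEcard]; omega
  have hPQcop : IsCoprime Q' P' := by
    apply prod_linear_coprime
    rw [Finset.disjoint_left]
    intro x hx hx'
    have hxB := (Finset.mem_sdiff.mp hx).1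
    have hxE := (Finset.mem_sdiff.mp hx).2
    have hxA := (Finset.mem_sdiff.mp hx').1
    have hxG := (Finset.mem_sdiff.mp hx').2
    exact hxE (Finset.mem_union_left _ (Finset.mem_inter.mpr ⟨hxA, hxB⟩))
  -- main kernel argument
  intro hdet0
  obtain ⟨v, hv0, hvM⟩ := Matrix.exists_vecMul_eq_zero_iff.mpr hdet0
  set u := uP m v with hu
  set w := wP m v with hw
  set W₀ : ℚ[X] := u * pA ψ A + w * pA ψ B with hW
  have hcoeff : ∀ c : Iota m, W₀.coeff (t' + idx m c) = 0 := by
    intro c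
    rw [← vecMul_Mmat ψ m t' A B v c, hvM, Pi.zero_apply]
  have hudeg : u.natDegree < m := sum_natDegree_lt m _ (by omega)
  have hwdeg : w.natDegree < m := sum_natDegree_lt m _ (by omega)
  have hAdeg : (pA ψ A).natDegree = k := by rw [pA_natDegree, hA]
  have hBdeg : (pA ψ B).natDegree = k := by rw [pA_natDegree, hB]
  have hvan : ∀ nn, t' ≤ nn → W₀.coeff nn = 0 := by
    intro nn hnn
    by_cases hsm : nn < t' + 2 * m
    · set j := nn - t' with hj
      by_cases hjm : j < m
      · have := hcoeff (Sum.inl ⟨j, hjm⟩)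
        rw [show t' + idx m (Sum.inl ⟨j, hjm⟩) = nn by simp [idx]; omega] at this
        exact this
      · have := hcoeff (Sum.inr ⟨j - m, by omega⟩)
        rw [show t' + idx m (Sum.inr ⟨j - m, by omega⟩) = nn by simp [idx]; omega] at this
        exact this
    · apply coeff_eq_zero_of_natDegree_lt
      have h1 : W₀.natDegree ≤ max (u * pA ψ A).natDegree (w * pA ψ B).natDegree :=
        natDegree_add_le _ _
      have h2 : (u * pA ψ A).natDegree ≤ m - 1 + k :=
        le_trans (natDegree_mul_le) (by omega)
      have h3 : (w * pA ψ B).natDegree ≤ m - 1 + k :=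
        le_trans (natDegree_mul_le) (by omega)
      omega
  have hW0 : W₀ = 0 := by
    by_contra h0
    have hdvd : g ∣ W₀ := by
      apply dvd_add
      · exact Dvd.dvd.mul_left ⟨P', hfacA⟩ u
      · exact Dvd.dvd.mul_left ⟨Q', hfacB⟩ w
    have hle : g.natDegree ≤ W₀.natDegree := Polynomial.natDegree_le_of_dvd hdvd h0
    have hlc : W₀.coeff W₀.natDegree = 0 := hvan _ (by omega)
    exact h0 (leadingCoeff_eq_zero.mp hlc)
  have hcancel : u * P' = (-w) * Q' := by
    apply mul_left_cancel₀ hgmonic.ne_zero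
    have h4 : u * (g * P') + w * (g * Q') = 0 := by rw [← hfacA, ← hfacB]; exact hW0
    linear_combination h4
  have hQu : Q' ∣ u := hPQcop.dvd_of_dvd_mul_right ⟨-w, by rw [hcancel]; ring⟩
  have hu0 : u = 0 := by
    by_contra hu0
    have := Polynomial.natDegree_le_of_dvd hQu hu0
    omega
  have hw0 : w = 0 := by
    have h5 : w * pA ψ B = 0 := by
      have := hW0
      rw [hW, hu0, zero_mul, zero_add] at this
      exact this
    rcases mul_eq_zero.mp h5 with h | h
    · exact h
    · exact absurd h (pA_monic ψ B).ne_zero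
  apply hv0
  funext r
  rcases r with l | l
  · have := sum_coeff_eq m (fun l => v (Sum.inl l)) l
    rw [show (∑ l : Fin m, C (v (Sum.inl l)) * X ^ (l:ℕ)) = u from rfl, hu0] at this
    simpa using this.symm
  · have := sum_coeff_eq m (fun l => v (Sum.inr l)) l
    rw [show (∑ l : Fin m, C (v (Sum.inr l)) * X ^ (l:ℕ)) = w from rfl, hw0] at this
    simpa using this.symm

section Alt
variable {K : Type} [Field K] {m : ℕ}

lemma elim_update (x W : Fin m → (Iota m → K)) (l : Fin m) (y : Iota m → K) :
    Sum.elim (Function.update x l y) W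
      = Function.update (Sum.elim x W) (Sum.inl l) y := by
  funext r
  rcases r with a | a
  · simp [Function.update_apply, Sum.inl.injEq]
  · simp [Function.update_apply]

lemma of_elim_update (x W : Fin m → (Iota m → K)) (l : Fin m) (y : Iota m → K) :
    Matrix.of (Sum.elim (Function.update x l y) W)
      = (Matrix.of (Sum.elim x W)).updateRow (Sum.inl l) y := by
  rw [Matrix.updateRow]
  exact congrArg Matrix.of (elim_update x W l y)

/-- determinant of the matrix with first block of rows variable, second fixed,
as an alternating map in the first block. -/
def altDet (W : Fin m → (Iota m → K)) : (Iota m → K) [⋀^(Fin m)]→ₗ[K] K where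
  toFun x := (Matrix.of (Sum.elim x W)).det
  map_update_add' := @fun dec x l y₁ y₂ => by
    rw [Subsingleton.elim dec (by clear dec; infer_instance)]; clear dec
    show (Matrix.of (Sum.elim (Function.update x l (y₁ + y₂)) W)).det
      = (Matrix.of (Sum.elim (Function.update x l y₁) W)).det
        + (Matrix.of (Sum.elim (Function.update x l y₂) W)).det
    rw [of_elim_update, of_elim_update, of_elim_update]
    exact Matrix.det_updateRow_add (Matrix.of (Sum.elim x W)) (Sum.inl l) y₁ y₂
  map_update_smul' := @fun dec x l c y => by
    rw [Subsingleton.elim dec (by clear dec; infer_instance)]; clear dec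
    show (Matrix.of (Sum.elim (Function.update x l (c • y)) W)).det
      = c • (Matrix.of (Sum.elim (Function.update x l y) W)).det
    rw [of_elim_update, of_elim_update]
    exact Matrix.det_updateRow_smul (Matrix.of (Sum.elim x W)) (Sum.inl l) c y
  map_eq_zero_of_eq' x i j hx hij := by
    refine Matrix.det_zero_of_row_eq (i := Sum.inl i) (j := Sum.inl j) (by simp [hij]) ?_
    show Sum.elim x W (Sum.inl i) = Sum.elim x W (Sum.inl j)
    simp [hx]

lemma altDet_apply (W x : Fin m → (Iota m → K)) :
    altDet W x = (Matrix.of (Sum.elim x W)).det := rfl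

/-- evaluation of an alternating map at tuples of basis vectors indexed by an m-subset -/
noncomputable def evTuple (S : {S : Finset (Iota m) // S.card = m}) : Fin m → (Iota m → K) :=
  fun l => Pi.basisFun K (Iota m)
    (((Fintype.equivFinOfCardEq (by rw [Fintype.card_coe, S.2] : Fintype.card S.1 = m)).symm l : S.1) : Iota m)

noncomputable def evMap : ((Iota m → K) [⋀^(Fin m)]→ₗ[K] K) →ₗ[K]
    ({S : Finset (Iota m) // S.card = m} → K) where
  toFun f := fun S => f (evTuple S)
  map_add' f g := by funext S; simp
  map_smul' c f := by funext S; simp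

lemma evMap_injective : Function.Injective (evMap (K := K) (m := m)) := by
  intro f g hfg
  have key : ∀ h : (Iota m → K) [⋀^(Fin m)]→ₗ[K] K,
      (∀ S, h (evTuple S) = 0) → h = 0 := by
    intro h h0
    apply Module.Basis.ext_alternating (Pi.basisFun K (Iota m))
    intro v hv
    have hcard : (Finset.image v Finset.univ).card = m := by
      rw [Finset.card_image_of_injective _ hv, Finset.card_univ, Fintype.card_fin]
    set S : {S : Finset (Iota m) // S.card = m} := ⟨Finset.image v Finset.univ, hcard⟩ with hS
    set w := (Fintype.equivFinOfCardEq
      (by rw [Fintype.card_coe, S.2] : Fintype.card S.1 = m)).symm with hw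
    have hmem : ∀ i, v i ∈ S.1 := fun i => Finset.mem_image_of_mem v (Finset.mem_univ i)
    set σfun : Fin m → Fin m := fun i => w.symm ⟨v i, hmem i⟩ with hσ
    have hσinj : Function.Injective σfun := by
      intro a b hab
      apply hv
      have := congrArg (fun z => ((w z : S.1) : Iota m)) hab
      simpa [hσ] using this
    set σ : Equiv.Perm (Fin m) := Equiv.ofBijective σfun
      (Finite.injective_iff_bijective.mp hσinj) with hσdef
    have hcomp : (fun i => Pi.basisFun K (Iota m) (v i)) = (evTuple S) ∘ σ := by
      funext i
      have h1 : (evTuple S) (σ i) = Pi.basisFun K (Iota m) ((w (σfun i) : S.1) : Iota m) := rfl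
      have h2 : w (σfun i) = ⟨v i, hmem i⟩ := by rw [hσ]; simp
      rw [Function.comp_apply, h1, h2]
    rw [AlternatingMap.zero_apply, hcomp, show (evTuple S) ∘ σ = (evTuple S) ∘ ⇑σ from rfl,
      AlternatingMap.map_perm, h0 S, smul_zero]
  have h0 : ∀ S, (f - g) (evTuple S) = 0 := by
    intro S
    have := congrFun hfg S
    simp only [evMap, LinearMap.coe_mk, AddHom.coe_mk] at this
    simp [this]
  have := key (f - g) h0
  exact sub_eq_zero.mp this

/-- point evaluation of alternating maps, as a linear map -/
def evalAt (x : Fin m → (Iota m → K)) :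
    ((Iota m → K) [⋀^(Fin m)]→ₗ[K] K) →ₗ[K] K where
  toFun f := f x
  map_add' f g := by simp
  map_smul' c f := by simp

set_option maxHeartbeats 1000000 in
lemma card_le_choose_of_triangular (r : ℕ) (f : Fin r → ((Iota m → K) [⋀^(Fin m)]→ₗ[K] K))
    (x : Fin r → (Fin m → (Iota m → K)))
    (hdiag : ∀ i, f i (x i) ≠ 0)
    (hcross : ∀ i j : Fin r, i < j → f i (x j) = 0) :
    r ≤ Nat.choose (m + m) m := by
  classical
  have hind : LinearIndependent K f := by
    rw [linearIndependent_iff']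
    intro s c hsum i₀ hi₀
    by_contra hc0
    have hne : (s.filter (fun i => c i ≠ 0)).Nonempty := ⟨i₀, Finset.mem_filter.mpr ⟨hi₀, hc0⟩⟩
    set i₁ := (s.filter (fun i => c i ≠ 0)).max' hne with hi₁
    have hi₁mem := (s.filter (fun i => c i ≠ 0)).max'_mem hne
    have hi₁s : i₁ ∈ s := (Finset.mem_filter.mp hi₁mem).1
    have hi₁c : c i₁ ≠ 0 := (Finset.mem_filter.mp hi₁mem).2
    have h0 : (evalAt (x i₁)) (∑ i ∈ s, c i • f i) = 0 := by rw [hsum]; simp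
    rw [map_sum] at h0
    simp only [map_smul, evalAt, LinearMap.coe_mk, AddHom.coe_mk, smul_eq_mul] at h0
    rw [Finset.sum_eq_single i₁] at h0
    · rcases mul_eq_zero.mp h0 with h | h
      · exact hi₁c h
      · exact absurd h (hdiag i₁)
    · intro b hb hbne
      by_cases hcb : c b = 0
      · rw [hcb, zero_mul]
      · have hble : b ≤ i₁ := Finset.le_max' _ b (Finset.mem_filter.mpr ⟨hb, hcb⟩)
        have hblt : b < i₁ := lt_of_le_of_ne hble hbne
        rw [hcross b i₁ hblt, mul_zero]
    · intro h; exact absurd hi₁s h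
  have hind2 : LinearIndependent K (⇑(evMap (K := K) (m := m)) ∘ f) :=
    hind.map' evMap (LinearMap.ker_eq_bot.mpr evMap_injective)
  have hcard := hind2.fintype_card_le_finrank
  rw [Fintype.card_fin] at hcard
  rw [Module.finrank_fintype_fun_eq_card] at hcard
  rwa [Fintype.card_finset_len, Fintype.card_sum, Fintype.card_fin] at hcard

end Alt

lemma Mmat_map {S S' : Type} [CommRing S] [CommRing S'] (h : S →+* S') (φ : ℕ → S)
    (m t' : ℕ) (A B : Finset ℕ) :
    (Mmat φ m t' A B).map h = Mmat (fun x => h (φ x)) m t' A B := by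
  ext r c
  simp only [Matrix.map_apply, Mmat, Matrix.of_apply]
  rw [← Polynomial.coeff_map]
  congr 1
  rcases r with l | l <;>
    simp [rowPoly, pA, Polynomial.map_mul, Polynomial.map_pow, Polynomial.map_prod,
      Polynomial.map_sub, Polynomial.map_X, Polynomial.map_C]

theorem bollobas_skew (m t' k : ℕ) (hm : 2 ≤ m) (hk : k = t' + m) (r : ℕ)
    (A B : Fin r → Finset ℕ) (hA : ∀ i, (A i).card = k) (hB : ∀ i, (B i).card = k)
    (hdiag : ∀ i, ((A i) ∩ (B i)).card ≤ t')
    (hskew : ∀ i j : Fin r, i < j → t' + 1 ≤ ((A j) ∩ (B i)).card) :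
    r ≤ Nat.choose (m + m) m := by
  classical
  set R := MvPolynomial ℕ ℚ with hR
  set K := FractionRing R with hKdef
  set φR : ℕ → R := fun x => MvPolynomial.X x with hφR
  set φK : ℕ → K := fun x => algebraMap R K (φR x) with hφK
  set rows : Finset ℕ → (Fin m → (Iota m → K)) :=
    fun A0 => fun l c => (X ^ (l:ℕ) * pA φK A0).coeff (t' + idx m c) with hrows
  have hMrows : ∀ A0 B0 : Finset ℕ,
      Matrix.of (Sum.elim (rows A0) (rows B0)) = Mmat φK m t' A0 B0 := by
    intro A0 B0
    ext rr c
    rcases rr with l | l <;> rfl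
  apply card_le_choose_of_triangular (K := K) r
    (fun i => altDet (rows (B i))) (fun j => rows (A j))
  · -- diagonal nonzero
    intro i
    rw [altDet_apply, hMrows]
    obtain ⟨φq, hφq⟩ := det_Mmat_special_ne_zero m t' k hm hk (A i) (B i)
      (hA i) (hB i) (hdiag i)
    have hKfact : (Mmat φK m t' (A i) (B i)).det
        = algebraMap R K ((Mmat φR m t' (A i) (B i)).det) := by
      rw [RingHom.map_det, RingHom.mapMatrix_apply, Mmat_map]
    rw [hKfact]
    have hRdet : (Mmat φR m t' (A i) (B i)).det ≠ 0 := by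
      intro h0
      apply hφq
      have he : (Mmat φq m t' (A i) (B i)).det
          = (MvPolynomial.eval φq) ((Mmat φR m t' (A i) (B i)).det) := by
        rw [RingHom.map_det, RingHom.mapMatrix_apply, Mmat_map]
        congr 1
        funext x
        simp [hφR]
      rw [he, h0, map_zero]
    simpa using fun hcontra => hRdet ((IsFractionRing.to_map_eq_zero_iff (K := K)).mp hcontra)
  · -- cross zero
    intro i j hij
    rw [altDet_apply, hMrows]
    exact det_Mmat_eq_zero φK m t' k hm hk (A j) (B i) (hA j) (hB i) (hskew i j hij)

end
end BollobasAux

open Finset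

theorem stmt13 (n k t s : ℕ) (hn : 0 < n) (hk : 0 < k) (ht : 0 < t) (hs : 0 < s)
    (hkt : t + 1 ≤ k) (hnge : 2 * k ≤ n)
    (𝓕 : Finset (Finset ℕ)) (h𝓕 : 𝓕 ⊆ (Icc 1 n).powersetCard k)
    (hai : almostIntersecting s t 𝓕)
    (hτ : ∀ T ⊆ Icc 1 n, isTCover t T 𝓕 → k + 1 ≤ T.card) :
    𝓕.card ≤ s * Nat.choose (2 * k - 2 * t + 2) (k - t + 1) := by
  classical
  -- every member of the family has a "conflict"
  have hconf : ∀ F ∈ 𝓕, ∃ G ∈ 𝓕, (F ∩ G).card < t := by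
    intro F hF
    have hmem := Finset.mem_powersetCard.mp (h𝓕 hF)
    by_contra hcon
    push_neg at hcon
    have hcover : isTCover t F 𝓕 := fun G hG => hcon G hG
    have := hτ F hmem.1 hcover
    omega
  set Good : ∀ q : ℕ, (Fin q → Finset ℕ) → (Fin q → Finset ℕ) → Prop :=
    fun q A B => (∀ i, A i ∈ 𝓕 ∧ B i ∈ 𝓕 ∧ (A i ∩ B i).card < t) ∧
      (∀ i j, i < j → t ≤ (A j ∩ B i).card) with hGood
  set Covers : ∀ q : ℕ, (Fin q → Finset ℕ) → Prop :=
    fun q B => ∀ F ∈ 𝓕, ∃ i, (F ∩ B i).card < t with hCovers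
  -- a good sequence has length at most the size of the family
  have hlen : ∀ q A B, Good q A B → q ≤ 𝓕.card := by
    intro q A B hg
    have hinj : Set.InjOn A (Finset.univ : Finset (Fin q)) := by
      intro i hi j hj hij
      by_contra hne
      rcases lt_or_gt_of_ne (show i ≠ j from hne) with h | h
      · have h1 := hg.2 i j h
        rw [← hij] at h1
        have h2 := (hg.1 i).2.2
        omega
      · have h1 := hg.2 j i h
        rw [hij] at h1
        have h2 := (hg.1 j).2.2
        omega
    have := Finset.card_le_card_of_injOn A (fun i _ => (hg.1 i).1) hinj
    simpa using this
  -- extension of non-covering good sequences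
  have hext : ∀ q A B, Good q A B → ¬ Covers q B →
      ∃ A' B', Good (q+1) A' B' := by
    intro q A B hg hnc
    have hnc' : ∃ F ∈ 𝓕, ∀ i, t ≤ (F ∩ B i).card := by
      by_contra hcon
      push_neg at hcon
      apply hnc
      intro F hF
      obtain ⟨i, hi⟩ := hcon F hF
      exact ⟨i, by omega⟩
    obtain ⟨F, hF, hFall⟩ := hnc'
    obtain ⟨G, hG, hFG⟩ := hconf F hF
    refine ⟨Fin.snoc A F, Fin.snoc B G, ?_, ?_⟩
    · intro i
      refine Fin.lastCases ?_ ?_ i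
      · simpa [Fin.snoc_last] using ⟨hF, hG, hFG⟩
      · intro i'
        simpa [Fin.snoc_castSucc] using hg.1 i'
    · intro i j hij
      revert hij
      refine Fin.lastCases ?_ ?_ j
      · -- j = last
        refine Fin.lastCases ?_ ?_ i
        · intro hij; exact absurd hij (lt_irrefl _)
        · intro i' hij
          rw [Fin.snoc_last, Fin.snoc_castSucc]
          exact hFall i'
      · intro j'
        refine Fin.lastCases ?_ ?_ i
        · intro hij
          have := j'.isLt
          simp [Fin.lt_def] at hij
          omega
        · intro i' hij
          rw [Fin.snoc_castSucc, Fin.snoc_castSucc]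
          exact hg.2 i' j' (by rwa [Fin.castSucc_lt_castSucc_iff] at hij)
  -- there exists a good covering sequence
  have hmain : ∀ fuel q A B, Good q A B → 𝓕.card + 1 - q ≤ fuel →
      ∃ q' A' B', Good q' A' B' ∧ Covers q' B' := by
    intro fuel
    induction fuel with
    | zero =>
      intro q A B hg hfuel
      have := hlen q A B hg
      omega
    | succ fuel ih =>
      intro q A B hg hfuel
      by_cases hc : Covers q B
      · exact ⟨q, A, B, hg, hc⟩
      · obtain ⟨A', B', hg'⟩ := hext q A B hg hc
        have hq1 := hlen (q+1) A' B' hg'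
        exact ih (q+1) A' B' hg' (by omega)
  obtain ⟨q, A, B, hg, hc⟩ := hmain (𝓕.card + 1) 0 Fin.elim0 Fin.elim0
    ⟨fun i => i.elim0, fun i => i.elim0⟩ (by omega)
  -- counting: the family is covered by the conflict neighbourhoods of the Bᵢ
  have hcount : 𝓕.card ≤ s * q := by
    have hsub : 𝓕 ⊆ Finset.biUnion Finset.univ
        (fun i : Fin q => 𝓕.filter (fun F => (F ∩ B i).card < t)) := by
      intro F hF
      obtain ⟨i, hi⟩ := hc F hF
      exact Finset.mem_biUnion.mpr ⟨i, Finset.mem_univ i, Finset.mem_filter.mpr ⟨hF, hi⟩⟩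
    calc 𝓕.card ≤ _ := Finset.card_le_card hsub
    _ ≤ ∑ i : Fin q, (𝓕.filter (fun F => (F ∩ B i).card < t)).card :=
        Finset.card_biUnion_le
    _ ≤ ∑ _i : Fin q, s := by
        apply Finset.sum_le_sum
        intro i _
        exact hai (B i) (hg.1 i).2.1
    _ = s * q := by simp [mul_comm]
  -- the Bollobás bound on q
  have hq : q ≤ Nat.choose (2 * k - 2 * t + 2) (k - t + 1) := by
    have hb := bollobas_skew (k - t + 1) (t - 1) k (by omega) (by omega) q A B
      (fun i => (Finset.mem_powersetCard.mp (h𝓕 (hg.1 i).1)).2)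
      (fun i => (Finset.mem_powersetCard.mp (h𝓕 (hg.1 i).2.1)).2)
      (fun i => by have := (hg.1 i).2.2; omega)
      (fun i j hij => by have := hg.2 i j hij; omega)
    have harith : 2 * k - 2 * t + 2 = (k - t + 1) + (k - t + 1) := by omega
    rw [harith]
    exact hb
  calc 𝓕.card ≤ s * q := hcount
  _ ≤ s * Nat.choose (2 * k - 2 * t + 2) (k - t + 1) := Nat.mul_le_mul_left s hq
end

section
/- Let n, k, t, s be positive integers with k ≥ t+2 and n ≥ 2k+s. Suppose ℱ ⊆ binom([n], k) is a maximal s-almost t-intersecting family (i.e., for every C ∈ binom([n], k) \ ℱ, the family ℱ ∪ {C} is not s-almost t-intersecting) with t-covering number τ_t(ℱ) ≤ k. Let 𝒯 be the set of all t-covers of ℱ of size τ_t(ℱ). Then 𝒯 is t-intersecting, i.e., |T₁ ∩ T₂| ≥ t for all T₁, T₂ ∈ 𝒯. -/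
open Finset

/-- Any `k`-subset of `[n]` containing a `t`-cover of a maximal family is in the family. -/
lemma coverExtend (n k t s : ℕ) (htk : t ≤ k)
    (𝓕 : Finset (Finset ℕ))
    (hai : almostIntersecting s t 𝓕)
    (hmaximal : ∀ C ∈ (Icc 1 n).powersetCard k, C ∉ 𝓕 →
      ¬ almostIntersecting s t (insert C 𝓕))
    (T : Finset ℕ) (hTc : isTCover t T 𝓕)
    (C : Finset ℕ) (hTC : T ⊆ C) (hCn : C ⊆ Icc 1 n) (hCk : C.card = k) :
    C ∈ 𝓕 := by
  by_contra hC
  refine hmaximal C (mem_powersetCard.mpr ⟨hCn, hCk⟩) hC ?_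
  have key : ∀ F' ∈ 𝓕, t ≤ (C ∩ F').card := fun F' hF' =>
    le_trans (hTc F' hF') (card_le_card (inter_subset_inter hTC (subset_refl _)))
  intro F hF
  rcases mem_insert.mp hF with rfl | hF𝓕
  · have hempty : (insert F 𝓕).filter (fun F' => (F' ∩ F).card < t) = ∅ := by
      rw [filter_eq_empty_iff]
      intro F' hF'
      rcases mem_insert.mp hF' with rfl | h
      · simp only [inter_self, hCk, not_lt]; exact htk
      · rw [inter_comm]; exact not_lt.mpr (key F' h)
    rw [hempty]
    simp
  · rw [filter_insert, if_neg (not_lt.mpr (key F hF𝓕))]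
    exact hai F hF𝓕

theorem stmt14 (n k t s τ : ℕ) (hn : 0 < n) (hk : 0 < k) (ht : 0 < t) (hs : 0 < s)
    (hkt : t + 2 ≤ k) (hnge : 2 * k + s ≤ n)
    (𝓕 : Finset (Finset ℕ)) (h𝓕 : 𝓕 ⊆ (Icc 1 n).powersetCard k)
    (hai : almostIntersecting s t 𝓕)
    (hmaximal : ∀ C ∈ (Icc 1 n).powersetCard k, C ∉ 𝓕 →
      ¬ almostIntersecting s t (insert C 𝓕))
    (hτmem : ∃ T ⊆ Icc 1 n, isTCover t T 𝓕 ∧ T.card = τ)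
    (hτmin : ∀ T ⊆ Icc 1 n, isTCover t T 𝓕 → τ ≤ T.card)
    (hτk : τ ≤ k) :
    ∀ T₁ ⊆ Icc 1 n, ∀ T₂ ⊆ Icc 1 n,
      isTCover t T₁ 𝓕 → isTCover t T₂ 𝓕 → T₁.card = τ → T₂.card = τ →
        t ≤ (T₁ ∩ T₂).card := by
  intro T₁ hT₁n T₂ hT₂n hc₁ hc₂ hcard₁ hcard₂
  by_contra hlt
  push_neg at hlt
  have htk : t ≤ k := by omega
  have hIcc : (Icc 1 n).card = n := by simp
  rcases eq_or_lt_of_le hτk with hτeq | hτlt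
  · -- τ = k : T₁ itself is a k-set containing T₁, so T₁ ∈ 𝓕
    have hT₁F : T₁ ∈ 𝓕 := coverExtend n k t s htk 𝓕 hai hmaximal T₁ hc₁ T₁
      (subset_refl _) hT₁n (by omega)
    have := hc₂ T₁ hT₁F
    rw [inter_comm] at this
    omega
  · -- τ < k
    -- build C₂ = T₂ ∪ Y, Y ⊆ [n] \ (T₁ ∪ T₂), |Y| = k - τ
    obtain ⟨Y, hYsub, hYcard⟩ : ∃ Y ⊆ (Icc 1 n) \ (T₁ ∪ T₂), Y.card = k - τ := by
      apply exists_subset_card_eq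
      have h1 : ((Icc 1 n) \ (T₁ ∪ T₂)).card = n - (T₁ ∪ T₂).card := by
        rw [card_sdiff_of_subset (union_subset hT₁n hT₂n), hIcc]
      have h2 : (T₁ ∪ T₂).card ≤ 2 * τ := by
        have := card_union_le T₁ T₂; omega
      omega
    have hYT₁ : Disjoint Y T₁ := by
      refine disjoint_left.mpr fun a ha haT => ?_
      have := hYsub ha; rw [mem_sdiff] at this
      exact this.2 (mem_union_left _ haT)
    have hYT₂ : Disjoint Y T₂ := by
      refine disjoint_left.mpr fun a ha haT => ?_
      have := hYsub ha; rw [mem_sdiff] at this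
      exact this.2 (mem_union_right _ haT)
    set C₂ := T₂ ∪ Y with hC₂def
    have hC₂n : C₂ ⊆ Icc 1 n := union_subset hT₂n (hYsub.trans (sdiff_subset))
    have hC₂card : C₂.card = k := by
      rw [card_union_of_disjoint hYT₂.symm]; omega
    have hC₂F : C₂ ∈ 𝓕 := coverExtend n k t s htk 𝓕 hai hmaximal T₂ hc₂ C₂
      subset_union_left hC₂n hC₂card
    -- pool P
    set P := (Icc 1 n) \ (T₁ ∪ C₂) with hPdef
    have hPcard : k - τ + s ≤ P.card := by
      have h1 : P.card = n - (T₁ ∪ C₂).card := by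
        rw [hPdef, card_sdiff_of_subset (union_subset hT₁n hC₂n), hIcc]
      have h2 : (T₁ ∪ C₂).card ≤ τ + k := by
        have := card_union_le T₁ C₂; omega
      omega
    obtain ⟨X₀, hX₀sub, hX₀card⟩ : ∃ X₀ ⊆ P, X₀.card = k - τ - 1 := by
      apply exists_subset_card_eq; omega
    have hX₀T₁ : Disjoint X₀ T₁ := by
      refine disjoint_left.mpr fun a ha haT => ?_
      have := hX₀sub ha; rw [hPdef, mem_sdiff] at this
      exact this.2 (mem_union_left _ haT)
    have hX₀C₂ : Disjoint X₀ C₂ := by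
      refine disjoint_left.mpr fun a ha haT => ?_
      have := hX₀sub ha; rw [hPdef, mem_sdiff] at this
      exact this.2 (mem_union_right _ haT)
    set B := T₁ ∪ X₀ with hBdef
    have hBcard : B.card = k - 1 := by
      rw [hBdef, card_union_of_disjoint hX₀T₁.symm]; omega
    -- the s+1 sets
    set Q := P \ X₀ with hQdef
    have hQcard : s + 1 ≤ Q.card := by
      rw [hQdef, card_sdiff_of_subset hX₀sub]; omega
    have hmemB : ∀ x ∈ Q, x ∉ B := by
      intro x hx hxB
      rw [hQdef, mem_sdiff] at hx
      rcases mem_union.mp hxB with h | h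
      · have := hx.1; rw [hPdef, mem_sdiff] at this
        exact this.2 (mem_union_left _ h)
      · exact hx.2 h
    have hsubfilter : Q.image (fun x => insert x B) ⊆
        𝓕.filter (fun F' => (F' ∩ C₂).card < t) := by
      intro C hC
      obtain ⟨x, hx, rfl⟩ := mem_image.mp hC
      have hxP : x ∈ P := (mem_sdiff.mp hx).1
      have hxn : x ∈ Icc 1 n := (mem_sdiff.mp hxP).1
      have hxC₂ : x ∉ C₂ := fun h => (mem_sdiff.mp hxP).2 (mem_union_right _ h)
      have hCk : (insert x B).card = k := by
        rw [card_insert_of_notMem (hmemB x hx)]; omega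
      have hCn : insert x B ⊆ Icc 1 n := by
        refine insert_subset hxn (union_subset hT₁n (hX₀sub.trans ?_))
        rw [hPdef]; exact sdiff_subset
      have hCF : insert x B ∈ 𝓕 := coverExtend n k t s htk 𝓕 hai hmaximal T₁ hc₁
        (insert x B) (subset_union_left.trans (subset_insert _ _)) hCn hCk
      rw [mem_filter]
      refine ⟨hCF, ?_⟩
      have hint : insert x B ∩ C₂ = T₁ ∩ T₂ := by
        rw [insert_inter_of_notMem hxC₂, hBdef, union_inter_distrib_right]
        rw [disjoint_iff_inter_eq_empty.mp hX₀C₂, union_empty, hC₂def, inter_union_distrib_left,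
          disjoint_iff_inter_eq_empty.mp hYT₁.symm, union_empty]
      rw [hint]; exact hlt
    have hinj : Set.InjOn (fun x => insert x B) Q := by
      intro x hx y hy hxy
      simp only at hxy
      by_contra hne
      have : x ∈ insert y B := by rw [← hxy]; exact mem_insert_self x B
      rcases mem_insert.mp this with h | h
      · exact hne h
      · exact hmemB x hx h
    have hcardim : s + 1 ≤ (Q.image (fun x => insert x B)).card := by
      rw [card_image_of_injOn hinj]; exact hQcard
    have := hai C₂ hC₂F
    have := card_le_card hsubfilter
    omega
end

section
/- Let n and t be positive integers with n ≥ t+2. Suppose 𝒯 ⊆ binom([n], t+1) is a t-intersecting family with |𝒯| ≥ 2. If there exist two t-covers A and B of 𝒯 (subsets of [n] with |A ∩ T| ≥ t and |B ∩ T| ≥ t for all T ∈ 𝒯) such that |A ∩ B| < t, then the common intersection ⋂_{T∈𝒯} T is a t-element subset of A or a t-element subset of B. -/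
open Finset

lemma aux15 (t : ℕ) (ht : 0 < t) (𝓣 : Finset (Finset ℕ)) (hne : 𝓣.Nonempty)
    (hcard : 2 ≤ 𝓣.card) (A B : Finset ℕ) (hABc : (A ∩ B).card = t - 1)
    (hsub : ∀ T ∈ 𝓣, A ∩ B ⊆ T ∧ T ⊆ A ∪ B ∧ (T \ A).card = 1 ∧ (T \ B).card = 1)
    (T₀ : Finset ℕ) (hT₀ : T₀ ∈ 𝓣) (hall : ∀ T ∈ 𝓣, T \ B = T₀ \ B) :
    (𝓣.inf' hne id).card = t ∧ 𝓣.inf' hne id ⊆ A := by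
  have decomp : ∀ T ∈ 𝓣, T = (A ∩ B) ∪ (T \ B) ∪ (T \ A) := by
    intro T hT
    obtain ⟨h1, h2, _, _⟩ := hsub T hT
    ext x
    simp only [mem_union, mem_inter, mem_sdiff]
    constructor
    · intro hx
      have hx2 : x ∈ A ∨ x ∈ B := by
        have := h2 hx; simpa [mem_union] using this
      by_cases hxA : x ∈ A <;> by_cases hxB : x ∈ B <;> tauto
    · rintro ((⟨hx1, hx2⟩ | ⟨hx, _⟩) | ⟨hx, _⟩)
      · exact h1 (mem_inter.mpr ⟨hx1, hx2⟩)
      · exact hx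
      · exact hx
  set S := (A ∩ B) ∪ (T₀ \ B) with hS
  have hSsubT : ∀ T ∈ 𝓣, S ⊆ T := by
    intro T hT
    obtain ⟨h1, _, _, _⟩ := hsub T hT
    rw [hS, ← hall T hT]
    exact union_subset h1 sdiff_subset
  have hSinf : S ⊆ 𝓣.inf' hne id := le_inf' _ _ hSsubT
  obtain ⟨T₁, hT₁, T₂, hT₂, hne12⟩ := one_lt_card.mp hcard
  have hinfS : 𝓣.inf' hne id ⊆ S := by
    intro x hx
    have hsub1 : 𝓣.inf' hne id ⊆ T₁ := inf'_le id hT₁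
    have hsub2 : 𝓣.inf' hne id ⊆ T₂ := inf'_le id hT₂
    by_contra hxS
    have hmem : ∀ T ∈ 𝓣, x ∈ T → x ∈ T \ A := by
      intro T hT hxT
      have := decomp T hT
      rw [this] at hxT
      rcases mem_union.mp hxT with h | h
      · rcases mem_union.mp h with h' | h'
        · exact absurd (mem_union_left _ h') hxS
        · rw [hall T hT] at h'
          exact absurd (mem_union_right _ h') hxS
      · exact h
    have hx1 : x ∈ T₁ \ A := hmem T₁ hT₁ (hsub1 hx)
    have hx2 : x ∈ T₂ \ A := hmem T₂ hT₂ (hsub2 hx)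
    obtain ⟨_, _, hc1, _⟩ := hsub T₁ hT₁
    obtain ⟨_, _, hc2, _⟩ := hsub T₂ hT₂
    obtain ⟨a1, ha1⟩ := card_eq_one.mp hc1
    obtain ⟨a2, ha2⟩ := card_eq_one.mp hc2
    rw [ha1, mem_singleton] at hx1
    rw [ha2, mem_singleton] at hx2
    have heqA : T₁ \ A = T₂ \ A := by rw [ha1, ha2, ← hx1, ← hx2]
    have : T₁ = T₂ := by
      rw [decomp T₁ hT₁, decomp T₂ hT₂, heqA, hall T₁ hT₁, hall T₂ hT₂]
    exact hne12 this
  have hSeq : 𝓣.inf' hne id = S := Subset.antisymm hinfS hSinf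
  have hdisj : Disjoint (A ∩ B) (T₀ \ B) := by
    rw [disjoint_left]
    intro a ha ha'
    exact (mem_sdiff.mp ha').2 (mem_inter.mp ha).2
  have hcardT0 : (T₀ \ B).card = 1 := (hsub T₀ hT₀).2.2.2
  have hScard : S.card = t := by
    rw [hS, card_union_of_disjoint hdisj, hABc, hcardT0]
    omega
  have hSA : S ⊆ A := by
    apply union_subset inter_subset_left
    intro x hx
    obtain ⟨_, h2, _, _⟩ := hsub T₀ hT₀
    rcases mem_union.mp (h2 (mem_sdiff.mp hx).1) with h | h
    · exact h
    · exact absurd h (mem_sdiff.mp hx).2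
  rw [hSeq]
  exact ⟨hScard, hSA⟩

theorem stmt15 (n t : ℕ) (hn : 0 < n) (ht : 0 < t) (hnge : t + 2 ≤ n)
    (𝓣 : Finset (Finset ℕ)) (h𝓣 : 𝓣 ⊆ (Icc 1 n).powersetCard (t + 1))
    (hint : tIntersecting t 𝓣) (hcard : 2 ≤ 𝓣.card) (hne : 𝓣.Nonempty)
    (A B : Finset ℕ) (hA : A ⊆ Icc 1 n) (hB : B ⊆ Icc 1 n)
    (hAcov : ∀ T ∈ 𝓣, t ≤ (A ∩ T).card) (hBcov : ∀ T ∈ 𝓣, t ≤ (B ∩ T).card)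
    (hAB : (A ∩ B).card < t) :
    (𝓣.inf' hne id).card = t ∧ (𝓣.inf' hne id ⊆ A ∨ 𝓣.inf' hne id ⊆ B) := by
  -- main structural facts about each member of 𝓣
  have key : ∀ T ∈ 𝓣, (A ∩ B).card = t - 1 ∧ A ∩ B ⊆ T ∧ T ⊆ A ∪ B ∧
      (T \ A).card = 1 ∧ (T \ B).card = 1 := by
    intro T hT
    have hTcard : T.card = t + 1 := (mem_powersetCard.mp (h𝓣 hT)).2
    have h1 : t ≤ (A ∩ T).card := hAcov T hT
    have h2 : t ≤ (B ∩ T).card := hBcov T hT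
    have hu : ((A ∩ T) ∪ (B ∩ T)).card + ((A ∩ T) ∩ (B ∩ T)).card
        = (A ∩ T).card + (B ∩ T).card := card_union_add_card_inter _ _
    have e1 : (A ∩ T) ∪ (B ∩ T) = (A ∪ B) ∩ T := (union_inter_distrib_right _ _ _).symm
    have e2 : (A ∩ T) ∩ (B ∩ T) = (A ∩ B) ∩ T := by
      ext x; simp only [mem_inter]; tauto
    rw [e1, e2] at hu
    have c1 : ((A ∪ B) ∩ T).card ≤ t + 1 :=
      hTcard ▸ card_le_card inter_subset_right
    have c2 : ((A ∩ B) ∩ T).card ≤ (A ∩ B).card := card_le_card inter_subset_left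
    -- sandwich
    have hABc : (A ∩ B).card = t - 1 := by omega
    have hABTc : ((A ∩ B) ∩ T).card = (A ∩ B).card := by omega
    have hABT : (A ∩ B) ∩ T = A ∩ B :=
      eq_of_subset_of_card_le inter_subset_left (le_of_eq hABTc.symm)
    have hABsub : A ∩ B ⊆ T := by
      intro x hx; rw [← hABT] at hx; exact (mem_inter.mp hx).2
    have hUT : ((A ∪ B) ∩ T).card = t + 1 := by omega
    have hTsub : T ⊆ A ∪ B := by
      have : (A ∪ B) ∩ T = T :=
        eq_of_subset_of_card_le inter_subset_right (by omega)
      intro x hx; rw [← this] at hx; exact (mem_inter.mp hx).1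
    have hATc : (A ∩ T).card = t := by omega
    have hBTc : (B ∩ T).card = t := by omega
    have hdA : (T \ A).card + (T ∩ A).card = T.card := card_sdiff_add_card_inter _ _
    have hdB : (T \ B).card + (T ∩ B).card = T.card := card_sdiff_add_card_inter _ _
    rw [inter_comm T A] at hdA
    rw [inter_comm T B] at hdB
    exact ⟨hABc, hABsub, hTsub, by omega, by omega⟩
  obtain ⟨T₀, hT₀⟩ := id hne
  have hABc : (A ∩ B).card = t - 1 := (key T₀ hT₀).1
  have hsub : ∀ T ∈ 𝓣, A ∩ B ⊆ T ∧ T ⊆ A ∪ B ∧ (T \ A).card = 1 ∧ (T \ B).card = 1 :=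
    fun T hT => (key T hT).2
  -- dichotomy
  have hdich : ∀ T₁ ∈ 𝓣, ∀ T₂ ∈ 𝓣, T₁ \ B = T₂ \ B ∨ T₁ \ A = T₂ \ A := by
    intro T₁ hT₁ T₂ hT₂
    have hint12 : t ≤ (T₁ ∩ T₂).card := hint T₁ hT₁ T₂ hT₂
    have hnsub : ¬ (T₁ ∩ T₂ ⊆ A ∩ B) := by
      intro h
      have := card_le_card h
      omega
    obtain ⟨x, hx, hxAB⟩ := not_subset.mp hnsub
    obtain ⟨hx1, hx2⟩ := mem_inter.mp hx
    obtain ⟨_, hT1sub, hc1A, hc1B⟩ := hsub T₁ hT₁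
    obtain ⟨_, _, hc2A, hc2B⟩ := hsub T₂ hT₂
    have hxAB' : x ∈ A ∪ B := hT1sub hx1
    by_cases hxA : x ∈ A
    · have hxB : x ∉ B := fun h => hxAB (mem_inter.mpr ⟨hxA, h⟩)
      left
      obtain ⟨a1, ha1⟩ := card_eq_one.mp hc1B
      obtain ⟨a2, ha2⟩ := card_eq_one.mp hc2B
      have e1 : x = a1 := by
        have : x ∈ T₁ \ B := mem_sdiff.mpr ⟨hx1, hxB⟩
        rw [ha1, mem_singleton] at this; exact this
      have e2 : x = a2 := by
        have : x ∈ T₂ \ B := mem_sdiff.mpr ⟨hx2, hxB⟩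
        rw [ha2, mem_singleton] at this; exact this
      rw [ha1, ha2, ← e1, ← e2]
    · have hxB : x ∈ B := by rcases mem_union.mp hxAB' with h | h; exact absurd h hxA; exact h
      right
      obtain ⟨a1, ha1⟩ := card_eq_one.mp hc1A
      obtain ⟨a2, ha2⟩ := card_eq_one.mp hc2A
      have e1 : x = a1 := by
        have : x ∈ T₁ \ A := mem_sdiff.mpr ⟨hx1, hxA⟩
        rw [ha1, mem_singleton] at this; exact this
      have e2 : x = a2 := by
        have : x ∈ T₂ \ A := mem_sdiff.mpr ⟨hx2, hxA⟩
        rw [ha2, mem_singleton] at this; exact this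
      rw [ha1, ha2, ← e1, ← e2]
  by_cases hcase : ∀ T ∈ 𝓣, T \ B = T₀ \ B
  · obtain ⟨h1, h2⟩ := aux15 t ht 𝓣 hne hcard A B hABc hsub T₀ hT₀ hcase
    exact ⟨h1, Or.inl h2⟩
  · push_neg at hcase
    obtain ⟨T₁, hT₁, hT₁ne⟩ := hcase
    have hT₁A : T₁ \ A = T₀ \ A := by
      rcases hdich T₁ hT₁ T₀ hT₀ with h | h
      · exact absurd h hT₁ne
      · exact h
    have hallA : ∀ T ∈ 𝓣, T \ A = T₀ \ A := by
      intro T hT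
      rcases hdich T hT T₀ hT₀ with h | h
      · rcases hdich T hT T₁ hT₁ with h' | h'
        · exact absurd (h'.symm.trans h) hT₁ne
        · exact h'.trans hT₁A
      · exact h
    have hABc' : (B ∩ A).card = t - 1 := by rw [inter_comm]; exact hABc
    have hsub' : ∀ T ∈ 𝓣, B ∩ A ⊆ T ∧ T ⊆ B ∪ A ∧ (T \ B).card = 1 ∧ (T \ A).card = 1 := by
      intro T hT
      obtain ⟨h1, h2, h3, h4⟩ := hsub T hT
      exact ⟨by rw [inter_comm]; exact h1, by rw [union_comm]; exact h2, h4, h3⟩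
    obtain ⟨h1, h2⟩ := aux15 t ht 𝓣 hne hcard B A hABc' hsub' T₀ hT₀ hallA
    exact ⟨h1, Or.inr h2⟩
end

section
/- Let n, k, t, s be positive integers with k ≥ t+2 and n ≥ 3·binom(t+2, 2)·((k−t+1)² + s). If ℱ ⊆ binom([n], k) is an s-almost t-intersecting family with t-covering number τ_t(ℱ) ≥ t+2, then |ℱ| < h(n,k,t,s), where h(n,k,t,s) = |{F ∈ binom([n], k) : [t] ⊆ F and |F ∩ [k+1]| ≥ t+1}| + s + min{t, s}. -/
open Finset

namespace Stmt16

/-- geometric sum -/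
def gg (a i : ℕ) : ℕ := ∑ p ∈ range i, (a+1)^p

lemma gg_succ (a i : ℕ) : gg a (i+1) = 1 + (a+1) * gg a i := by
  unfold gg
  rw [Finset.sum_range_succ']
  simp only [pow_succ, pow_zero, Finset.mul_sum]
  rw [add_comm]
  congr 1
  apply Finset.sum_congr rfl
  intro x _
  ring

lemma gg_one (a : ℕ) : gg a 1 = 1 := by simp [gg]

lemma gg_pos (a i : ℕ) (hi : 1 ≤ i) : 1 ≤ gg a i := by
  induction i with
  | zero => omega
  | succ n ih => rw [gg_succ]; omega

lemma two_mul_gg (a d : ℕ) (ha : 2 ≤ a) : 2 * gg a (d+1) + 1 ≤ 3 * (a+1)^d := by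
  induction d with
  | zero => simp [gg_one]
  | succ d ih =>
    rw [gg_succ a (d+1)]
    have h1 : (a+1)*(2*gg a (d+1)+1) ≤ (a+1)*(3*(a+1)^d) := Nat.mul_le_mul_left _ ih
    have h2 : (a+1)*(3*(a+1)^d) = 3*(a+1)^(d+1) := by ring
    nlinarith [h1]

lemma le_choose (N r : ℕ) (h1 : 1 ≤ r) (h2 : r < N) : N ≤ N.choose r := by
  induction N with
  | zero => omega
  | succ N ih =>
    rcases Nat.lt_or_ge r N with h | h
    · obtain ⟨j, rfl⟩ : ∃ j, r = j + 1 := ⟨r - 1, by omega⟩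
      rw [Nat.choose_succ_succ]
      simp only [Nat.succ_eq_add_one] at *
      have hA : N ≤ N.choose (j+1) := ih h
      have hB : 1 ≤ N.choose j := Nat.choose_pos (by omega)
      omega
    · have hrN : r = N := by omega
      rw [hrN]
      have hx : (N+1).choose N = (N+1).choose 1 := by
        have := Nat.choose_symm (show 1 ≤ N+1 by omega)
        simpa using this
      rw [hx, Nat.choose_one_right]

lemma choose_two_le (N r : ℕ) (h1 : 2 ≤ r) (h2 : r + 2 ≤ N) : N.choose 2 ≤ N.choose r := by
  induction N with
  | zero => omega
  | succ N ih =>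
    rcases Nat.lt_or_ge (r+2) (N+1) with h | h
    · obtain ⟨j, rfl⟩ : ∃ j, r = j + 1 := ⟨r - 1, by omega⟩
      rw [Nat.choose_succ_succ N (1:ℕ), Nat.choose_succ_succ N j]
      simp only [Nat.succ_eq_add_one] at *
      have hA : N.choose 2 ≤ N.choose (j+1) := ih (by omega)
      have hB : N.choose 1 ≤ N.choose j := by
        rcases Nat.eq_or_lt_of_le h1 with h' | h'
        · have hj : j = 1 := by omega
          rw [hj]
        · have : N ≤ N.choose j := le_choose N j (by omega) (by omega)
          simpa using this
      simp only [show (1:ℕ)+1 = 2 from rfl] at *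
      omega
    · have hrN : r = N - 1 := by omega
      have hx : (N+1).choose (N-1) = (N+1).choose 2 := by
        have := Nat.choose_symm (show 2 ≤ N+1 by omega)
        have hy : N + 1 - 2 = N - 1 := by omega
        rw [hy] at this
        exact this
      rw [hrN, hx]

lemma choose_le_pow_succ (a u : ℕ) : (a+u).choose u ≤ (a+1)^u := by
  induction u with
  | zero => simp
  | succ u ih =>
    have hid : (a+u+1) * ((a+u).choose u) = ((a+u+1).choose (u+1)) * (u+1) := by
      simpa [Nat.succ_eq_add_one] using Nat.add_one_mul_choose_eq (a+u) u
    have h1 : ((a+u+1).choose (u+1)) * (u+1) ≤ (a+u+1) * (a+1)^u := by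
      rw [← hid]; exact Nat.mul_le_mul_left _ ih
    have h2 : (a+u+1) * (a+1)^u ≤ ((a+1)^(u+1)) * (u+1) := by
      rw [pow_succ]
      calc (a+u+1) * (a+1)^u ≤ ((a+1)*(u+1)) * (a+1)^u := by
            apply Nat.mul_le_mul_right; nlinarith
        _ = (a+1)^u * (a+1) * (u+1) := by ring
    exact Nat.le_of_mul_le_mul_right (le_trans h1 h2) (by omega)

/-- chain: (c+1) * C(x-1, y-1) ≤ C(x,y) when (c+1)*y ≤ x -/
lemma choose_chain (x y c : ℕ) (h1 : 1 ≤ y) (hyx : y ≤ x) (h : (c+1)*y ≤ x) :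
    (c+1) * ((x-1).choose (y-1)) ≤ x.choose y := by
  have hid : x * ((x-1).choose (y-1)) = (x.choose y) * y := by
    have := Nat.add_one_mul_choose_eq (x-1) (y-1)
    have hx : x - 1 + 1 = x := by omega
    have hy : y - 1 + 1 = y := by omega
    simp only [Nat.succ_eq_add_one, hx, hy] at this
    exact this
  have h1' : ((c+1) * ((x-1).choose (y-1))) * y ≤ (x.choose y) * y := by
    calc ((c+1) * ((x-1).choose (y-1))) * y = ((c+1)*y) * ((x-1).choose (y-1)) := by ring
      _ ≤ x * ((x-1).choose (y-1)) := Nat.mul_le_mul_right _ h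
      _ = (x.choose y) * y := hid
  exact Nat.le_of_mul_le_mul_right h1' (by omega)

end Stmt16

namespace Stmt16

/-- ratio bound: C(N+Δ, r) ≤ (6/5) C(N,r) under a gap condition -/
lemma choose_ratio (N Δ r : ℕ) (hrN : r ≤ N) (h : 6*(r*Δ) + r ≤ N + Δ + 1) :
    5 * ((N+Δ).choose r) ≤ 6 * (N.choose r) := by
  set M := N + Δ with hM
  set W := M + 1 - r with hW
  have hWrel : W + r = N + Δ + 1 := by omega
  have hWbig : 6*(r*Δ) ≤ W := by omega
  have key : ∀ j, j ≤ r → (M.descFactorial j) * (W - j*Δ) ≤ (N.descFactorial j) * W := by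
    intro j
    induction j with
    | zero => simp
    | succ j ih =>
      intro hj
      have IH := ih (by omega)
      rw [Nat.descFactorial_succ, Nat.descFactorial_succ]
      have scalar : (M - j) * (W - (j+1)*Δ) ≤ (N - j) * (W - j*Δ) := by
        rcases le_or_gt W ((j+1)*Δ) with hc | hc
        · have h0 : W - (j+1)*Δ = 0 := by omega
          rw [h0]; simp
        · have hjd : j*Δ ≤ W := by nlinarith
          have hjN : j ≤ N := by omega
          have hjM : j ≤ M := by omega
          zify [le_of_lt hc, hjd, hjN, hjM]
          have hd1 : (0:ℤ) ≤ (Δ:ℤ) := by positivity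
          have hd2 : (0:ℤ) ≤ (r:ℤ) - 1 - j + j*Δ := by
            have : (j:ℤ) + 1 ≤ r := by exact_mod_cast hj
            nlinarith
          have hMZ : (M:ℤ) = (N:ℤ) + Δ := by exact_mod_cast hM
          have hWZ : (W:ℤ) + r = (N:ℤ) + Δ + 1 := by exact_mod_cast hWrel
          nlinarith [mul_nonneg hd1 hd2]
      calc (M - j) * M.descFactorial j * (W - (j+1)*Δ)
          = M.descFactorial j * ((M - j) * (W - (j+1)*Δ)) := by ring
        _ ≤ M.descFactorial j * ((N - j) * (W - j*Δ)) := Nat.mul_le_mul_left _ scalar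
        _ = (N - j) * (M.descFactorial j * (W - j*Δ)) := by ring
        _ ≤ (N - j) * (N.descFactorial j * W) := Nat.mul_le_mul_left _ IH
        _ = (N - j) * N.descFactorial j * W := by ring
  have hkey := key r le_rfl
  have hW1 : 1 ≤ W := by omega
  have h5 : 5 * (M.descFactorial r) * W ≤ 6 * (N.descFactorial r) * W := by
    calc 5 * (M.descFactorial r) * W = M.descFactorial r * (5*W) := by ring
      _ ≤ M.descFactorial r * (6*(W - r*Δ)) := by
          apply Nat.mul_le_mul_left; omega
      _ = 6 * (M.descFactorial r * (W - r*Δ)) := by ring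
      _ ≤ 6 * (N.descFactorial r * W) := Nat.mul_le_mul_left _ hkey
      _ = 6 * N.descFactorial r * W := by ring
  have h6 : 5 * (M.descFactorial r) ≤ 6 * (N.descFactorial r) :=
    Nat.le_of_mul_le_mul_right h5 (by omega)
  rw [Nat.descFactorial_eq_factorial_mul_choose, Nat.descFactorial_eq_factorial_mul_choose] at h6
  have h7 : (Nat.factorial r) * (5 * (M.choose r)) ≤ (Nat.factorial r) * (6 * (N.choose r)) := by
    calc (Nat.factorial r) * (5 * (M.choose r)) = 5 * ((Nat.factorial r) * M.choose r) := by ring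
      _ ≤ 6 * ((Nat.factorial r) * N.choose r) := h6
      _ = (Nat.factorial r) * (6 * (N.choose r)) := by ring
  exact Nat.le_of_mul_le_mul_left h7 (Nat.factorial_pos r)

end Stmt16

namespace Stmt16
open Finset

lemma card_superset_le (n k : ℕ) (𝓕 : Finset (Finset ℕ))
    (h𝓕 : 𝓕 ⊆ (Icc 1 n).powersetCard k) (V : Finset ℕ) (hV : V ⊆ Icc 1 n) :
    (𝓕.filter (fun F => V ⊆ F)).card ≤ (n - V.card).choose (k - V.card) := by
  have key : (𝓕.filter (fun F => V ⊆ F)).card ≤ (((Icc 1 n) \ V).powersetCard (k - V.card)).card := by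
    apply Finset.card_le_card_of_injOn (fun F => F \ V)
    · intro F hF
      simp only [mem_coe, mem_filter] at hF ⊢
      obtain ⟨hFm, hVF⟩ := hF
      have hFP := h𝓕 hFm
      rw [Finset.mem_powersetCard] at hFP
      rw [Finset.mem_powersetCard]
      constructor
      · exact Finset.sdiff_subset_sdiff hFP.1 (le_refl V)
      · rw [Finset.card_sdiff_of_subset hVF, hFP.2]
    · intro F1 h1 F2 h2 heq
      simp only [coe_filter, Set.mem_setOf_eq] at h1 h2
      have e1 : F1 = (F1 \ V) ∪ V := (Finset.sdiff_union_of_subset h1.2).symm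
      have e2 : F2 = (F2 \ V) ∪ V := (Finset.sdiff_union_of_subset h2.2).symm
      rw [e1, e2]
      simp only at heq
      rw [heq]
  rw [Finset.card_powersetCard, Finset.card_sdiff_of_subset hV, Nat.card_Icc] at key
  simpa using key

lemma hterm_ge (n k t a : ℕ) (hk : k = t + a) (ha : 2 ≤ a) (ht : 1 ≤ t) (hn : k + 2 ≤ n) :
    (a+1) * ((n-k-1).choose (a-1)) ≤
    (((Icc 1 n).powersetCard k).filter
      (fun F => Icc 1 t ⊆ F ∧ t + 1 ≤ (F ∩ Icc 1 (k + 1)).card)).card := by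
  classical
  set P := (Icc (t+1) (k+1)) ×ˢ ((Icc (k+2) n).powersetCard (a-1)) with hP
  have hcardP : P.card = (a+1) * ((n-k-1).choose (a-1)) := by
    rw [hP, Finset.card_product, Finset.card_powersetCard, Nat.card_Icc, Nat.card_Icc]
    have e1 : k + 1 + 1 - (t+1) = a + 1 := by omega
    have e2 : n + 1 - (k+2) = n - k - 1 := by omega
    rw [e1, e2]
  rw [← hcardP]
  apply Finset.card_le_card_of_injOn (fun p => insert p.1 (Icc 1 t ∪ p.2))
  · rintro ⟨x, R⟩ hp
    simp only [hP, mem_coe, Finset.mem_product, mem_Icc, Finset.mem_powersetCard] at hp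
    obtain ⟨⟨hx1, hx2⟩, hR, hRcard⟩ := hp
    have hRlow : ∀ y ∈ R, k + 2 ≤ y ∧ y ≤ n := by
      intro y hy; have := hR hy; rw [mem_Icc] at this; omega
    have hxt : x ∉ Icc 1 t ∪ R := by
      simp only [mem_union, mem_Icc]
      push_neg
      refine ⟨fun _ => by omega, fun hxR => ?_⟩
      have := (hRlow x hxR).1; omega
    have hdisj : Disjoint (Icc 1 t) R := by
      rw [Finset.disjoint_left]
      intro y hy hyR
      rw [mem_Icc] at hy
      have := (hRlow y hyR).1; omega
    simp only [mem_coe, mem_filter]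
    refine ⟨?_, ?_, ?_⟩
    · rw [Finset.mem_powersetCard]
      constructor
      · intro y hy
        simp only [Finset.mem_insert, mem_union, mem_Icc] at hy
        rw [mem_Icc]
        rcases hy with rfl | hy | hy
        · omega
        · omega
        · exact ⟨by have := (hRlow y hy).1; omega, (hRlow y hy).2⟩
      · rw [Finset.card_insert_of_notMem hxt, Finset.card_union_of_disjoint hdisj,
          Nat.card_Icc, hRcard]
        omega
    · intro y hy
      simp only [Finset.mem_insert, mem_union]
      right; left; exact hy
    · have hsub : insert x (Icc 1 t) ⊆ (insert x (Icc 1 t ∪ R)) ∩ Icc 1 (k+1) := by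
        intro y hy
        simp only [Finset.mem_insert, mem_Icc] at hy
        simp only [Finset.mem_inter, Finset.mem_insert, mem_union, mem_Icc]
        rcases hy with rfl | hy
        · exact ⟨Or.inl rfl, by omega, by omega⟩
        · exact ⟨Or.inr (Or.inl (by omega)), by omega, by omega⟩
      have hxIcc : x ∉ Icc 1 t := by rw [mem_Icc]; omega
      have := Finset.card_le_card hsub
      rw [Finset.card_insert_of_notMem hxIcc, Nat.card_Icc] at this
      omega
  · rintro ⟨x1, R1⟩ h1 ⟨x2, R2⟩ h2 heq
    simp only [hP, Finset.coe_product, Set.mem_prod, mem_coe, mem_Icc,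
      Finset.mem_powersetCard] at h1 h2
    obtain ⟨⟨hx11, hx12⟩, hR1, hR1c⟩ := h1
    obtain ⟨⟨hx21, hx22⟩, hR2, hR2c⟩ := h2
    simp only at heq
    have hRlow1 : ∀ y ∈ R1, k + 2 ≤ y := by
      intro y hy; have := hR1 hy; rw [mem_Icc] at this; omega
    have hRlow2 : ∀ y ∈ R2, k + 2 ≤ y := by
      intro y hy; have := hR2 hy; rw [mem_Icc] at this; omega
    have hxx : x1 = x2 := by
      have hx1mem : x1 ∈ insert x2 (Icc 1 t ∪ R2) := by
        rw [← heq]; exact Finset.mem_insert_self _ _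
      simp only [Finset.mem_insert, mem_union, mem_Icc] at hx1mem
      rcases hx1mem with h | h | h
      · exact h
      · omega
      · have := hRlow2 x1 h; omega
    have hRR : R1 = R2 := by
      ext y
      constructor
      · intro hy
        have : y ∈ insert x2 (Icc 1 t ∪ R2) := by
          rw [← heq]
          exact Finset.mem_insert_of_mem (Finset.mem_union_right _ hy)
        simp only [Finset.mem_insert, mem_union, mem_Icc] at this
        have hyk := hRlow1 y hy
        rcases this with rfl | h | h
        · omega
        · omega
        · exact h
      · intro hy
        have : y ∈ insert x1 (Icc 1 t ∪ R1) := by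
          rw [heq]
          exact Finset.mem_insert_of_mem (Finset.mem_union_right _ hy)
        simp only [Finset.mem_insert, mem_union, mem_Icc] at this
        have hyk := hRlow2 y hy
        rcases this with rfl | h | h
        · omega
        · omega
        · exact h
    simp [hxx, hRR]

end Stmt16

namespace Stmt16

lemma two_C2 (t : ℕ) : 2 * ((t+2).choose 2) = (t+2)*(t+1) := by
  rw [Nat.choose_two_right]
  have h : t + 2 - 1 = t + 1 := by omega
  rw [h]
  have he : 2 ∣ (t+2)*(t+1) := by
    have h1 := Nat.even_mul_succ_self (t+1)
    have h2 : (t+1) * (t+1+1) = (t+2)*(t+1) := by ring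
    rw [h2] at h1
    exact h1.two_dvd
  exact Nat.mul_div_cancel' he

lemma choose_tp2_t (t : ℕ) : (t+2).choose t = (t+2).choose 2 := by
  have := Nat.choose_symm (show 2 ≤ t+2 by omega)
  simpa using this

/-- The final arithmetic inequality, by induction on d. -/
lemma FI (n k t s a : ℕ) (hk : k = t + a) (ha : 2 ≤ a) (ht : 1 ≤ t) (hs : 1 ≤ s)
    (hn : 3 * ((t+2).choose 2) * ((a+1)^2 + s) ≤ n) :
    ∀ d, 2 ≤ d → t + d ≤ k →
      (t+d).choose t * (s * gg a d + (a+1)^d * ((n-(t+d)).choose (k-(t+d)))) ≤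
        (a+1) * ((n-k-1).choose (a-1)) := by
  -- global numeric facts
  set C2 := (t+2).choose 2 with hC2def
  have h2C2 : 2 * C2 = (t+2)*(t+1) := two_C2 t
  have hexpC2 : (t+2)*(t+1) = t*t + 3*t + 2 := by ring
  have htt : 1 ≤ t*t := by
    have h0 := Nat.mul_le_mul ht ht
    simpa using h0
  have haa2 : 2*a ≤ a*a := Nat.mul_le_mul_right a ha
  have hsq : (a+1)^2 = a*a + 2*a + 1 := by ring
  have hC2_3 : 3 ≤ C2 := by omega
  have hC2_t : t + 1 ≤ C2 := by omega
  have hn' : 3*(C2*(a+1)^2) + 3*(C2*s) ≤ n := by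
    have hexp : 3*C2*((a+1)^2+s) = 3*(C2*(a+1)^2) + 3*(C2*s) := by ring
    omega
  have hk_small : k + a + 2 ≤ C2 * (a+1)^2 := by
    have hx : (t+1)*(a+1)^2 ≤ C2*(a+1)^2 := Nat.mul_le_mul_right _ hC2_t
    have h2 : t+2*a+2 ≤ (t+1)*(a+1)^2 := by
      have e : (t+1)*(a+1)^2 = t*(a*a) + 2*(t*a) + t + a*a + 2*a + 1 := by ring
      have haa : 2*a ≤ a*a := Nat.mul_le_mul_right a ha
      omega
    calc k+a+2 = t+2*a+2 := by omega
      _ ≤ (t+1)*(a+1)^2 := h2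
      _ ≤ C2*(a+1)^2 := hx
  have hA2 : 3*(a+1)^2 ≤ C2*(a+1)^2 := Nat.mul_le_mul_right _ hC2_3
  have hEs : s ≤ C2*s := Nat.le_mul_of_pos_left s (by omega)
  have ha_le : a + 2 ≤ C2*(a+1)^2 := by omega
  have hkn : k ≤ n := by omega
  have ht3 : t + 3 ≤ 2*C2 := by omega
  have hNbig : 3*(C2*s) + 2*(C2*(a+1)^2) ≤ n - k - 1 := by omega
  intro d hd2
  induction d, hd2 using Nat.le_induction with
  | base =>
    intro htk
    -- d = 2 base case
    have hgg2 : gg a 2 = a + 2 := by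
      rw [show (2:ℕ) = 1 + 1 from rfl, gg_succ, gg_one]; ring
    rw [choose_tp2_t, hgg2]
    have hkk : k - (t+2) = a - 2 := by omega
    rw [hkk]
    rcases Nat.eq_or_lt_of_le ha with ha2 | ha3
    · -- a = 2
      rw [← ha2]
      norm_num
      have h1 : 3*(C2*s) + 18*C2 ≤ n - k - 1 := by
        have h0 := hNbig; rw [← ha2] at h0; norm_num at h0; omega
      rw [← hC2def]
      have e : C2*(s*4+9) = 4*(C2*s) + 9*C2 := by ring
      rw [e]
      omega
    · -- a ≥ 3
      set N := n - k - 1 with hN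
      set r := a - 2 with hr
      have hra : r + 1 = a - 1 := by omega
      have hNT : n - (t+2) = N + (a-1) := by omega
      have h6r : 6*r ≤ C2*(a+1)^2 := by
        have h1 : 6*(a-2) ≤ 3*(a+1)^2 := by omega
        omega
      have hc1 : r ≤ N := by omega
      have hc2 : 6*(r*(a-1)) + r ≤ N + (a-1) + 1 := by
        have e1 : a - 1 = r + 1 := by omega
        rw [e1]
        have e2 : (r+3)^2 = r*(r+1) + 5*r + 9 := by ring
        have h1 : 6*((r+3)^2) ≤ 2*(C2*(a+1)^2) := by
          have e3 : a + 1 = r + 3 := by omega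
          rw [← e3] at e2 ⊢
          omega
        omega
      set CM := (N + (a-1)).choose r with hCM
      set CN := N.choose r with hCN
      set CN1 := N.choose (r+1) with hCN1
      have hratio : 5 * CM ≤ 6 * CN := choose_ratio N (a-1) r hc1 hc2
      have hid : CN1 * (r+1) = CN * (N - r) := Nat.choose_succ_right_eq N r
      have hCNpos : 0 < CN := Nat.choose_pos hc1
      have hNr6 : 11*(C2*(a+1)^2) + 18*(C2*s) ≤ 6*(N-r) := by omega
      -- alpha : 6*(C2*(a+1)^2)*CN ≤ 4*(a+1)*CN1
      have hscalar6 : 6*(6*((C2*(a+1)^2)*(r+1))) ≤ 6*(4*((a+1)*(N-r))) := by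
        calc 6*(6*((C2*(a+1)^2)*(r+1)))
            = 36*((C2*(a+1)^2)*(r+1)) := by ring
          _ ≤ 36*((C2*(a+1)^2)*(a+1)) := by
              apply Nat.mul_le_mul_left
              apply Nat.mul_le_mul_left
              omega
          _ ≤ 44*((C2*(a+1)^2)*(a+1)) := by
              apply Nat.mul_le_mul_right
              omega
          _ = 4*((a+1)*(11*(C2*(a+1)^2))) := by ring
          _ ≤ 4*((a+1)*(11*(C2*(a+1)^2) + 18*(C2*s))) := by
              apply Nat.mul_le_mul_left
              apply Nat.mul_le_mul_left
              omega
          _ ≤ 4*((a+1)*(6*(N-r))) := by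
              apply Nat.mul_le_mul_left
              exact Nat.mul_le_mul_left _ hNr6
          _ = 6*(4*((a+1)*(N-r))) := by ring
      have hscalar : 6*((C2*(a+1)^2)*(r+1)) ≤ 4*((a+1)*(N-r)) :=
        Nat.le_of_mul_le_mul_left hscalar6 (by omega)
      have halpha : 6*((C2*(a+1)^2)*CN) ≤ 4*((a+1)*CN1) := by
        have h1 : (6*((C2*(a+1)^2)*CN))*(r+1) ≤ (4*((a+1)*CN1))*(r+1) := by
          calc (6*((C2*(a+1)^2)*CN))*(r+1)
              = (6*((C2*(a+1)^2)*(r+1)))*CN := by ring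
            _ ≤ (4*((a+1)*(N-r)))*CN := Nat.mul_le_mul_right _ hscalar
            _ = 4*((a+1)*(CN*(N-r))) := by ring
            _ = 4*((a+1)*(CN1*(r+1))) := by rw [hid]
            _ = (4*((a+1)*CN1))*(r+1) := by ring
        exact Nat.le_of_mul_le_mul_right h1 (by omega)
      -- beta : 5*((C2*s)*(a+2)) ≤ (a+1)*CN1
      have hbeta : 5*((C2*s)*(a+2)) ≤ (a+1)*CN1 := by
        have hc2le : N.choose 2 ≤ CN1 := by
          rw [hCN1]
          exact choose_two_le N (r+1) (by omega) (by omega)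
        have h2N : 2 * (N.choose 2) = N * (N-1) := by
          rw [Nat.choose_two_right]
          refine Nat.mul_div_cancel' ?_
          have h1 := Nat.even_mul_succ_self (N-1)
          have h2 : (N-1) * ((N-1)+1) = N*(N-1) := by
            have e : N - 1 + 1 = N := by omega
            rw [e]; ring
          rw [h2] at h1
          exact h1.two_dvd
        have hQa : 10*(a+2) ≤ 3*(C2*(a+1)^2) := by omega
        have hf1 : 3*(C2*s) ≤ N := by omega
        have hf2 : C2*(a+1)^2 ≤ N - 1 := by omega
        have hNN : 2*(5*((C2*s)*(a+2))) ≤ 2*((a+1)*CN1) := by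
          calc 2*(5*((C2*s)*(a+2)))
              = 10*((C2*s)*(a+2)) := by ring
            _ = (C2*s)*(10*(a+2)) := by ring
            _ ≤ (C2*s)*(3*(C2*(a+1)^2)) := Nat.mul_le_mul_left _ hQa
            _ = (3*(C2*s))*(C2*(a+1)^2) := by ring
            _ ≤ N * (N-1) := Nat.mul_le_mul hf1 hf2
            _ = 2*(N.choose 2) := h2N.symm
            _ ≤ 2*CN1 := Nat.mul_le_mul_left _ hc2le
            _ ≤ 2*((a+1)*CN1) := by
                have : CN1 ≤ (a+1)*CN1 := Nat.le_mul_of_pos_left CN1 (by omega)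
                omega
        exact Nat.le_of_mul_le_mul_left hNN (by omega)
      -- combine
      have hfin : 5 * (C2 * (s*(a+2) + (a+1)^2 * CM)) ≤ 5 * ((a+1) * CN1) := by
        calc 5 * (C2 * (s*(a+2) + (a+1)^2 * CM))
            = 5*((C2*s)*(a+2)) + (C2*(a+1)^2)*(5*CM) := by ring
          _ ≤ 5*((C2*s)*(a+2)) + (C2*(a+1)^2)*(6*CN) :=
              Nat.add_le_add_left (Nat.mul_le_mul_left _ hratio) _
          _ = 5*((C2*s)*(a+2)) + 6*((C2*(a+1)^2)*CN) := by ring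
          _ ≤ (a+1)*CN1 + 4*((a+1)*CN1) := Nat.add_le_add hbeta halpha
          _ = 5*((a+1)*CN1) := by ring
      rw [hNT, ← hCM, ← hra, ← hCN1, ← hC2def]
      exact Nat.le_of_mul_le_mul_left hfin (by omega)
  | succ d hd2 ih =>
    intro htk1
    have htk : t + d ≤ k := by omega
    have IH := ih htk
    set m' := t + d with hm'
    set N' := n - m' with hN'
    set r' := k - m' with hr'
    have hr1 : 1 ≤ r' := by omega
    have hra : r' ≤ a - 2 := by omega
    have hdt : 2*t ≤ d*t := Nat.mul_le_mul_right t hd2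
    have hd1 : 3*(m'+1) ≤ (d+1)*(t+3) := by
      have e : (d+1)*(t+3) = d*t+3*d+t+3 := by ring
      omega
    have hN'big : 3*(C2*s) + 2*(C2*(a+1)^2) ≤ N' := by omega
    set CN' := N'.choose r' with hCN'
    have hCN'N : N' ≤ CN' := by
      rw [hCN']
      exact le_choose N' r' hr1 (by omega)
    have hCN'pos : 0 < CN' := by omega
    have hN'pos : 0 < N' := by omega
    -- identity2
    have hid2 : N' * ((N'-1).choose (r'-1)) = CN' * r' := by
      rw [hCN']
      have h0 := Nat.add_one_mul_choose_eq (N'-1) (r'-1)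
      have e1 : N' - 1 + 1 = N' := by omega
      have e2 : r' - 1 + 1 = r' := by omega
      simp only [Nat.succ_eq_add_one, e1, e2] at h0
      exact h0
    -- alpha scalar
    have hkey : 2*((t+3)*((a+1)*(a-2))) ≤ 3*N' := by
      have e : (a+1)*(a+1) = (a+1)^2 := by ring
      calc 2*((t+3)*((a+1)*(a-2)))
          ≤ 2*((2*C2)*((a+1)*(a-2))) := by
            apply Nat.mul_le_mul_left
            exact Nat.mul_le_mul_right _ ht3
        _ ≤ 2*((2*C2)*((a+1)*(a+1))) := by
            apply Nat.mul_le_mul_left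
            apply Nat.mul_le_mul_left
            apply Nat.mul_le_mul_left
            omega
        _ = 4*(C2*((a+1)*(a+1))) := by ring
        _ = 4*(C2*(a+1)^2) := by rw [e]
        _ ≤ 3*N' := by omega
    have halphaS : 2*(m'+1)*(a+1)*r' ≤ (d+1)*N' := by
      have h1 : 3*(2*(m'+1)*(a+1)*r') ≤ 3*((d+1)*N') := by
        calc 3*(2*(m'+1)*(a+1)*r')
            = 2*((3*(m'+1))*((a+1)*r')) := by ring
          _ ≤ 2*(((d+1)*(t+3))*((a+1)*r')) :=
              Nat.mul_le_mul_left _ (Nat.mul_le_mul_right _ hd1)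
          _ ≤ 2*(((d+1)*(t+3))*((a+1)*(a-2))) := by
              apply Nat.mul_le_mul_left
              apply Nat.mul_le_mul_left
              exact Nat.mul_le_mul_left _ hra
          _ = (d+1)*(2*((t+3)*((a+1)*(a-2)))) := by ring
          _ ≤ (d+1)*(3*N') := Nat.mul_le_mul_left _ hkey
          _ = 3*((d+1)*N') := by ring
      exact Nat.le_of_mul_le_mul_left h1 (by omega)
    -- beta
    have hbetaS : 2*(m'+1)*(s*gg a (d+1)) ≤ (d+1)*((a+1)^d*CN') := by
      have hg := two_mul_gg a d ha
      have hst3 : s*(t+3) ≤ CN' := by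
        have h1 : s*(t+3) ≤ s*(2*C2) := Nat.mul_le_mul_left s ht3
        have h2 : s*(2*C2) = 2*(C2*s) := by ring
        omega
      calc 2*(m'+1)*(s*gg a (d+1))
          = (m'+1)*s*(2*gg a (d+1)) := by ring
        _ ≤ (m'+1)*s*(3*(a+1)^d) := Nat.mul_le_mul_left _ (by omega)
        _ = (3*(m'+1))*s*(a+1)^d := by ring
        _ ≤ ((d+1)*(t+3))*s*(a+1)^d :=
            Nat.mul_le_mul_right _ (Nat.mul_le_mul_right _ hd1)
        _ = (d+1)*((s*(t+3))*(a+1)^d) := by ring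
        _ ≤ (d+1)*(CN'*(a+1)^d) :=
            Nat.mul_le_mul_left _ (Nat.mul_le_mul_right _ hst3)
        _ = (d+1)*((a+1)^d*CN') := by ring
    have hstepN : (m'+1) * (s*gg a (d+1) + (a+1)^(d+1) * ((N'-1).choose (r'-1))) * (N' * 2)
        ≤ (d+1) * (s*gg a d + (a+1)^d * CN') * (N' * 2) := by
      have hL : (m'+1) * (s*gg a (d+1) + (a+1)^(d+1) * ((N'-1).choose (r'-1))) * (N' * 2)
          = 2*(m'+1)*(s*gg a (d+1))*N' + 2*(m'+1)*(a+1)^(d+1)*(N' * ((N'-1).choose (r'-1))) := by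
        ring
      rw [hL, hid2]
      have hA : 2*(m'+1)*(a+1)^(d+1)*(CN'*r') ≤ (d+1)*(a+1)^d*N'*CN' := by
        calc 2*(m'+1)*(a+1)^(d+1)*(CN'*r')
            = (2*(m'+1)*(a+1)*r')*((a+1)^d*CN') := by ring
          _ ≤ ((d+1)*N')*((a+1)^d*CN') := Nat.mul_le_mul_right _ halphaS
          _ = (d+1)*(a+1)^d*N'*CN' := by ring
      have hB : 2*(m'+1)*(s*gg a (d+1))*N' ≤ (d+1)*((a+1)^d*CN')*N' :=
        Nat.mul_le_mul_right _ hbetaS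
      calc 2*(m'+1)*(s*gg a (d+1))*N' + 2*(m'+1)*(a+1)^(d+1)*(CN'*r')
          ≤ (d+1)*((a+1)^d*CN')*N' + (d+1)*(a+1)^d*N'*CN' := Nat.add_le_add hB hA
        _ = (d+1) * ((a+1)^d * CN') * (N' * 2) := by ring
        _ ≤ (d+1) * (s*gg a d + (a+1)^d * CN') * (N' * 2) := by
            apply Nat.mul_le_mul_right
            apply Nat.mul_le_mul_left
            omega
    have hstep : (m'+1) * (s*gg a (d+1) + (a+1)^(d+1) * ((N'-1).choose (r'-1)))
        ≤ (d+1) * (s*gg a d + (a+1)^d * CN') :=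
      Nat.le_of_mul_le_mul_right hstepN (by omega : 0 < N' * 2)
    -- identity on binomials in the top factor
    have hId1 : (m'+1).choose t * (d+1) = m'.choose t * (m'+1) := by
      have hsym1 : m'.choose (m'-t) = m'.choose t := Nat.choose_symm (by omega)
      have hsmc := Nat.add_one_mul_choose_eq m' (m'-t)
      have e2 : m' - t + 1 = d + 1 := by omega
      rw [e2, hsym1] at hsmc
      have hsym2 : (m'+1).choose (d+1) = (m'+1).choose t := by
        have h0 := Nat.choose_symm (show t ≤ m'+1 by omega)
        have e3 : m'+1-t = d+1 := by omega
        rw [e3] at h0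
        exact h0
      rw [hsym2] at hsmc
      rw [← hsmc]
      ring
    -- assemble
    have egoal : t+(d+1) = m'+1 := by omega
    have en : n - (m'+1) = N' - 1 := by omega
    have er : k - (m'+1) = r' - 1 := by omega
    rw [egoal, en, er]
    have hfinal : (m'+1).choose t * (s*gg a (d+1) + (a+1)^(d+1) * ((N'-1).choose (r'-1))) * (d+1)
        ≤ ((a+1) * ((n-k-1).choose (a-1))) * (d+1) := by
      calc (m'+1).choose t * (s*gg a (d+1) + (a+1)^(d+1) * ((N'-1).choose (r'-1))) * (d+1)
          = ((m'+1).choose t * (d+1)) * (s*gg a (d+1) + (a+1)^(d+1) * ((N'-1).choose (r'-1))) := by ring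
        _ = (m'.choose t * (m'+1)) * (s*gg a (d+1) + (a+1)^(d+1) * ((N'-1).choose (r'-1))) := by rw [hId1]
        _ = m'.choose t * ((m'+1) * (s*gg a (d+1) + (a+1)^(d+1) * ((N'-1).choose (r'-1)))) := by ring
        _ ≤ m'.choose t * ((d+1) * (s*gg a d + (a+1)^d * CN')) := Nat.mul_le_mul_left _ hstep
        _ = (m'.choose t * (s*gg a d + (a+1)^d * CN')) * (d+1) := by ring
        _ ≤ ((a+1) * ((n-k-1).choose (a-1))) * (d+1) := Nat.mul_le_mul_right _ IH
    exact Nat.le_of_mul_le_mul_right hfinal (by omega)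

end Stmt16

namespace Stmt16

def Bf (n k s a m w : ℕ) : ℕ :=
  if m ≤ w then (n-w).choose (k-w) else s * gg a (m-w) + (a+1)^(m-w) * ((n-m).choose (k-m))

lemma Bf_stop (n k s a m w : ℕ) (h : m ≤ w) : Bf n k s a m w = (n-w).choose (k-w) := if_pos h

lemma Bf_rec (n k s a m w : ℕ) (h : w < m) :
    Bf n k s a m w = s + (a+1) * Bf n k s a m (w+1) := by
  rcases Nat.eq_or_lt_of_le (show w+1 ≤ m by omega) with he | hl
  · rw [Bf, if_neg (by omega), Bf, if_pos (by omega)]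
    have e1 : m - w = 1 := by omega
    rw [e1, gg_one, pow_one]
    rw [← he]
    ring
  · rw [Bf, if_neg (by omega), Bf, if_neg (by omega)]
    have e1 : m - w = (m - (w+1)) + 1 := by omega
    rw [e1, gg_succ, pow_succ]
    ring

lemma Bf_chain (n k s a m : ℕ) (hmk : m ≤ k) (hnk : (a+1)*k + k ≤ n) :
    ∀ v, v < k → (a+1) * Bf n k s a m (v+1) ≤ Bf n k s a m v := by
  intro v hv
  rcases lt_or_ge v m with hvm | hvm
  · rw [Bf_rec n k s a m v hvm]
    omega
  · rw [Bf_stop n k s a m v hvm, Bf_stop n k s a m (v+1) (by omega)]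
    have e1 : n - (v+1) = (n-v) - 1 := by omega
    have e2 : k - (v+1) = (k-v) - 1 := by omega
    rw [e1, e2]
    apply choose_chain (n-v) (k-v) a (by omega) (by omega)
    have h1 : (a+1)*(k-v) ≤ (a+1)*k := Nat.mul_le_mul_left _ (by omega)
    omega

lemma Bf_pow (n k s a m : ℕ) (hmk : m ≤ k) (hnk : (a+1)*k + k ≤ n) :
    ∀ u w, 1 ≤ u → w + u ≤ k →
      (a+1)^u * Bf n k s a m (w+u) ≤ (a+1) * Bf n k s a m (w+1) := by
  intro u
  induction u with
  | zero => omega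
  | succ u ih =>
    intro w hu1 hwk
    rcases Nat.eq_zero_or_pos u with hu0 | hup
    · subst hu0
      simp
    · have hchain := Bf_chain n k s a m hmk hnk (w+u) (by omega)
      have e : w + (u+1) = (w+u) + 1 := by omega
      rw [e, pow_succ]
      calc (a+1)^u * (a+1) * Bf n k s a m ((w+u)+1)
          = (a+1)^u * ((a+1) * Bf n k s a m ((w+u)+1)) := by ring
        _ ≤ (a+1)^u * Bf n k s a m (w+u) := Nat.mul_le_mul_left _ hchain
        _ ≤ (a+1) * Bf n k s a m (w+1) := ih w hup (by omega)

end Stmt16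

theorem stmt16 (n k t s : ℕ) (hn : 0 < n) (hk : 0 < k) (ht : 0 < t) (hs : 0 < s)
    (hkt : t + 2 ≤ k) (hnge : 3 * Nat.choose (t + 2) 2 * ((k - t + 1) ^ 2 + s) ≤ n)
    (𝓕 : Finset (Finset ℕ)) (h𝓕 : 𝓕 ⊆ (Icc 1 n).powersetCard k)
    (hai : almostIntersecting s t 𝓕)
    (hτ : ∀ T ⊆ Icc 1 n, isTCover t T 𝓕 → t + 2 ≤ T.card) :
    𝓕.card < hFun n k t s := by
  classical
  open Stmt16 in
  have hmints : 1 ≤ min t s := le_min ht hs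
  rcases Finset.eq_empty_or_nonempty 𝓕 with h0 | hne
  · rw [h0, Finset.card_empty]
    unfold hFun
    omega
  obtain ⟨F0, hF0⟩ := hne
  set a := k - t with ha_def
  have hka : k = t + a := by omega
  have ha2 : 2 ≤ a := by omega
  -- numeric groundwork
  set C2 := (t+2).choose 2 with hC2def
  have h2C2 : 2 * C2 = (t+2)*(t+1) := Stmt16.two_C2 t
  have hexpC2 : (t+2)*(t+1) = t*t + 3*t + 2 := by ring
  have htt : 1 ≤ t*t := by
    have h0 := Nat.mul_le_mul ht ht
    simpa using h0
  have haa2 : 2*a ≤ a*a := Nat.mul_le_mul_right a ha2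
  have hC2_t : t + 1 ≤ C2 := by omega
  have hC2_3 : 3 ≤ C2 := by omega
  have hnexp : 3*C2*((a+1)^2+s) = 3*(C2*(a+1)^2) + 3*(C2*s) := by ring
  have hn3Q : 3*(C2*(a+1)^2) + 3*(C2*s) ≤ n := by omega
  have hx : (t+1)*(a+1)^2 ≤ C2*(a+1)^2 := Nat.mul_le_mul_right _ hC2_t
  have hxe : (t+1)*(a+1)^2 = t*(a*a) + 2*(t*a) + t + a*a + 2*a + 1 := by ring
  have h4t : 4*t ≤ t*(a*a) := by
    have h4 : 4 ≤ a*a := by omega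
    calc 4*t = t*4 := by ring
      _ ≤ t*(a*a) := Nat.mul_le_mul_left t h4
  have hke : (a+1)*k + k = t*a + 2*t + a*a + 2*a := by rw [hka]; ring
  have hta : t*a ≤ t*(a*a) := Nat.mul_le_mul_left t (by omega)
  have hnk : (a+1)*k + k ≤ n := by omega
  have hEs : s ≤ C2*s := Nat.le_mul_of_pos_left s (by omega)
  have hk2n : k + 2 ≤ n := by omega
  -- covers
  set 𝒞 := ((Icc 1 n).powerset).filter (fun T => isTCover t T 𝓕) with h𝒞
  have h𝒞ne : Icc 1 n ∈ 𝒞 := by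
    rw [h𝒞, Finset.mem_filter, Finset.mem_powerset]
    refine ⟨subset_rfl, fun F hF => ?_⟩
    have hsub := h𝓕 hF
    rw [Finset.mem_powersetCard] at hsub
    rw [Finset.inter_eq_right.mpr hsub.1, hsub.2]
    omega
  obtain ⟨Z, hZmem, hZmin⟩ := Finset.exists_min_image 𝒞 Finset.card ⟨_, h𝒞ne⟩
  have hZ' := hZmem
  rw [h𝒞, Finset.mem_filter, Finset.mem_powerset] at hZ'
  obtain ⟨hZsub, hZcov⟩ := hZ'
  have hZc : t + 2 ≤ Z.card := hτ Z hZsub hZcov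
  set m := min Z.card k with hm_def
  have hm2 : t + 2 ≤ m := le_min hZc hkt
  have hmk : m ≤ k := min_le_right _ _
  have hwit : ∀ W : Finset ℕ, W ⊆ Icc 1 n → W.card < m → ∃ F' ∈ 𝓕, (W ∩ F').card < t := by
    intro W hWsub hWlt
    by_contra hcon
    push_neg at hcon
    have hWcov : isTCover t W 𝓕 := hcon
    have hle : Z.card ≤ W.card := by
      apply hZmin
      rw [h𝒞, Finset.mem_filter, Finset.mem_powerset]
      exact ⟨hWsub, hWcov⟩
    omega
  -- the recursion lemma
  have hRL : ∀ i (W : Finset ℕ), W ⊆ Icc 1 n → t ≤ W.card → m ≤ W.card + i →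
      (𝓕.filter (fun F => W ⊆ F)).card ≤ Bf n k s a m W.card := by
    intro i
    induction i with
    | zero =>
      intro W hWsub _ hWm
      rw [Bf_stop n k s a m W.card (by omega)]
      exact card_superset_le n k 𝓕 h𝓕 W hWsub
    | succ i ih =>
      intro W hWsub hWt hWm
      rcases le_or_gt m W.card with hge | hlt
      · rw [Bf_stop n k s a m W.card hge]
        exact card_superset_le n k 𝓕 h𝓕 W hWsub
      · obtain ⟨F', hF'm, hjlt⟩ := hwit W hWsub hlt
        set j := (W ∩ F').card with hj_def
        set u := t - j with hu_def
        have hu1 : 1 ≤ u := by omega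
        have hF'P := h𝓕 hF'm
        rw [Finset.mem_powersetCard] at hF'P
        have hFW : (F' \ W).card = k - j := by
          have h1 := Finset.card_sdiff_add_card_inter F' W
          have h2 : F' ∩ W = W ∩ F' := Finset.inter_comm _ _
          rw [h2, hF'P.2] at h1
          omega
        have hsubun : 𝓕.filter (fun F => W ⊆ F) ⊆
            (𝓕.filter (fun F'' => (F'' ∩ F').card < t)) ∪
            ((F' \ W).powersetCard u).biUnion (fun S => 𝓕.filter (fun F => W ∪ S ⊆ F)) := by
          intro F hF
          rw [Finset.mem_filter] at hF
          obtain ⟨hFm, hWF⟩ := hF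
          rcases lt_or_ge ((F ∩ F').card) t with hlt' | hge'
          · exact Finset.mem_union_left _ (Finset.mem_filter.mpr ⟨hFm, hlt'⟩)
          · have hsplit : (F ∩ F').card ≤ j + (F ∩ (F' \ W)).card := by
              have h1 : (F ∩ F') \ W = F ∩ (F' \ W) := by
                ext x
                simp only [Finset.mem_sdiff, Finset.mem_inter]
                tauto
              have h2 := Finset.card_sdiff_add_card_inter (F ∩ F') W
              have h3 : (F ∩ F') ∩ W = W ∩ F' := by
                ext x
                simp only [Finset.mem_inter]
                constructor
                · tauto
                · intro hx
                  exact ⟨⟨hWF hx.1, hx.2⟩, hx.1⟩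
              rw [h1, h3] at h2
              omega
            have hule : u ≤ (F ∩ (F' \ W)).card := by omega
            obtain ⟨S, hSsub, hScard⟩ := Finset.exists_subset_card_eq hule
            refine Finset.mem_union_right _ (Finset.mem_biUnion.mpr ⟨S, ?_, ?_⟩)
            · rw [Finset.mem_powersetCard]
              exact ⟨hSsub.trans Finset.inter_subset_right, hScard⟩
            · rw [Finset.mem_filter]
              exact ⟨hFm, Finset.union_subset hWF (hSsub.trans Finset.inter_subset_left)⟩
        have hcard1 : (𝓕.filter (fun F => W ⊆ F)).card ≤
            s + ∑ S ∈ (F' \ W).powersetCard u, (𝓕.filter (fun F => W ∪ S ⊆ F)).card := by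
          calc (𝓕.filter (fun F => W ⊆ F)).card
              ≤ ((𝓕.filter (fun F'' => (F'' ∩ F').card < t)) ∪
                 ((F' \ W).powersetCard u).biUnion (fun S => 𝓕.filter (fun F => W ∪ S ⊆ F))).card :=
                Finset.card_le_card hsubun
            _ ≤ (𝓕.filter (fun F'' => (F'' ∩ F').card < t)).card +
                (((F' \ W).powersetCard u).biUnion (fun S => 𝓕.filter (fun F => W ∪ S ⊆ F))).card :=
                Finset.card_union_le _ _
            _ ≤ s + ∑ S ∈ (F' \ W).powersetCard u, (𝓕.filter (fun F => W ∪ S ⊆ F)).card :=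
                Nat.add_le_add (hai F' hF'm) (Finset.card_biUnion_le)
        have hterm : ∀ S ∈ (F' \ W).powersetCard u,
            (𝓕.filter (fun F => W ∪ S ⊆ F)).card ≤ Bf n k s a m (W.card + u) := by
          intro S hS
          rw [Finset.mem_powersetCard] at hS
          have hdisj : Disjoint W S := by
            rw [Finset.disjoint_left]
            intro x hxW hxS
            have := hS.1 hxS
            rw [Finset.mem_sdiff] at this
            exact this.2 hxW
          have hcardWS : (W ∪ S).card = W.card + u := by
            rw [Finset.card_union_of_disjoint hdisj, hS.2]
          have hWS_sub : W ∪ S ⊆ Icc 1 n :=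
            Finset.union_subset hWsub ((hS.1.trans Finset.sdiff_subset).trans hF'P.1)
          have := ih (W ∪ S) hWS_sub (by omega) (by omega)
          rwa [hcardWS] at this
        have hsum : ∑ S ∈ (F' \ W).powersetCard u, (𝓕.filter (fun F => W ∪ S ⊆ F)).card ≤
            ((k-j).choose u) * Bf n k s a m (W.card + u) := by
          have h1 := Finset.sum_le_card_nsmul _ _ _ hterm
          rw [Finset.card_powersetCard, hFW] at h1
          simpa [smul_eq_mul] using h1
        rcases le_or_gt (W.card + u) k with hwk | hwk
        · have hCku : (k-j).choose u ≤ (a+1)^u := by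
            have e : k - j = a + u := by omega
            rw [e]
            exact choose_le_pow_succ a u
          have hpow := Bf_pow n k s a m hmk hnk u W.card hu1 hwk
          rw [Bf_rec n k s a m W.card hlt]
          calc (𝓕.filter (fun F => W ⊆ F)).card
              ≤ s + ∑ S ∈ (F' \ W).powersetCard u, (𝓕.filter (fun F => W ∪ S ⊆ F)).card := hcard1
            _ ≤ s + ((k-j).choose u) * Bf n k s a m (W.card + u) := Nat.add_le_add_left hsum _
            _ ≤ s + (a+1)^u * Bf n k s a m (W.card + u) :=
                Nat.add_le_add_left (Nat.mul_le_mul_right _ hCku) _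
            _ ≤ s + (a+1) * Bf n k s a m (W.card + 1) := Nat.add_le_add_left hpow _
        · have hzero : ∀ S ∈ (F' \ W).powersetCard u,
              (𝓕.filter (fun F => W ∪ S ⊆ F)).card = 0 := by
            intro S hS
            rw [Finset.mem_powersetCard] at hS
            rw [Finset.card_eq_zero, Finset.filter_eq_empty_iff]
            intro F hFm hWSF
            have hFc := h𝓕 hFm
            rw [Finset.mem_powersetCard] at hFc
            have h1 := Finset.card_le_card hWSF
            have hdisj : Disjoint W S := by
              rw [Finset.disjoint_left]
              intro x hxW hxS
              have := hS.1 hxS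
              rw [Finset.mem_sdiff] at this
              exact this.2 hxW
            rw [Finset.card_union_of_disjoint hdisj, hS.2, hFc.2] at h1
            omega
          have hsum0 : ∑ S ∈ (F' \ W).powersetCard u, (𝓕.filter (fun F => W ∪ S ⊆ F)).card = 0 :=
            Finset.sum_eq_zero hzero
          rw [Bf_rec n k s a m W.card hlt]
          omega
  -- top level bound
  have hTop : 𝓕.card ≤ s + (m.choose t) * Bf n k s a m t := by
    rcases le_or_gt Z.card k with hZk | hZk
    · have hmZ : m = Z.card := min_eq_left hZk
      have hcov : 𝓕 ⊆ (Z.powersetCard t).biUnion (fun T => 𝓕.filter (fun F => T ⊆ F)) := by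
        intro F hFm
        have hZF := hZcov F hFm
        obtain ⟨T, hTsub, hTcard⟩ := Finset.exists_subset_card_eq hZF
        rw [Finset.mem_biUnion]
        refine ⟨T, ?_, ?_⟩
        · rw [Finset.mem_powersetCard]
          exact ⟨hTsub.trans Finset.inter_subset_left, hTcard⟩
        · rw [Finset.mem_filter]
          exact ⟨hFm, hTsub.trans Finset.inter_subset_right⟩
      have hterm2 : ∀ T ∈ Z.powersetCard t,
          (𝓕.filter (fun F => T ⊆ F)).card ≤ Bf n k s a m t := by
        intro T hT
        rw [Finset.mem_powersetCard] at hT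
        have := hRL m T (hT.1.trans hZsub) (by omega) (by omega)
        rwa [hT.2] at this
      calc 𝓕.card ≤ ((Z.powersetCard t).biUnion (fun T => 𝓕.filter (fun F => T ⊆ F))).card :=
            Finset.card_le_card hcov
        _ ≤ ∑ T ∈ Z.powersetCard t, (𝓕.filter (fun F => T ⊆ F)).card := Finset.card_biUnion_le
        _ ≤ (Z.powersetCard t).card * Bf n k s a m t := by
            have h1 := Finset.sum_le_card_nsmul _ _ _ hterm2
            simpa [smul_eq_mul] using h1
        _ = (m.choose t) * Bf n k s a m t := by
            rw [Finset.card_powersetCard, hmZ]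
        _ ≤ s + (m.choose t) * Bf n k s a m t := Nat.le_add_left _ _
    · have hmk' : m = k := min_eq_right (by omega)
      have hcov : 𝓕 ⊆ (𝓕.filter (fun F'' => (F'' ∩ F0).card < t)) ∪
          (F0.powersetCard t).biUnion (fun T => 𝓕.filter (fun F => T ⊆ F)) := by
        intro F hFm
        rcases lt_or_ge ((F ∩ F0).card) t with hlt' | hge'
        · exact Finset.mem_union_left _ (Finset.mem_filter.mpr ⟨hFm, hlt'⟩)
        · obtain ⟨T, hTsub, hTcard⟩ := Finset.exists_subset_card_eq hge'
          refine Finset.mem_union_right _ (Finset.mem_biUnion.mpr ⟨T, ?_, ?_⟩)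
          · rw [Finset.mem_powersetCard]
            exact ⟨hTsub.trans Finset.inter_subset_right, hTcard⟩
          · rw [Finset.mem_filter]
            exact ⟨hFm, hTsub.trans Finset.inter_subset_left⟩
      have hF0P := h𝓕 hF0
      rw [Finset.mem_powersetCard] at hF0P
      have hterm2 : ∀ T ∈ F0.powersetCard t,
          (𝓕.filter (fun F => T ⊆ F)).card ≤ Bf n k s a m t := by
        intro T hT
        rw [Finset.mem_powersetCard] at hT
        have := hRL m T (hT.1.trans hF0P.1) (by omega) (by omega)
        rwa [hT.2] at this
      calc 𝓕.card ≤ ((𝓕.filter (fun F'' => (F'' ∩ F0).card < t)) ∪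
            (F0.powersetCard t).biUnion (fun T => 𝓕.filter (fun F => T ⊆ F))).card :=
            Finset.card_le_card hcov
        _ ≤ (𝓕.filter (fun F'' => (F'' ∩ F0).card < t)).card +
            ((F0.powersetCard t).biUnion (fun T => 𝓕.filter (fun F => T ⊆ F))).card :=
            Finset.card_union_le _ _
        _ ≤ s + ∑ T ∈ F0.powersetCard t, (𝓕.filter (fun F => T ⊆ F)).card :=
            Nat.add_le_add (hai F0 hF0) Finset.card_biUnion_le
        _ ≤ s + (F0.powersetCard t).card * Bf n k s a m t := by
            have h1 := Finset.sum_le_card_nsmul _ _ _ hterm2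
            have h2 := Nat.add_le_add_left (by simpa [smul_eq_mul] using h1 :
              ∑ T ∈ F0.powersetCard t, (𝓕.filter (fun F => T ⊆ F)).card ≤
                (F0.powersetCard t).card * Bf n k s a m t) s
            exact h2
        _ = s + (m.choose t) * Bf n k s a m t := by
            rw [Finset.card_powersetCard, hF0P.2, hmk']
  -- conclude via FI
  have hBft : Bf n k s a m t = s * gg a (m-t) + (a+1)^(m-t) * ((n-m).choose (k-m)) := by
    rw [Bf, if_neg (by omega)]
  have hFI := FI n k t s a hka ha2 ht hs (by rw [← hC2def]; exact hnge) (m-t) (by omega) (by omega)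
  have hmt : t + (m - t) = m := by omega
  rw [hmt] at hFI
  have hmain : 𝓕.card ≤ s + (a+1) * ((n-k-1).choose (a-1)) := by
    calc 𝓕.card ≤ s + (m.choose t) * Bf n k s a m t := hTop
      _ = s + (m.choose t) * (s * gg a (m-t) + (a+1)^(m-t) * ((n-m).choose (k-m))) := by rw [hBft]
      _ ≤ s + (a+1) * ((n-k-1).choose (a-1)) := Nat.add_le_add_left hFI _
  have hH := hterm_ge n k t a hka ha2 ht hk2n
  unfold hFun
  omega
end

section
/- Let n and t be positive integers and let A and B be (t+1)-element subsets of [n] with |A ∩ B| = t−1. Let S = A △ B (so |S| = 4), and define ℰ = {(A ∩ B) ∪ P : P a 2-element subset of S}. For i ∈ S and x ∈ [n] \ S with x ∉ A ∩ B, set X = (A ∩ B) ∪ {i, x}; for i ∈ S and x ∈ A ∩ B, set X = (A ∪ B) \ {i, x}. Then in both cases exactly 3 members E of ℰ satisfy |X ∩ E| < t; moreover, if x ∉ A ∪ B, these are exactly the members E ∈ ℰ with i ∉ E, and if x ∈ A ∩ B, they are exactly the members E ∈ ℰ with i ∈ E. -/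
open Finset

/-- The six-element family `ℰ = {(A ∩ B) ∪ P : P ∈ binom(A △ B, 2)}`. -/
def famE (A B : Finset ℕ) : Finset (Finset ℕ) :=
  (((A \ B) ∪ (B \ A)).powersetCard 2).image (fun P => (A ∩ B) ∪ P)

theorem stmt19 (n t : ℕ) (hn : 0 < n) (ht : 0 < t)
    (A B : Finset ℕ)
    (hA : A ∈ (Icc 1 n).powersetCard (t + 1)) (hB : B ∈ (Icc 1 n).powersetCard (t + 1))
    (hAB : (A ∩ B).card = t - 1) :
    (∀ i ∈ (A \ B) ∪ (B \ A), ∀ x ∈ Icc 1 n,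
      x ∉ (A \ B) ∪ (B \ A) → x ∉ A ∩ B →
        ((famE A B).filter (fun E => (((A ∩ B) ∪ {i, x}) ∩ E).card < t)).card = 3 ∧
        (famE A B).filter (fun E => (((A ∩ B) ∪ {i, x}) ∩ E).card < t) =
          (famE A B).filter (fun E => i ∉ E)) ∧
    (∀ i ∈ (A \ B) ∪ (B \ A), ∀ x ∈ A ∩ B,
        ((famE A B).filter (fun E => (((A ∪ B) \ {i, x}) ∩ E).card < t)).card = 3 ∧
        (famE A B).filter (fun E => (((A ∪ B) \ {i, x}) ∩ E).card < t) =
          (famE A B).filter (fun E => i ∈ E)) := by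
  rw [mem_powersetCard] at hA hB
  obtain ⟨hAsub, hAcard⟩ := hA
  obtain ⟨hBsub, hBcard⟩ := hB
  have hdCS : Disjoint (A ∩ B) ((A \ B) ∪ (B \ A)) := by
    rw [disjoint_union_right]
    exact ⟨disjoint_sdiff.mono_left inter_subset_right,
      disjoint_sdiff.mono_left inter_subset_left⟩
  have h1 : (A \ B).card = 2 := by
    have := card_sdiff_add_card_inter A B
    omega
  have h2 : (B \ A).card = 2 := by
    have h := card_sdiff_add_card_inter B A
    rw [inter_comm] at h
    omega
  have hScard : ((A \ B) ∪ (B \ A)).card = 4 := by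
    rw [card_union_of_disjoint disjoint_sdiff_sdiff]; omega
  have hinj : Set.InjOn (fun P => (A ∩ B) ∪ P) (((A \ B) ∪ (B \ A)).powersetCard 2) := by
    intro P hP Q hQ h
    simp only [mem_coe, mem_powersetCard] at hP hQ
    have dP : Disjoint (A ∩ B) P := hdCS.mono_right hP.1
    have dQ : Disjoint (A ∩ B) Q := hdCS.mono_right hQ.1
    have h' := congrArg (fun s => s \ (A ∩ B)) h
    simpa [union_sdiff_cancel_left dP, union_sdiff_cancel_left dQ] using h'
  have hfamcard : (famE A B).card = 6 := by
    rw [famE, card_image_of_injOn hinj, card_powersetCard, hScard]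
    decide
  have hcount_notin : ∀ i ∈ (A \ B) ∪ (B \ A),
      ((famE A B).filter (fun E => i ∉ E)).card = 3 := by
    intro i hi
    have hiC : i ∉ A ∩ B := disjoint_right.mp hdCS hi
    rw [famE, filter_image,
      card_image_of_injOn (hinj.mono (coe_subset.mpr (filter_subset _ _)))]
    have heq : (((A \ B) ∪ (B \ A)).powersetCard 2).filter
        (fun P => i ∉ (A ∩ B) ∪ P) =
        (((A \ B) ∪ (B \ A)).powersetCard 2).filter (fun P => i ∉ P) := by
      apply filter_congr
      intro P _
      simp [hiC]
    have heq2 : (((A \ B) ∪ (B \ A)).powersetCard 2).filter (fun P => i ∉ P) =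
        (((A \ B) ∪ (B \ A)).erase i).powersetCard 2 := by
      ext Q
      simp only [mem_filter, mem_powersetCard, subset_erase]
      tauto
    rw [heq, heq2, card_powersetCard, card_erase_of_mem hi, hScard]
    decide
  have hcount_in : ∀ i ∈ (A \ B) ∪ (B \ A),
      ((famE A B).filter (fun E => i ∈ E)).card = 3 := by
    intro i hi
    have h3 := hcount_notin i hi
    have h4 : ((famE A B).filter (fun E => i ∈ E)).card +
        ((famE A B).filter (fun E => i ∉ E)).card = (famE A B).card :=
      card_filter_add_card_filter_not _
    omega
  constructor
  · intro i hi x hx hxS hxC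
    have hiC : i ∉ A ∩ B := disjoint_right.mp hdCS hi
    have hcond : ∀ E ∈ famE A B, ((((A ∩ B) ∪ {i, x}) ∩ E).card < t ↔ i ∉ E) := by
      intro E hE
      simp only [famE, mem_image, mem_powersetCard] at hE
      obtain ⟨P, ⟨hPS, hP2⟩, rfl⟩ := hE
      have hxP : x ∉ P := fun h => hxS (hPS h)
      rw [← union_inter_distrib_left]
      by_cases hiP : i ∈ P
      · have hset : ({i, x} : Finset ℕ) ∩ P = {i} := by
          ext y
          simp only [mem_inter, mem_insert, mem_singleton]
          constructor
          · rintro ⟨h1 | h1, h2⟩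
            · exact h1
            · exact absurd (h1 ▸ h2) hxP
          · rintro rfl
            exact ⟨Or.inl rfl, hiP⟩
        rw [hset, card_union_of_disjoint (disjoint_singleton_right.mpr hiC),
          card_singleton, hAB]
        have hmem : i ∈ A ∩ B ∪ P := mem_union_right _ hiP
        simp only [hmem, not_true, iff_false, not_lt]
        omega
      · have hset : ({i, x} : Finset ℕ) ∩ P = ∅ := by
          ext y
          simp only [mem_inter, mem_insert, mem_singleton, notMem_empty, iff_false]
          rintro ⟨rfl | rfl, h2⟩
          · exact hiP h2
          · exact hxP h2
        rw [hset, union_empty, hAB]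
        have hni : i ∉ A ∩ B ∪ P := by simp [hiC, hiP]
        simp only [hni, not_false_iff, iff_true]
        omega
    exact ⟨by rw [filter_congr hcond]; exact hcount_notin i hi, filter_congr hcond⟩
  · intro i hi x hx
    have hiC : i ∉ A ∩ B := disjoint_right.mp hdCS hi
    have htge : 2 ≤ t := by
      have : 0 < (A ∩ B).card := card_pos.mpr ⟨x, hx⟩
      omega
    have hunion : A ∪ B = (A ∩ B) ∪ ((A \ B) ∪ (B \ A)) := by
      ext y
      simp only [mem_union, mem_inter, mem_sdiff]
      tauto
    have hcond : ∀ E ∈ famE A B, ((((A ∪ B) \ {i, x}) ∩ E).card < t ↔ i ∈ E) := by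
      intro E hE
      simp only [famE, mem_image, mem_powersetCard] at hE
      obtain ⟨P, ⟨hPS, hP2⟩, rfl⟩ := hE
      have hxP : x ∉ P := fun h => (disjoint_left.mp hdCS hx) (hPS h)
      have hdP : Disjoint (A ∩ B) P := hdCS.mono_right hPS
      have hEsub : (A ∩ B) ∪ P ⊆ A ∪ B := by
        rw [hunion]
        exact union_subset_union_right hPS
      have hX : ((A ∪ B) \ {i, x}) ∩ ((A ∩ B) ∪ P) = ((A ∩ B) \ {x}) ∪ (P \ {i}) := by
        ext y
        have hyi : y ∈ A ∩ B → y ≠ i := fun h hc => hiC (hc ▸ h)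
        have hyx : y ∈ P → y ≠ x := fun h hc => hxP (hc ▸ h)
        have hyAB : y ∈ P → y ∈ A ∪ B := fun h => hEsub (mem_union_right _ h)
        simp only [mem_inter, mem_sdiff, mem_union, mem_insert, mem_singleton, not_or]
        constructor
        · rintro ⟨⟨_, hni, hnx⟩, hC | hP⟩
          · exact Or.inl ⟨hC, hnx⟩
          · exact Or.inr ⟨hP, hni⟩
        · rintro (⟨hC, hnx⟩ | ⟨hP, hni⟩)
          · exact ⟨⟨Or.inl hC.1, hyi (mem_inter.mpr hC), hnx⟩, Or.inl hC⟩
          · exact ⟨⟨mem_union.mp (hyAB hP), hni, hyx hP⟩, Or.inr hP⟩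
      have hc1 : ((A ∩ B) \ {x}).card = t - 2 := by
        rw [card_sdiff_of_subset (singleton_subset_iff.mpr hx), hAB, card_singleton]
        omega
      rw [hX, card_union_of_disjoint (hdP.mono sdiff_subset sdiff_subset), hc1]
      by_cases hiP : i ∈ P
      · have hc2 : (P \ {i}).card = 1 := by
          rw [sdiff_singleton_eq_erase, card_erase_of_mem hiP, hP2]
        rw [hc2]
        have hmem : i ∈ A ∩ B ∪ P := mem_union_right _ hiP
        simp only [hmem, iff_true]
        omega
      · have hc2 : (P \ {i}).card = 2 := by
          rw [sdiff_singleton_eq_erase, erase_eq_of_notMem hiP, hP2]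
        rw [hc2]
        have hni : i ∉ A ∩ B ∪ P := by simp [hiC, hiP]
        simp only [hni, iff_false, not_lt]
        omega
    exact ⟨by rw [filter_congr hcond]; exact hcount_in i hi, filter_congr hcond⟩
end
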